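/- arXiv:1611.02246 — 4 statements merged into one kernel-verified Lean document; each statement's English description precedes it below -/
import Mathlib

section
/- For every ε > 0 there exists n₀ such that for every n ≥ n₀ and every order-n Steiner triple system S with n divisible by 3, the number of perfect matchings of S is at most ((1+ε)·n/(2e²))^{n/3}. -/
open scoped Classical

noncomputable section

/-- `S` is an order-`n` Steiner triple system on vertex set `Fin n`. -/
def IsSTS (n : ℕ) (S : Finset (Finset (Fin n))) : Prop :=
  (∀ e ∈ S, e.card = 3) ∧
  ∀ p : Finset (Fin n), p.card = 2 → ∃! e, e ∈ S ∧ p ⊆ e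

/-- `M` is a matching of the 3-uniform hypergraph `S`. -/
def IsMatching (n : ℕ) (S M : Finset (Finset (Fin n))) : Prop :=
  M ⊆ S ∧ ∀ e ∈ M, ∀ f ∈ M, e ≠ f → Disjoint e f

/-- The number of perfect matchings (matchings with `n/3` hyperedges) of `S`. -/
def numPM (n : ℕ) (S : Finset (Finset (Fin n))) : ℕ :=
  (Finset.univ.filter (fun M : Finset (Finset (Fin n)) =>
    IsMatching n S M ∧ M.card = n / 3)).card

set_option maxHeartbeats 1600000

open Finset

namespace LLPM

variable {n : ℕ}

/-- The permutations of `Fin n` agreeing with an injective-on-`K` function `g`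
number `(n - |K|)!`. -/
lemma card_perm_agree (K : Finset (Fin n)) (g : Fin n → Fin n)
    (hg : Set.InjOn g K) :
    ((univ : Finset (Equiv.Perm (Fin n))).filter fun σ => ∀ x ∈ K, σ x = g x).card
      = (n - K.card).factorial := by
  classical
  set L : Finset (Fin n) := K.image g with hL
  have hcardL : L.card = K.card := Finset.card_image_of_injOn hg
  -- the map x ↦ g x as an equiv between subtypes
  have hinj : Function.Injective (fun x : {x // x ∈ K} => (⟨g x.1, mem_image_of_mem g x.2⟩ : {y // y ∈ L})) := by
    rintro ⟨a, ha⟩ ⟨b, hb⟩ h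
    simp only [Subtype.mk.injEq] at h
    exact Subtype.ext (hg ha hb h)
  have hbij : Function.Bijective (fun x : {x // x ∈ K} => (⟨g x.1, mem_image_of_mem g x.2⟩ : {y // y ∈ L})) := by
    rw [Fintype.bijective_iff_injective_and_card]
    refine ⟨hinj, ?_⟩
    simp [Fintype.card_coe, hcardL]
  set e1 : {x // x ∈ K} ≃ {y // y ∈ L} := Equiv.ofBijective _ hbij with he1
  have he1app : ∀ x : {x // x ∈ K}, (e1 x : Fin n) = g x := fun x => rfl
  -- key fact : a ∉ K ↔ σ a ∉ L, for σ agreeing with g on K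
  have key : ∀ (σ : Equiv.Perm (Fin n)), (∀ x ∈ K, σ x = g x) →
      ∀ a : Fin n, a ∉ K ↔ (σ a) ∉ L := by
    intro σ hσ a
    constructor
    · intro ha hmem
      rw [hL, Finset.mem_image] at hmem
      obtain ⟨x, hx, hgx⟩ := hmem
      rw [← hσ x hx] at hgx
      exact ha (σ.injective hgx ▸ hx)
    · intro hmem ha
      exact hmem (hσ a ha ▸ mem_image_of_mem g ha)
  -- the equivalence
  set glue : ({x : Fin n // x ∉ K} ≃ {y : Fin n // y ∉ L}) → Equiv.Perm (Fin n) :=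
    fun ρ => (Equiv.sumCompl (· ∈ K)).symm.trans
      ((e1.sumCongr ρ).trans (Equiv.sumCompl (· ∈ L))) with hglue
  have hglue_mem : ∀ ρ (x : Fin n) (hx : x ∈ K), glue ρ x = g x := by
    intro ρ x hx
    simp only [hglue, Equiv.trans_apply, Equiv.sumCompl_symm_apply_of_pos hx,
      Equiv.sumCongr_apply, Sum.map_inl, Equiv.sumCompl_apply_inl]
    rfl
  have hglue_nmem : ∀ ρ (x : Fin n) (hx : x ∉ K), glue ρ x = (ρ ⟨x, hx⟩ : Fin n) := by
    intro ρ x hx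
    simp only [hglue, Equiv.trans_apply, Equiv.sumCompl_symm_apply_of_neg hx,
      Equiv.sumCongr_apply, Sum.map_inr, Equiv.sumCompl_apply_inr]
  have Φ : {σ : Equiv.Perm (Fin n) // ∀ x ∈ K, σ x = g x} ≃
      ({x : Fin n // x ∉ K} ≃ {y : Fin n // y ∉ L}) := by
    refine ⟨fun σ => σ.1.subtypeEquiv (fun a => ?_), fun ρ => ⟨glue ρ, hglue_mem ρ⟩, ?_, ?_⟩
    · exact key σ.1 σ.2 a
    · rintro ⟨σ, hσ⟩
      ext x
      by_cases hx : x ∈ K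
      · simp [hglue_mem _ x hx, hσ x hx]
      · simp [hglue_nmem _ x hx, Equiv.subtypeEquiv]
    · intro ρ
      ext x
      simp [Equiv.subtypeEquiv, hglue_nmem ρ x.1 x.2]
  have hcard1 : ((univ : Finset (Equiv.Perm (Fin n))).filter fun σ => ∀ x ∈ K, σ x = g x).card
      = Fintype.card {σ : Equiv.Perm (Fin n) // ∀ x ∈ K, σ x = g x} := by
    rw [Fintype.card_subtype]
  rw [hcard1, Fintype.card_congr Φ]
  have hcK : Fintype.card {x : Fin n // x ∉ K} = n - K.card := by
    rw [Fintype.card_subtype_compl, Fintype.card_coe, Fintype.card_fin]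
  have hcL : Fintype.card {y : Fin n // y ∉ L} = n - K.card := by
    rw [Fintype.card_subtype_compl, Fintype.card_coe, Fintype.card_fin, hcardL]
  have : Nonempty ({x : Fin n // x ∉ K} ≃ {y : Fin n // y ∉ L}) := by
    refine ⟨Fintype.equivOfCardEq ?_⟩
    rw [hcK, hcL]
  obtain ⟨e⟩ := this
  rw [Fintype.card_equiv e, hcK]

lemma exists_perm_agree (K : Finset (Fin n)) (g : Fin n → Fin n)
    (hg : Set.InjOn g K) : ∃ σ : Equiv.Perm (Fin n), ∀ x ∈ K, σ x = g x := by
  have h := card_perm_agree K g hg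
  have hpos : 0 < (n - K.card).factorial := Nat.factorial_pos _
  rw [← h] at hpos
  obtain ⟨σ, hσ⟩ := Finset.card_pos.1 hpos
  exact ⟨σ, (Finset.mem_filter.1 hσ).2⟩

/-- Count of permutations with `σ v = t` and mapping each element of `D` above `t`. -/
lemma card_perm_prescribed (v t : Fin n) (D : Finset (Fin n)) (hv : v ∉ D) :
    ((univ : Finset (Equiv.Perm (Fin n))).filter
        fun σ => σ v = t ∧ ∀ a ∈ D, t < σ a).card
      = (n - 1 - (t : ℕ)).descFactorial D.card * (n - 1 - D.card).factorial := by
  classical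
  set A := (univ : Finset (Equiv.Perm (Fin n))).filter
      (fun σ => σ v = t ∧ ∀ a ∈ D, t < σ a) with hA
  have hAmem : ∀ σ : Equiv.Perm (Fin n), σ ∈ A ↔ (σ v = t ∧ ∀ a ∈ D, t < σ a) := by
    intro σ; simp [hA]
  set K := insert v D with hK
  have hvK : v ∈ K := mem_insert_self v D
  have hDK : ∀ a ∈ D, a ∈ K := fun a ha => mem_insert_of_mem ha
  have hmemK : ∀ x, x ∈ K ↔ (x = v ∨ x ∈ D) := by intro x; simp [hK]
  have hcardK : K.card = D.card + 1 := Finset.card_insert_of_notMem hv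
  set κ : Equiv.Perm (Fin n) → (Fin n → Fin n) :=
    fun σ x => if x ∈ K then σ x else v with hκ
  have hκ_in : ∀ σ x, x ∈ K → κ σ x = σ x := by intro σ x hx; simp only [hκ, if_pos hx]
  have hκ_out : ∀ σ x, x ∉ K → κ σ x = v := by intro σ x hx; simp only [hκ, if_neg hx]
  set B := A.image κ with hB
  have hBspec : ∀ h ∈ B, h v = t ∧ (∀ a ∈ D, t < h a) ∧ Set.InjOn h K
      ∧ (∀ x, x ∉ K → h x = v) := by
    intro h hh
    obtain ⟨σ₀, hσ₀A, hσ₀⟩ := Finset.mem_image.1 hh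
    obtain ⟨h1, h2⟩ := (hAmem σ₀).1 hσ₀A
    have hval : ∀ x ∈ K, h x = σ₀ x := by
      intro x hx; rw [← hσ₀, hκ_in σ₀ x hx]
    refine ⟨by rw [hval v hvK, h1], fun a ha => by rw [hval a (hDK a ha)]; exact h2 a ha,
      ?_, fun x hx => by rw [← hσ₀, hκ_out σ₀ x hx]⟩
    intro x hx y hy hxy
    rw [Finset.mem_coe] at hx hy
    rw [hval x hx, hval y hy] at hxy
    exact σ₀.injective hxy
  have hmapsto : ∀ σ ∈ A, κ σ ∈ B := fun σ hσ => mem_image_of_mem κ hσ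
  have hfiber : ∀ h ∈ B, A.filter (fun σ => κ σ = h)
      = (univ : Finset (Equiv.Perm (Fin n))).filter fun σ => ∀ x ∈ K, σ x = h x := by
    intro h hh
    obtain ⟨hhv, hhD, hhinj, hhout⟩ := hBspec h hh
    ext σ
    simp only [Finset.mem_filter, Finset.mem_univ, true_and]
    constructor
    · rintro ⟨-, hkσ⟩ x hx
      rw [← hkσ, hκ_in σ x hx]
    · intro hagree
      refine ⟨(hAmem σ).2 ⟨by rw [hagree v hvK, hhv], fun a ha => by rw [hagree a (hDK a ha)]; exact hhD a ha⟩, ?_⟩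
      funext x
      by_cases hx : x ∈ K
      · rw [hκ_in σ x hx, hagree x hx]
      · rw [hκ_out σ x hx, hhout x hx]
  have hcards : A.card = B.card * (n - 1 - D.card).factorial := by
    rw [Finset.card_eq_sum_card_fiberwise hmapsto]
    have heach : ∀ h ∈ B, (A.filter (fun σ => κ σ = h)).card = (n - 1 - D.card).factorial := by
      intro h hh
      rw [hfiber h hh, card_perm_agree K h (hBspec h hh).2.2.1, hcardK]
      congr 1
      omega
    rw [Finset.sum_congr rfl heach, Finset.sum_const, smul_eq_mul]
  rw [hcards]
  congr 1
  rw [← Fintype.card_coe B]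
  have hBequiv : {h // h ∈ B} ≃ ({a // a ∈ D} ↪ {u : Fin n // t < u}) := by
    refine ⟨fun h => ⟨fun a => ⟨h.1 a.1, (hBspec h.1 h.2).2.1 a.1 a.2⟩, ?_⟩,
      fun f => ⟨fun x => if x = v then t else if hx : x ∈ D then f ⟨x, hx⟩ else v, ?_⟩, ?_, ?_⟩
    · -- injectivity of toFun's embedding
      rintro ⟨a, ha⟩ ⟨b, hb⟩ hab
      simp only [Subtype.mk.injEq] at hab
      exact Subtype.ext ((hBspec h.1 h.2).2.2.1 (Finset.mem_coe.2 (hDK a ha))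
        (Finset.mem_coe.2 (hDK b hb)) hab)
    · -- membership of reconstructed function in B
      set g : Fin n → Fin n :=
        fun x => if x = v then t else if hx : x ∈ D then f ⟨x, hx⟩ else v with hg
      have hgv : g v = t := by simp only [hg, if_pos rfl]
      have hgD : ∀ a (ha : a ∈ D), g a = (f ⟨a, ha⟩ : Fin n) := by
        intro a ha
        have hav : a ≠ v := fun h' => hv (h' ▸ ha)
        simp only [hg, if_neg hav, dif_pos ha]
      have hginj : Set.InjOn g K := by
        intro x hx y hy hxy
        rw [Finset.mem_coe, hmemK] at hx hy
        rcases hx with hx | hx <;> rcases hy with hy | hy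
        · rw [hx, hy]
        · exfalso
          rw [hx, hgv, hgD y hy] at hxy
          exact absurd (f ⟨y, hy⟩).2 (by rw [← hxy]; exact lt_irrefl t)
        · exfalso
          rw [hy, hgv, hgD x hx] at hxy
          exact absurd (f ⟨x, hx⟩).2 (by rw [hxy]; exact lt_irrefl t)
        · rw [hgD x hx, hgD y hy] at hxy
          exact congrArg Subtype.val (f.injective (Subtype.ext hxy))
      obtain ⟨σ, hσ⟩ := exists_perm_agree K g hginj
      refine Finset.mem_image.2 ⟨σ, (hAmem σ).2 ⟨?_, ?_⟩, ?_⟩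
      · rw [hσ v hvK, hgv]
      · intro a ha
        rw [hσ a (hDK a ha), hgD a ha]
        exact (f ⟨a, ha⟩).2
      · funext x
        by_cases hx : x ∈ K
        · rw [hκ_in σ x hx, hσ x hx]
        · rw [hκ_out σ x hx]
          have hxv : x ≠ v := fun h' => hx (h' ▸ hvK)
          have hxD : x ∉ D := fun h' => hx (hDK x h')
          simp only [hg, if_neg hxv, dif_neg hxD]
    · -- left inverse
      rintro ⟨h, hh⟩
      obtain ⟨hhv, hhD, hhinj, hhout⟩ := hBspec h hh
      apply Subtype.ext
      funext x
      by_cases hxv : x = v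
      · subst hxv
        simp only [if_pos rfl]
        exact hhv.symm
      · by_cases hxD : x ∈ D
        · simp only [if_neg hxv, dif_pos hxD]
          rfl
        · simp only [if_neg hxv, dif_neg hxD]
          exact (hhout x (fun hx => by rcases (hmemK x).1 hx with h' | h' <;> [exact hxv h'; exact hxD h'])).symm
    · -- right inverse
      intro f
      apply Function.Embedding.ext
      intro a
      apply Subtype.ext
      have hav : (a : Fin n) ≠ v := fun h' => hv (h' ▸ a.2)
      simp only [Function.Embedding.coeFn_mk]
      show (if (a:Fin n) = v then t else if hx : (a:Fin n) ∈ D then (f ⟨a, hx⟩ : Fin n) else v) = f a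
      rw [if_neg hav, dif_pos a.2]
  rw [Fintype.card_congr hBequiv, Fintype.card_embedding_eq, Fintype.card_coe]
  congr 1
  rw [Fintype.card_subtype]
  have : (univ : Finset (Fin n)).filter (fun u => t < u) = Finset.Ioi t := by
    ext u; simp
  rw [this, Fin.card_Ioi]

/-- position of the first vertex of `e` under ordering `π`. -/
def mp (π : Equiv.Perm (Fin n)) (e : Finset (Fin n)) : ℕ :=
  sInf ((fun v => ((π v : Fin n) : ℕ)) '' (e : Set (Fin n)))

/-- edges revealed before time `t`. -/
def Rev (π : Equiv.Perm (Fin n)) (M : Finset (Finset (Fin n))) (t : ℕ) :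
    Finset (Finset (Fin n)) :=
  M.filter (fun e => mp π e < t)

/-- candidate edges at vertex `v`, time `t`, given revealed edges `R`. -/
def Cand (S : Finset (Finset (Fin n))) (π : Equiv.Perm (Fin n)) (v : Fin n) (t : ℕ)
    (R : Finset (Finset (Fin n))) : Finset (Finset (Fin n)) :=
  S.filter (fun f => v ∈ f ∧ (∀ u ∈ f, ∀ g ∈ R, u ∉ g) ∧
    (∀ u ∈ f, u ≠ v → t < ((π u : Fin n) : ℕ)))

/-- number of candidates when the edge `e` of `M` gets revealed. -/
def C (S : Finset (Finset (Fin n))) (π : Equiv.Perm (Fin n))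
    (M : Finset (Finset (Fin n))) (e : Finset (Fin n)) : ℕ :=
  if h : mp π e < n then
    (Cand S π (π.symm ⟨mp π e, h⟩) (mp π e) (Rev π M (mp π e))).card
  else 1

def PMs (n : ℕ) (S : Finset (Finset (Fin n))) : Finset (Finset (Finset (Fin n))) :=
  Finset.univ.filter (fun M => IsMatching n S M ∧ M.card = n / 3)

lemma mp_le (π : Equiv.Perm (Fin n)) {e : Finset (Fin n)} {v : Fin n} (hv : v ∈ e) :
    mp π e ≤ π v :=
  Nat.sInf_le ⟨v, by simpa using hv, rfl⟩

lemma exists_mp (π : Equiv.Perm (Fin n)) {e : Finset (Fin n)} (he : e.Nonempty) :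
    ∃ v ∈ e, ((π v : Fin n) : ℕ) = mp π e := by
  have hne : ((fun v => ((π v : Fin n) : ℕ)) '' (e : Set (Fin n))).Nonempty := by
    obtain ⟨v, hv⟩ := he
    exact ⟨π v, v, by simpa using hv, rfl⟩
  have := Nat.sInf_mem hne
  obtain ⟨v, hv, hval⟩ := this
  exact ⟨v, by simpa using hv, hval⟩

lemma mp_lt (π : Equiv.Perm (Fin n)) {e : Finset (Fin n)} (he : e.Nonempty) :
    mp π e < n := by
  obtain ⟨v, -, hval⟩ := exists_mp π he
  exact hval ▸ (π v).isLt

lemma mp_eq_of (π : Equiv.Perm (Fin n)) {e : Finset (Fin n)} {v : Fin n} {t : ℕ}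
    (hv : v ∈ e) (hvt : ((π v : Fin n) : ℕ) = t)
    (hother : ∀ u ∈ e, ((π u : Fin n) : ℕ) ≥ t) : mp π e = t :=
  le_antisymm (hvt ▸ mp_le π hv) (by
    obtain ⟨u, hu, hval⟩ := exists_mp π ⟨v, hv⟩
    exact hval ▸ hother u hu)

section STS

variable {S : Finset (Finset (Fin n))}

lemma pair_unique (hS : IsSTS n S) {e f : Finset (Fin n)} {v b : Fin n} (he : e ∈ S) (hf : f ∈ S)
    (hve : v ∈ e) (hvf : v ∈ f) (hbe : b ∈ e) (hbf : b ∈ f) (hvb : v ≠ b) : e = f := by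
  have hcard : ({v, b} : Finset (Fin n)).card = 2 := by
    rw [Finset.card_insert_of_notMem (by simpa using hvb), Finset.card_singleton]
  obtain ⟨g, -, hgu⟩ := hS.2 {v, b} hcard
  have h1 : e = g := hgu e ⟨he, by intro x hx; rcases Finset.mem_insert.1 hx with h | h; exact h ▸ hve; exact (Finset.mem_singleton.1 h) ▸ hbe⟩
  have h2 : f = g := hgu f ⟨hf, by intro x hx; rcases Finset.mem_insert.1 hx with h | h; exact h ▸ hvf; exact (Finset.mem_singleton.1 h) ▸ hbf⟩
  rw [h1, h2]

/-- the degree bound: at most `(n-1)/2` edges through a vertex. -/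
lemma degree_bound (hS : IsSTS n S) (v : Fin n) :
    2 * (S.filter (fun f => v ∈ f)).card ≤ n - 1 := by
  classical
  set E := S.filter (fun f => v ∈ f) with hE
  have hdisj : ∀ f₁ ∈ E, ∀ f₂ ∈ E, f₁ ≠ f₂ → Disjoint (f₁.erase v) (f₂.erase v) := by
    intro f₁ h₁ f₂ h₂ hne
    rw [Finset.disjoint_left]
    intro b hb₁ hb₂
    obtain ⟨hb₁v, hb₁f⟩ := Finset.mem_erase.1 hb₁
    obtain ⟨hb₂v, hb₂f⟩ := Finset.mem_erase.1 hb₂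
    obtain ⟨hf₁S, hvf₁⟩ := Finset.mem_filter.1 h₁
    obtain ⟨hf₂S, hvf₂⟩ := Finset.mem_filter.1 h₂
    exact hne (pair_unique hS hf₁S hf₂S hvf₁ hvf₂ hb₁f hb₂f (Ne.symm hb₁v))
  have hsub : E.biUnion (fun f => f.erase v) ⊆ Finset.univ.erase v := by
    intro b hb
    obtain ⟨f, hf, hbf⟩ := Finset.mem_biUnion.1 hb
    exact Finset.mem_erase.2 ⟨(Finset.mem_erase.1 hbf).1, Finset.mem_univ b⟩
  have hcard := Finset.card_le_card hsub
  rw [Finset.card_biUnion hdisj] at hcard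
  have hsum : ∀ f ∈ E, (f.erase v).card = 2 := by
    intro f hf
    obtain ⟨hfS, hvf⟩ := Finset.mem_filter.1 hf
    rw [Finset.card_erase_of_mem hvf, hS.1 f hfS]
  rw [Finset.sum_congr rfl hsum, Finset.sum_const, smul_eq_mul] at hcard
  rw [Finset.card_erase_of_mem (Finset.mem_univ v), Finset.card_univ, Fintype.card_fin] at hcard
  omega

end STS

section Matching

variable {S M : Finset (Finset (Fin n))}

lemma pm_card3 (hS : IsSTS n S) (hM : M ∈ PMs n S) : ∀ e ∈ M, e.card = 3 := by
  intro e he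
  exact hS.1 e ((Finset.mem_filter.1 hM).2.1.1 he)

lemma pm_disj (hM : M ∈ PMs n S) : ∀ e ∈ M, ∀ f ∈ M, e ≠ f → Disjoint e f :=
  (Finset.mem_filter.1 hM).2.1.2

lemma pm_sub (hM : M ∈ PMs n S) : M ⊆ S := (Finset.mem_filter.1 hM).2.1.1

lemma pm_spanning (hS : IsSTS n S) (h3 : 3 ∣ n) (hM : M ∈ PMs n S) (v : Fin n) :
    ∃ e ∈ M, v ∈ e := by
  classical
  have hcard : (M.biUnion (fun e => e)).card = n := by
    rw [Finset.card_biUnion (fun e he f hf hne => pm_disj hM e he f hf hne)]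
    have : ∀ e ∈ M, e.card = 3 := fun e he => pm_card3 hS hM e he
    rw [Finset.sum_congr rfl this, Finset.sum_const, smul_eq_mul,
      (Finset.mem_filter.1 hM).2.2]
    exact Nat.div_mul_cancel h3
  have huniv : M.biUnion (fun e => e) = Finset.univ := by
    apply Finset.eq_univ_of_card
    rw [hcard, Fintype.card_fin]
  have : v ∈ M.biUnion (fun e => e) := huniv ▸ Finset.mem_univ v
  obtain ⟨e, he, hve⟩ := Finset.mem_biUnion.1 this
  exact ⟨e, he, hve⟩

lemma pm_cover_unique (hM : M ∈ PMs n S) {e f : Finset (Fin n)} {v : Fin n}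
    (he : e ∈ M) (hf : f ∈ M) (hve : v ∈ e) (hvf : v ∈ f) : e = f := by
  by_contra hne
  exact Finset.disjoint_left.1 (pm_disj hM e he f hf hne) hve hvf

lemma pm_edge_nonempty (hS : IsSTS n S) (hM : M ∈ PMs n S) {e : Finset (Fin n)}
    (he : e ∈ M) : e.Nonempty :=
  Finset.card_pos.1 (by rw [pm_card3 hS hM e he]; norm_num)

/-- the true edge is always a candidate, so `C ≥ 1`. -/
lemma C_pos (hS : IsSTS n S) (hM : M ∈ PMs n S) {e : Finset (Fin n)} (he : e ∈ M)
    (π : Equiv.Perm (Fin n)) : 1 ≤ C S π M e := by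
  have hne : e.Nonempty := pm_edge_nonempty hS hM he
  have hlt : mp π e < n := mp_lt π hne
  rw [C, dif_pos hlt]
  have hv : π.symm ⟨mp π e, hlt⟩ ∈ e := by
    obtain ⟨v, hv, hval⟩ := exists_mp π hne
    have : π v = ⟨mp π e, hlt⟩ := Fin.ext hval
    rw [← this, Equiv.symm_apply_apply]
    exact hv
  have hmem : e ∈ Cand S π (π.symm ⟨mp π e, hlt⟩) (mp π e) (Rev π M (mp π e)) := by
    rw [Cand, Finset.mem_filter]
    refine ⟨pm_sub hM he, hv, ?_, ?_⟩
    · intro u hu g hg hug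
      obtain ⟨hgM, hglt⟩ := Finset.mem_filter.1 hg
      have hge : g ≠ e := fun h => by rw [h] at hglt; exact lt_irrefl _ hglt
      exact Finset.disjoint_left.1 (pm_disj hM g hgM e he hge) hug hu
    · intro u hu huv
      have h1 : mp π e ≤ π u := mp_le π hu
      rcases lt_or_eq_of_le h1 with h | h
      · exact h
      · exfalso
        apply huv
        have : π u = ⟨mp π e, hlt⟩ := Fin.ext h.symm
        rw [← this, Equiv.symm_apply_apply]
  exact Finset.card_pos.2 ⟨e, hmem⟩

end Matching

section Kraft

variable {S : Finset (Finset (Fin n))}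

lemma C_eq_of_mp {S : Finset (Finset (Fin n))} (π : Equiv.Perm (Fin n))
    {M : Finset (Finset (Fin n))} {e : Finset (Fin n)} {t' : ℕ}
    (h : mp π e = t') (ht' : t' < n) :
    C S π M e = (Cand S π (π.symm ⟨t', ht'⟩) t' (Rev π M t')).card := by
  subst h
  rw [C, dif_pos ht']

lemma prod_inv_nonneg (f : Finset (Fin n) → ℕ)
    (T : Finset (Finset (Fin n))) : (0:ℝ) ≤ ∏ e ∈ T, ((f e : ℝ))⁻¹ :=
  Finset.prod_nonneg (fun e _ => inv_nonneg.2 (Nat.cast_nonneg _))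

lemma kraft_aux (hS : IsSTS n S) (h3 : 3 ∣ n) (π : Equiv.Perm (Fin n)) :
    ∀ k : ℕ, k ≤ n → ∀ R : Finset (Finset (Fin n)),
      ∑ M ∈ (PMs n S).filter (fun M => Rev π M (n - k) = R),
        ∏ e ∈ M.filter (fun e => n - k ≤ mp π e), ((C S π M e : ℝ))⁻¹ ≤ 1 := by
  intro k
  induction k with
  | zero =>
    intro _ R
    have hrev : ∀ M ∈ PMs n S, Rev π M (n - 0) = M := by
      intro M hM
      rw [Nat.sub_zero, Rev, Finset.filter_true_of_mem]
      intro e he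
      exact mp_lt π (pm_edge_nonempty hS hM he)
    have hone : ∀ M ∈ (PMs n S).filter (fun M => Rev π M (n - 0) = R),
        ∏ e ∈ M.filter (fun e => n - 0 ≤ mp π e), ((C S π M e : ℝ))⁻¹ = 1 := by
      intro M hM
      obtain ⟨hM1, -⟩ := Finset.mem_filter.1 hM
      have : M.filter (fun e => n - 0 ≤ mp π e) = ∅ := by
        rw [Nat.sub_zero]
        apply Finset.filter_false_of_mem
        intro e he
        exact not_le.2 (mp_lt π (pm_edge_nonempty hS hM1 he))
      rw [this, Finset.prod_empty]
    rw [Finset.sum_congr rfl hone, Finset.sum_const, nsmul_eq_mul, mul_one]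
    have hsub : (PMs n S).filter (fun M => Rev π M (n - 0) = R) ⊆ {R} := by
      intro M hM
      obtain ⟨hM1, hM2⟩ := Finset.mem_filter.1 hM
      rw [Finset.mem_singleton, ← hM2, hrev M hM1]
    have := Finset.card_le_card hsub
    rw [Finset.card_singleton] at this
    exact_mod_cast this
  | succ k ih =>
    intro hk R
    have hkn : k ≤ n := by omega
    set t := n - (k+1) with ht
    have htn : t < n := by omega
    have htt : t + 1 = n - k := by omega
    set v := π.symm ⟨t, htn⟩ with hv
    have hπv : ((π v : Fin n) : ℕ) = t := by rw [hv, Equiv.apply_symm_apply]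
    have hkey : ∀ (M : Finset (Finset (Fin n))) (e : Finset (Fin n)), e.Nonempty → e ∈ M → mp π e = t → v ∈ e := by
      intro M e hne he hmp
      obtain ⟨u, hu, hval⟩ := exists_mp π hne
      have : π u = ⟨t, htn⟩ := Fin.ext (by rw [hval, hmp])
      rw [hv, ← this, Equiv.symm_apply_apply]
      exact hu
    by_cases hcov : ∃ g ∈ R, v ∈ g
    · -- v already covered: nothing is revealed at time t
      obtain ⟨g₀, hg₀R, hvg₀⟩ := hcov
      have hstep : ∀ M ∈ (PMs n S).filter (fun M => Rev π M t = R),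
          Rev π M (t+1) = R ∧
          M.filter (fun e => t ≤ mp π e) = M.filter (fun e => t+1 ≤ mp π e) := by
        intro M hM
        obtain ⟨hM1, hM2⟩ := Finset.mem_filter.1 hM
        have hg₀M : g₀ ∈ M := by
          rw [← hM2] at hg₀R
          exact Finset.filter_subset _ M hg₀R
        have hnot : ∀ e ∈ M, mp π e ≠ t := by
          intro e he hmp
          have hve := hkey M e (pm_edge_nonempty hS hM1 he) he hmp
          have heg := pm_cover_unique hM1 he hg₀M hve hvg₀
          rw [← hM2] at hg₀R
          have hlt := (Finset.mem_filter.1 hg₀R).2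
          rw [← heg] at hlt
          omega
        constructor
        · rw [← hM2, Rev, Rev]
          apply Finset.filter_congr
          intro e he
          have := hnot e he
          omega
        · apply Finset.filter_congr
          intro e he
          have := hnot e he
          omega
      calc ∑ M ∈ (PMs n S).filter (fun M => Rev π M (n - (k+1)) = R),
            ∏ e ∈ M.filter (fun e => n - (k+1) ≤ mp π e), ((C S π M e : ℝ))⁻¹
          = ∑ M ∈ (PMs n S).filter (fun M => Rev π M t = R),
            ∏ e ∈ M.filter (fun e => t+1 ≤ mp π e), ((C S π M e : ℝ))⁻¹ := by
            apply Finset.sum_congr rfl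
            intro M hM
            rw [← (hstep M hM).2]
        _ ≤ ∑ M ∈ (PMs n S).filter (fun M => Rev π M (t+1) = R),
            ∏ e ∈ M.filter (fun e => t+1 ≤ mp π e), ((C S π M e : ℝ))⁻¹ := by
            apply Finset.sum_le_sum_of_subset_of_nonneg
            · intro M hM
              refine Finset.mem_filter.2 ⟨(Finset.mem_filter.1 hM).1, (hstep M hM).1⟩
            · intro M _ _
              exact prod_inv_nonneg _ _
        _ ≤ 1 := by
            have := ih hkn R
            rw [← htt] at this
            exact this
    · -- v uncovered: an edge is revealed at time t
      set c := (Cand S π v t R).card with hc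
      have hmain : ∀ M ∈ (PMs n S).filter (fun M => Rev π M t = R),
          ∃ eM, eM ∈ M ∧ mp π eM = t ∧ eM ∈ Cand S π v t R ∧
            Rev π M (t+1) = insert eM R ∧
            M.filter (fun e => t ≤ mp π e)
              = insert eM (M.filter (fun e => t+1 ≤ mp π e)) ∧
            C S π M eM = c := by
        intro M hM
        obtain ⟨hM1, hM2⟩ := Finset.mem_filter.1 hM
        obtain ⟨eM, heM, hveM⟩ := pm_spanning hS h3 hM1 v
        have hmple : mp π eM ≤ t := hπv ▸ mp_le π hveM
        have hmpnlt : ¬ mp π eM < t := by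
          intro hlt
          have : eM ∈ R := by
            rw [← hM2, Rev]
            exact Finset.mem_filter.2 ⟨heM, hlt⟩
          exact hcov ⟨eM, this, hveM⟩
        have hmp : mp π eM = t := by omega
        have huniq : ∀ e ∈ M, mp π e = t → e = eM := by
          intro e he hmpe
          exact pm_cover_unique hM1 he heM
            (hkey M e (pm_edge_nonempty hS hM1 he) he hmpe) hveM
        have hcand : eM ∈ Cand S π v t R := by
          rw [Cand, Finset.mem_filter]
          refine ⟨pm_sub hM1 heM, hveM, ?_, ?_⟩
          · intro u hu g hg hug
            rw [← hM2, Rev] at hg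
            obtain ⟨hgM, hglt⟩ := Finset.mem_filter.1 hg
            have hge : g ≠ eM := fun h => by rw [h, hmp] at hglt; omega
            exact Finset.disjoint_left.1 (pm_disj hM1 g hgM eM heM hge) hug hu
          · intro u hu huv
            have h1 : mp π eM ≤ π u := mp_le π hu
            rw [hmp] at h1
            rcases lt_or_eq_of_le h1 with h | h
            · exact h
            · exfalso
              apply huv
              have : π u = ⟨t, htn⟩ := Fin.ext h.symm
              rw [hv, ← this, Equiv.symm_apply_apply]
        refine ⟨eM, heM, hmp, hcand, ?_, ?_, ?_⟩
        · ext e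
          rw [Rev, Finset.mem_filter, Finset.mem_insert]
          constructor
          · rintro ⟨heMem, hlt⟩
            rcases Nat.lt_succ_iff_lt_or_eq.1 hlt with h | h
            · right; rw [← hM2, Rev]; exact Finset.mem_filter.2 ⟨heMem, h⟩
            · left; exact huniq e heMem h
          · rintro (h | h)
            · rw [h]; exact ⟨heM, by omega⟩
            · rw [← hM2, Rev] at h
              obtain ⟨h1, h2⟩ := Finset.mem_filter.1 h
              exact ⟨h1, by omega⟩
        · ext e
          rw [Finset.mem_filter, Finset.mem_insert, Finset.mem_filter]
          constructor
          · rintro ⟨heMem, hle⟩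
            rcases Nat.eq_or_lt_of_le hle with h | h
            · left; exact huniq e heMem h.symm
            · right; exact ⟨heMem, h⟩
          · rintro (h | ⟨h1, h2⟩)
            · rw [h]; exact ⟨heM, by omega⟩
            · exact ⟨h1, by omega⟩
        · rw [C_eq_of_mp π hmp htn, ← hv, hM2]
      have hprod : ∀ M ∈ (PMs n S).filter (fun M => Rev π M t = R),
          ∏ e ∈ M.filter (fun e => t ≤ mp π e), ((C S π M e : ℝ))⁻¹
            = (c:ℝ)⁻¹ * ∏ e ∈ M.filter (fun e => t+1 ≤ mp π e), ((C S π M e : ℝ))⁻¹ := by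
        intro M hM
        obtain ⟨eM, heM, hmp, hcand, hrev, hfilt, hCeq⟩ := hmain M hM
        rw [hfilt, Finset.prod_insert, hCeq]
        intro hmem
        have := (Finset.mem_filter.1 hmem).2
        omega
      have hsum : ∑ M ∈ (PMs n S).filter (fun M => Rev π M t = R),
          ∏ e ∈ M.filter (fun e => t+1 ≤ mp π e), ((C S π M e : ℝ))⁻¹ ≤ (c : ℝ) := by
        have hmaps : ∀ M ∈ (PMs n S).filter (fun M => Rev π M t = R),
            Rev π M (t+1) ∈ (Cand S π v t R).image (fun f => insert f R) := by
          intro M hM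
          obtain ⟨eM, -, -, hcand, hrev, -, -⟩ := hmain M hM
          exact Finset.mem_image.2 ⟨eM, hcand, hrev.symm⟩
        rw [← Finset.sum_fiberwise_of_maps_to hmaps]
        calc ∑ R' ∈ (Cand S π v t R).image (fun f => insert f R),
              ∑ M ∈ ((PMs n S).filter (fun M => Rev π M t = R)).filter
                (fun M => Rev π M (t+1) = R'),
              ∏ e ∈ M.filter (fun e => t+1 ≤ mp π e), ((C S π M e : ℝ))⁻¹
            ≤ ∑ R' ∈ (Cand S π v t R).image (fun f => insert f R), 1 := by
              apply Finset.sum_le_sum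
              intro R' hR'
              calc ∑ M ∈ ((PMs n S).filter (fun M => Rev π M t = R)).filter
                    (fun M => Rev π M (t+1) = R'),
                  ∏ e ∈ M.filter (fun e => t+1 ≤ mp π e), ((C S π M e : ℝ))⁻¹
                  ≤ ∑ M ∈ (PMs n S).filter (fun M => Rev π M (t+1) = R'),
                    ∏ e ∈ M.filter (fun e => t+1 ≤ mp π e), ((C S π M e : ℝ))⁻¹ := by
                    apply Finset.sum_le_sum_of_subset_of_nonneg
                    · intro M hM
                      obtain ⟨h1, h2⟩ := Finset.mem_filter.1 hM
                      exact Finset.mem_filter.2 ⟨(Finset.mem_filter.1 h1).1, h2⟩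
                    · intro M _ _
                      exact prod_inv_nonneg _ _
                _ ≤ 1 := by
                    have := ih hkn R'
                    rw [← htt] at this
                    exact this
          _ ≤ (c : ℝ) := by
              rw [Finset.sum_const, nsmul_eq_mul, mul_one]
              have := Finset.card_image_le (s := Cand S π v t R) (f := fun f => insert f R)
              rw [← hc] at this
              exact_mod_cast this
      calc ∑ M ∈ (PMs n S).filter (fun M => Rev π M (n - (k+1)) = R),
            ∏ e ∈ M.filter (fun e => n - (k+1) ≤ mp π e), ((C S π M e : ℝ))⁻¹
          = (c:ℝ)⁻¹ * ∑ M ∈ (PMs n S).filter (fun M => Rev π M t = R),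
            ∏ e ∈ M.filter (fun e => t+1 ≤ mp π e), ((C S π M e : ℝ))⁻¹ := by
            rw [Finset.mul_sum]
            exact Finset.sum_congr rfl hprod
        _ ≤ (c:ℝ)⁻¹ * (c:ℝ) := by
            apply mul_le_mul_of_nonneg_left hsum
            exact inv_nonneg.2 (Nat.cast_nonneg _)
        _ ≤ 1 := by
            rcases eq_or_ne (c:ℝ) 0 with h | h
            · rw [h]; norm_num
            · rw [inv_mul_cancel₀ h]

lemma kraft (hS : IsSTS n S) (h3 : 3 ∣ n) (π : Equiv.Perm (Fin n)) :
    ∑ M ∈ PMs n S, ∏ e ∈ M, ((C S π M e : ℝ))⁻¹ ≤ 1 := by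
  have h := kraft_aux hS h3 π n le_rfl ∅
  rw [Nat.sub_self] at h
  have h1 : (PMs n S).filter (fun M => Rev π M 0 = ∅) = PMs n S := by
    apply Finset.filter_true_of_mem
    intro M hM
    rw [Rev]
    apply Finset.filter_false_of_mem
    intro e he
    omega
  rw [h1] at h
  have h2 : ∀ M ∈ PMs n S, M.filter (fun e => 0 ≤ mp π e) = M := by
    intro M hM
    apply Finset.filter_true_of_mem
    intro e he
    omega
  calc ∑ M ∈ PMs n S, ∏ e ∈ M, ((C S π M e : ℝ))⁻¹
      = ∑ M ∈ PMs n S, ∏ e ∈ M.filter (fun e => 0 ≤ mp π e), ((C S π M e : ℝ))⁻¹ := by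
        apply Finset.sum_congr rfl
        intro M hM
        rw [h2 M hM]
    _ ≤ 1 := h

end Kraft


/-- the weight/log sum appearing in the bound. -/
def Fbd (n : ℕ) : ℝ :=
  ∑ s ∈ Finset.range n,
    (3 * (s:ℝ) * ((s:ℝ) - 1) / ((n:ℝ) * ((n:ℝ)-1) * ((n:ℝ)-2))) *
      Real.log (1 + ((n:ℝ)/2) * (((s:ℝ)/((n:ℝ)-8)) ^ 6))

lemma jensen_log {α : Type*} (G : Finset α) (p : α → ℝ) (hp : ∀ x ∈ G, 0 ≤ p x)
    (b : ℝ) (hb : 0 ≤ b) (hsum : ∑ x ∈ G, p x ≤ (G.card : ℝ) * b) :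
    ∑ x ∈ G, Real.log (1 + p x) ≤ (G.card : ℝ) * Real.log (1 + b) := by
  have hb1 : (0:ℝ) < 1 + b := by linarith
  have hstep : ∀ x ∈ G, Real.log (1 + p x) ≤ Real.log (1 + b) + ((1 + p x) / (1 + b) - 1) := by
    intro x hx
    have hpx : (0:ℝ) < 1 + p x := by have := hp x hx; linarith
    have h := Real.log_le_sub_one_of_pos (x := (1 + p x)/(1+b)) (by positivity)
    rw [Real.log_div (by linarith) (by linarith)] at h
    linarith
  calc ∑ x ∈ G, Real.log (1 + p x)
      ≤ ∑ x ∈ G, (Real.log (1 + b) + ((1 + p x) / (1 + b) - 1)) := Finset.sum_le_sum hstep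
    _ = (G.card : ℝ) * Real.log (1+b) + ((∑ x ∈ G, (1 + p x)) / (1 + b) - G.card) := by
        rw [Finset.sum_add_distrib, Finset.sum_const, nsmul_eq_mul,
          Finset.sum_sub_distrib, Finset.sum_const, nsmul_eq_mul, mul_one, ← Finset.sum_div]
    _ ≤ (G.card : ℝ) * Real.log (1+b) := by
        have h1 : (∑ x ∈ G, (1 + p x)) = (G.card : ℝ) + ∑ x ∈ G, p x := by
          rw [Finset.sum_add_distrib, Finset.sum_const, nsmul_eq_mul, mul_one]

        have h2 : (∑ x ∈ G, (1 + p x)) ≤ (G.card : ℝ) * (1 + b) := by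
          rw [h1]; nlinarith
        have h3 : (∑ x ∈ G, (1 + p x)) / (1 + b) ≤ (G.card : ℝ) := by
          rw [div_le_iff₀ hb1]; exact h2
        linarith

/-- the descFactorial/factorial ratio inequality. -/
lemma ratio_bound {n r : ℕ} (hn : 9 ≤ n) :
    r.descFactorial 8 * (n-9).factorial * (n-8)^6
      ≤ r.descFactorial 2 * (n-3).factorial * r^6 := by
  obtain ⟨m, rfl⟩ : ∃ m, n = m + 9 := ⟨n - 9, by omega⟩
  have hd8 : r.descFactorial 8
      = (r-7)*(r-6)*(r-5)*(r-4)*(r-3)*(r-2) * r.descFactorial 2 := by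
    show r.descFactorial (7+1) = _
    rw [Nat.descFactorial_succ]
    show (r-7) * r.descFactorial (6+1) = _
    rw [Nat.descFactorial_succ]
    show (r-7) * ((r-6) * r.descFactorial (5+1)) = _
    rw [Nat.descFactorial_succ]
    show (r-7) * ((r-6) * ((r-5) * r.descFactorial (4+1))) = _
    rw [Nat.descFactorial_succ]
    show (r-7) * ((r-6) * ((r-5) * ((r-4) * r.descFactorial (3+1)))) = _
    rw [Nat.descFactorial_succ]
    show (r-7) * ((r-6) * ((r-5) * ((r-4) * ((r-3) * r.descFactorial (2+1))))) = _
    rw [Nat.descFactorial_succ]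
    ring
  have hfac : (m + 9 - 3).factorial
      = (m+6)*(m+5)*(m+4)*(m+3)*(m+2)*(m+1) * (m + 9 - 9).factorial := by
    have h1 : m + 9 - 3 = m + 6 := by omega
    have h2 : m + 9 - 9 = m := by omega
    rw [h1, h2]
    show (m+5+1).factorial = _
    rw [Nat.factorial_succ]
    show (m+6) * (m+4+1).factorial = _
    rw [Nat.factorial_succ]
    show (m+6) * ((m+5) * (m+3+1).factorial) = _
    rw [Nat.factorial_succ]
    show (m+6) * ((m+5) * ((m+4) * (m+2+1).factorial)) = _
    rw [Nat.factorial_succ]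
    show (m+6) * ((m+5) * ((m+4) * ((m+3) * (m+1+1).factorial))) = _
    rw [Nat.factorial_succ]
    show (m+6) * ((m+5) * ((m+4) * ((m+3) * ((m+2) * (m+0+1).factorial)))) = _
    rw [Nat.factorial_succ]
    ring
  have h8 : m + 9 - 8 = m + 1 := by omega
  rw [hd8, hfac, h8]
  have key : (r-7)*(r-6)*(r-5)*(r-4)*(r-3)*(r-2) * (m+1)^6
      ≤ r^6 * ((m+6)*(m+5)*(m+4)*(m+3)*(m+2)*(m+1)) := by
    have e1 : (r-7)*(r-6)*(r-5)*(r-4)*(r-3)*(r-2) * (m+1)^6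
        = ((r-7)*(m+1))*((r-6)*(m+1))*((r-5)*(m+1))*((r-4)*(m+1))*((r-3)*(m+1))*((r-2)*(m+1)) := by
      ring
    have e2 : r^6 * ((m+6)*(m+5)*(m+4)*(m+3)*(m+2)*(m+1))
        = (r*(m+6))*(r*(m+5))*(r*(m+4))*(r*(m+3))*(r*(m+2))*(r*(m+1)) := by
      ring
    rw [e1, e2]
    have hf : ∀ k j : ℕ, (r - k) * (m+1) ≤ r * (m + 1 + j) :=
      fun k j => Nat.mul_le_mul (Nat.sub_le r k) (by omega)
    have h1 := hf 7 5
    have h2 := hf 6 4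
    have h3 := hf 5 3
    have h4 := hf 4 2
    have h5 := hf 3 1
    have h6 := hf 2 0
    calc (r-7)*(m+1)*((r-6)*(m+1))*((r-5)*(m+1))*((r-4)*(m+1))*((r-3)*(m+1))*((r-2)*(m+1))
        ≤ r*(m+6)*((r-6)*(m+1))*((r-5)*(m+1))*((r-4)*(m+1))*((r-3)*(m+1))*((r-2)*(m+1)) := by
          apply Nat.mul_le_mul_right; apply Nat.mul_le_mul_right; apply Nat.mul_le_mul_right
          apply Nat.mul_le_mul_right; apply Nat.mul_le_mul_right
          convert h1 using 2 <;> omega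
      _ ≤ r*(m+6)*(r*(m+5))*((r-5)*(m+1))*((r-4)*(m+1))*((r-3)*(m+1))*((r-2)*(m+1)) := by
          apply Nat.mul_le_mul_right; apply Nat.mul_le_mul_right; apply Nat.mul_le_mul_right
          apply Nat.mul_le_mul_right; apply Nat.mul_le_mul_left
          convert h2 using 2 <;> omega
      _ ≤ r*(m+6)*(r*(m+5))*(r*(m+4))*((r-4)*(m+1))*((r-3)*(m+1))*((r-2)*(m+1)) := by
          apply Nat.mul_le_mul_right; apply Nat.mul_le_mul_right; apply Nat.mul_le_mul_right
          apply Nat.mul_le_mul_left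
          convert h3 using 2 <;> omega
      _ ≤ r*(m+6)*(r*(m+5))*(r*(m+4))*(r*(m+3))*((r-3)*(m+1))*((r-2)*(m+1)) := by
          apply Nat.mul_le_mul_right; apply Nat.mul_le_mul_right; apply Nat.mul_le_mul_left
          convert h4 using 2 <;> omega
      _ ≤ r*(m+6)*(r*(m+5))*(r*(m+4))*(r*(m+3))*(r*(m+2))*((r-2)*(m+1)) := by
          apply Nat.mul_le_mul_right; apply Nat.mul_le_mul_left
          convert h5 using 2 <;> omega
      _ ≤ r*(m+6)*(r*(m+5))*(r*(m+4))*(r*(m+3))*(r*(m+2))*(r*(m+1)) := by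
          apply Nat.mul_le_mul_left
          convert h6 using 2 <;> omega
  calc (r-7)*(r-6)*(r-5)*(r-4)*(r-3)*(r-2) * r.descFactorial 2 * (m+9-9).factorial * (m+1)^6
      = ((r-7)*(r-6)*(r-5)*(r-4)*(r-3)*(r-2) * (m+1)^6) * (r.descFactorial 2 * (m+9-9).factorial) := by
        ring
    _ ≤ (r^6 * ((m+6)*(m+5)*(m+4)*(m+3)*(m+2)*(m+1))) * (r.descFactorial 2 * (m+9-9).factorial) := by
        exact Nat.mul_le_mul_right _ key
    _ = r.descFactorial 2 * ((m+6)*(m+5)*(m+4)*(m+3)*(m+2)*(m+1) * (m+9-9).factorial) * r^6 := by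
        ring


lemma sum_log_C_le {S M : Finset (Finset (Fin n))} (hS : IsSTS n S) (h3 : 3 ∣ n)
    (hn : 9 ≤ n) (hM : M ∈ PMs n S) {e : Finset (Fin n)} (he : e ∈ M) :
    ∑ π : Equiv.Perm (Fin n), Real.log ((C S π M e : ℝ))
      ≤ (n.factorial : ℝ) * Fbd n := by
  classical
  have hn0 : 0 < n := by omega
  have hnR : (9:ℝ) ≤ (n:ℝ) := by exact_mod_cast hn
  have hecard : e.card = 3 := pm_card3 hS hM e he
  have hene : e.Nonempty := pm_edge_nonempty hS hM he
  have hmplt : ∀ π : Equiv.Perm (Fin n), mp π e < n := fun π => mp_lt π hene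
  set key : Equiv.Perm (Fin n) → Fin n × ℕ :=
    fun π => (π.symm ⟨mp π e % n, Nat.mod_lt _ hn0⟩, mp π e) with hkeydef
  have hkeyfst : ∀ π : Equiv.Perm (Fin n), (key π).1 = π.symm ⟨mp π e, hmplt π⟩ := by
    intro π
    simp only [hkeydef]
    congr 1
    exact Fin.ext (Nat.mod_eq_of_lt (hmplt π))
  have hkeysnd : ∀ π : Equiv.Perm (Fin n), (key π).2 = mp π e := fun π => rfl
  have hvfmem : ∀ π : Equiv.Perm (Fin n), π.symm ⟨mp π e, hmplt π⟩ ∈ e := by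
    intro π
    obtain ⟨u, hu, hval⟩ := exists_mp π hene
    have h : π u = ⟨mp π e, hmplt π⟩ := Fin.ext hval
    rw [← h, Equiv.symm_apply_apply]; exact hu
  have hmaps : ∀ π ∈ (univ : Finset (Equiv.Perm (Fin n))), key π ∈ e ×ˢ Finset.range n := by
    intro π _
    rw [Finset.mem_product, hkeyfst π, hkeysnd π]
    exact ⟨hvfmem π, Finset.mem_range.2 (hmplt π)⟩
  rw [← Finset.sum_fiberwise_of_maps_to hmaps (fun π => Real.log ((C S π M e : ℝ)))]
  have hfiber : ∀ vt ∈ e ×ˢ Finset.range n,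
      ∑ π ∈ univ.filter (fun π => key π = vt), Real.log ((C S π M e : ℝ))
        ≤ (((n - 1 - vt.2).descFactorial 2 * (n-3).factorial : ℕ) : ℝ) *
            Real.log (1 + ((n:ℝ)/2) * ((((n - 1 - vt.2 : ℕ) : ℝ))/((n:ℝ)-8))^6) := by
    rintro ⟨v, t⟩ hvt
    obtain ⟨hve, htr⟩ := Finset.mem_product.1 hvt
    have htn : t < n := Finset.mem_range.1 htr
    set tf : Fin n := ⟨t, htn⟩ with htf
    -- fiber characterization
    have hkeyiff : ∀ π : Equiv.Perm (Fin n),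
        key π = (v, t) ↔ (π v = tf ∧ ∀ a ∈ e.erase v, tf < π a) := by
      intro π
      constructor
      · intro hk
        have h1 : (key π).1 = v := by rw [hk]
        have h2 : (key π).2 = t := by rw [hk]
        rw [hkeyfst] at h1
        rw [hkeysnd] at h2
        have hπv : π v = tf := by
          rw [← h1, Equiv.apply_symm_apply]
          exact Fin.ext h2
        refine ⟨hπv, ?_⟩
        intro a ha
        obtain ⟨hav, hae⟩ := Finset.mem_erase.1 ha
        have hle : mp π e ≤ (π a : ℕ) := mp_le π hae
        rw [h2] at hle
        rcases lt_or_eq_of_le hle with h | h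
        · exact Fin.lt_def.2 h
        · exfalso
          apply hav
          have h' : π a = tf := Fin.ext h.symm
          rw [← hπv] at h'
          exact π.injective h'
      · rintro ⟨hπv, hother⟩
        have hmpt : mp π e = t := by
          have hle : mp π e ≤ t := by
            have := mp_le π hve
            rwa [hπv] at this
          obtain ⟨u, hu, hval⟩ := exists_mp π hene
          rcases eq_or_ne u v with rfl | huv
          · rw [← hval, hπv]
          · have h1 : tf < π u := hother u (Finset.mem_erase.2 ⟨huv, hu⟩)
            have h2 : t < (π u : ℕ) := h1
            omega
        have : key π = (π.symm ⟨mp π e, hmplt π⟩, mp π e) := by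
          rw [← hkeyfst π, ← hkeysnd π]
        rw [this]
        have hh : (⟨mp π e, hmplt π⟩ : Fin n) = tf := Fin.ext hmpt
        rw [hh, ← hπv, Equiv.symm_apply_apply, hmpt]
    set E' : Finset (Finset (Fin n)) := (S.filter (fun f => v ∈ f)).erase e with hE'
    set W : Finset (Fin n) → Finset (Fin n) :=
      fun f => (M.filter (fun g => ∃ b ∈ f.erase v, b ∈ g)).biUnion (fun g => g) with hWdef
    set P : Equiv.Perm (Fin n) → ℕ :=
      fun π => ((E'.filter (fun f => ∀ u ∈ W f, tf < π u)).card) with hPdef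
    have hDf : ∀ f ∈ E', ((e.erase v) ∪ W f).card = 8 ∧ v ∉ (e.erase v) ∪ W f := by
      intro f hf
      obtain ⟨hfe, hfmem⟩ := Finset.mem_erase.1 hf
      obtain ⟨hfS, hvf⟩ := Finset.mem_filter.1 hfmem
      have hfcard : f.card = 3 := hS.1 f hfS
      have hfecard : (f.erase v).card = 2 := by
        rw [Finset.card_erase_of_mem hvf, hfcard]
      obtain ⟨b, c, hbc, hbceq⟩ := Finset.card_eq_two.1 hfecard
      have hbmem : b ∈ f.erase v := by rw [hbceq]; exact Finset.mem_insert_self _ _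
      have hcmem : c ∈ f.erase v := by
        rw [hbceq]; exact Finset.mem_insert_of_mem (Finset.mem_singleton_self _)
      have hnotine : ∀ x ∈ f.erase v, x ∉ e := by
        intro x hx hxe
        obtain ⟨hxv, hxf⟩ := Finset.mem_erase.1 hx
        exact hfe (pair_unique hS hfS (pm_sub hM he) hvf hve hxf hxe (Ne.symm hxv))
      obtain ⟨gb, hgbM, hbgb⟩ := pm_spanning hS h3 hM b
      obtain ⟨gc, hgcM, hcgc⟩ := pm_spanning hS h3 hM c
      have hgbne : gb ≠ e := fun h => hnotine b hbmem (h ▸ hbgb)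
      have hgcne : gc ≠ e := fun h => hnotine c hcmem (h ▸ hcgc)
      have hgbc : gb ≠ gc := by
        intro hgg
        have hbgc : b ∈ gc := hgg ▸ hbgb
        have hbf : b ∈ f := (Finset.mem_erase.1 hbmem).2
        have hcf : c ∈ f := (Finset.mem_erase.1 hcmem).2
        have hfg : f = gc := pair_unique hS hfS (pm_sub hM hgcM) hbf hbgc hcf hcgc hbc
        apply hgcne
        exact pm_cover_unique hM hgcM he (hfg ▸ hvf) hve
      have hfilt : M.filter (fun g => ∃ x ∈ f.erase v, x ∈ g) = {gb, gc} := by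
        ext g
        rw [Finset.mem_filter, Finset.mem_insert, Finset.mem_singleton]
        constructor
        · rintro ⟨hgM, x, hx, hxg⟩
          rw [hbceq] at hx
          rcases Finset.mem_insert.1 hx with rfl | hx'
          · left; exact pm_cover_unique hM hgM hgbM hxg hbgb
          · rw [Finset.mem_singleton] at hx'
            subst hx'
            right
            exact pm_cover_unique hM hgM hgcM hxg hcgc
        · rintro (rfl | rfl)
          · exact ⟨hgbM, b, hbmem, hbgb⟩
          · exact ⟨hgcM, c, hcmem, hcgc⟩
      have hWeq : W f = gb ∪ gc := by
        simp only [hWdef]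
        rw [hfilt, Finset.biUnion_insert, Finset.singleton_biUnion]
      have hdisjbc : Disjoint gb gc := pm_disj hM gb hgbM gc hgcM hgbc
      have hWcard : (W f).card = 6 := by
        rw [hWeq, Finset.card_union_of_disjoint hdisjbc,
          pm_card3 hS hM gb hgbM, pm_card3 hS hM gc hgcM]
      have hdisjeW : Disjoint (e.erase v) (W f) := by
        rw [hWeq, Finset.disjoint_union_right]
        exact ⟨Finset.disjoint_of_subset_left (Finset.erase_subset v e)
            (pm_disj hM e he gb hgbM (Ne.symm hgbne)),
          Finset.disjoint_of_subset_left (Finset.erase_subset v e)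
            (pm_disj hM e he gc hgcM (Ne.symm hgcne))⟩
      have hvW : v ∉ W f := by
        rw [hWeq, Finset.mem_union]
        rintro (h | h)
        · exact hgbne (pm_cover_unique hM hgbM he h hve)
        · exact hgcne (pm_cover_unique hM hgcM he h hve)
      constructor
      · rw [Finset.card_union_of_disjoint hdisjeW, hWcard,
          Finset.card_erase_of_mem hve, hecard]
      · rw [Finset.mem_union]
        rintro (h | h)
        · exact (Finset.notMem_erase v e) h
        · exact hvW h
    have hCb : ∀ π : Equiv.Perm (Fin n), π v = tf → (∀ a ∈ e.erase v, tf < π a) →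
        C S π M e ≤ 1 + P π := by
      intro π hπv hπa
      have hmpt : mp π e = t := by
        have hle : mp π e ≤ t := by
          have := mp_le π hve
          rwa [hπv] at this
        obtain ⟨u, hu, hval⟩ := exists_mp π hene
        rcases eq_or_ne u v with rfl | huv
        · rw [← hval, hπv]
        · have h1 : tf < π u := hπa u (Finset.mem_erase.2 ⟨huv, hu⟩)
          have h2 : t < (π u : ℕ) := h1
          omega
      have hvfv : π.symm ⟨t, htn⟩ = v := by
        rw [show (⟨t, htn⟩ : Fin n) = tf from rfl, ← hπv, Equiv.symm_apply_apply]
      rw [C_eq_of_mp π hmpt htn, hvfv]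
      have hsub : Cand S π v t (Rev π M t)
          ⊆ insert e (E'.filter (fun f => ∀ u ∈ W f, tf < π u)) := by
        intro f hf
        rw [Cand, Finset.mem_filter] at hf
        obtain ⟨hfS, hvff, hnocov, hlater⟩ := hf
        rcases eq_or_ne f e with rfl | hfe
        · exact Finset.mem_insert_self _ _
        apply Finset.mem_insert_of_mem
        rw [Finset.mem_filter]
        refine ⟨Finset.mem_erase.2 ⟨hfe, Finset.mem_filter.2 ⟨hfS, hvff⟩⟩, ?_⟩
        intro u hu
        simp only [hWdef] at hu
        obtain ⟨g, hg, hug⟩ := Finset.mem_biUnion.1 hu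
        obtain ⟨hgM, b, hbf, hbg⟩ := Finset.mem_filter.1 hg
        obtain ⟨hbv, hbff⟩ := Finset.mem_erase.1 hbf
        have hgrev : g ∉ Rev π M t := fun hrev => hnocov b hbff g hrev hbg
        have hmpg : t ≤ mp π g := by
          by_contra hcon
          exact hgrev (Finset.mem_filter.2 ⟨hgM, by omega⟩)
        have hule : mp π g ≤ (π u : ℕ) := mp_le π hug
        have hune : (π u : ℕ) ≠ t := by
          intro heq
          have huv : u = v := by
            have h' : π u = tf := Fin.ext heq
            rw [← hπv] at h'
            exact π.injective h'
          subst huv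
          have hge : g = e := pm_cover_unique hM hgM he hug hve
          subst hge
          exact hfe (pair_unique hS hfS (pm_sub hM he) hvff hve hbff hbg (Ne.symm hbv))
        have : t < (π u : ℕ) := by omega
        exact Fin.lt_def.2 this
      calc (Cand S π v t (Rev π M t)).card
          ≤ (insert e (E'.filter (fun f => ∀ u ∈ W f, tf < π u))).card :=
            Finset.card_le_card hsub
        _ ≤ (E'.filter (fun f => ∀ u ∈ W f, tf < π u)).card + 1 :=
            Finset.card_insert_le _ _
        _ = 1 + P π := by simp only [hPdef]; omega
    set G := univ.filter
      (fun π : Equiv.Perm (Fin n) => π v = tf ∧ ∀ a ∈ e.erase v, tf < π a) with hG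
    have hfibG : univ.filter (fun π => key π = (v, t)) = G := by
      rw [hG]
      apply Finset.filter_congr
      intro π _
      exact hkeyiff π
    have hGcard : G.card = (n - 1 - t).descFactorial 2 * (n - 3).factorial := by
      rw [hG]
      have h := card_perm_prescribed v tf (e.erase v) (Finset.notMem_erase v e)
      rw [Finset.card_erase_of_mem hve, hecard] at h
      have h1 : (3:ℕ) - 1 = 2 := by norm_num
      have h2 : n - 1 - 2 = n - 3 := by omega
      rw [h1, h2] at h
      exact h
    have hcnt : ∀ f ∈ E',
        (univ.filter (fun π : Equiv.Perm (Fin n) =>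
            π v = tf ∧ ∀ a ∈ (e.erase v) ∪ W f, tf < π a)).card
          = (n - 1 - t).descFactorial 8 * (n - 9).factorial := by
      intro f hf
      obtain ⟨hcard8, hvnot⟩ := hDf f hf
      have h := card_perm_prescribed v tf ((e.erase v) ∪ W f) hvnot
      rw [hcard8] at h
      have h2 : n - 1 - 8 = n - 9 := by omega
      rw [h2] at h
      exact h
    have hcomb : ∀ f ∈ E', G.filter (fun π => ∀ u ∈ W f, tf < π u)
        = univ.filter (fun π : Equiv.Perm (Fin n) =>
            π v = tf ∧ ∀ a ∈ (e.erase v) ∪ W f, tf < π a) := by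
      intro f hf
      ext π
      rw [hG]
      simp only [Finset.mem_filter, Finset.mem_univ, true_and]
      constructor
      · rintro ⟨⟨h1, h2⟩, h3⟩
        refine ⟨h1, ?_⟩
        intro a ha
        rcases Finset.mem_union.1 ha with h | h
        · exact h2 a h
        · exact h3 a h
      · rintro ⟨h1, h2⟩
        exact ⟨⟨h1, fun a ha => h2 a (Finset.mem_union_left _ ha)⟩,
          fun u hu => h2 u (Finset.mem_union_right _ hu)⟩
    have hPsum : ∑ π ∈ G, (P π : ℕ)
        = E'.card * ((n - 1 - t).descFactorial 8 * (n - 9).factorial) := by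
      have h1 : ∀ π : Equiv.Perm (Fin n), P π
          = ∑ f ∈ E', if (∀ u ∈ W f, tf < π u) then 1 else 0 := by
        intro π
        rw [hPdef]
        simp only
        rw [Finset.card_filter]
      rw [Finset.sum_congr rfl (fun π _ => h1 π), Finset.sum_comm]
      have h2 : ∀ f ∈ E', (∑ π ∈ G, if (∀ u ∈ W f, tf < π u) then 1 else 0)
          = (n - 1 - t).descFactorial 8 * (n - 9).factorial := by
        intro f hf
        rw [← Finset.card_filter, hcomb f hf, hcnt f hf]
      rw [Finset.sum_congr rfl h2, Finset.sum_const, smul_eq_mul]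
    set z : ℝ := (((n - 1 - t : ℕ)) : ℝ) / ((n:ℝ) - 8) with hz
    have hzn : (0:ℝ) ≤ z := by
      apply div_nonneg (Nat.cast_nonneg _)
      linarith
    set b : ℝ := ((n:ℝ)/2) * z^6 with hbdef
    have hbnn : (0:ℝ) ≤ b := by positivity
    have hE'bound : (E'.card : ℝ) ≤ (n:ℝ)/2 := by
      have h1 : E'.card ≤ (S.filter (fun f => v ∈ f)).card :=
        Finset.card_le_card (Finset.erase_subset _ _)
      have h2 := degree_bound hS v
      have h3 : 2 * E'.card ≤ n := by omega
      have h4 : ((2 * E'.card : ℕ) : ℝ) ≤ (n : ℝ) := by exact_mod_cast h3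
      push_cast at h4
      linarith
    have hratio : (((n - 1 - t).descFactorial 8 * (n - 9).factorial : ℕ) : ℝ)
        ≤ (((n - 1 - t).descFactorial 2 * (n - 3).factorial : ℕ) : ℝ) * z^6 := by
      have h := ratio_bound (n := n) (r := n - 1 - t) hn
      have hcast : (((n - 1 - t).descFactorial 8 * (n-9).factorial * (n-8)^6 : ℕ) : ℝ)
          ≤ (((n - 1 - t).descFactorial 2 * (n-3).factorial * (n - 1 - t)^6 : ℕ) : ℝ) := by
        exact_mod_cast h
      push_cast at hcast
      have h8 : ((n - 8 : ℕ) : ℝ) = (n:ℝ) - 8 := by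
        have h8n : (8:ℕ) ≤ n := by omega
        push_cast [h8n]
        ring
      rw [h8] at hcast
      have hpos8 : (0:ℝ) < (n:ℝ) - 8 := by linarith
      have hpos : (0:ℝ) < ((n:ℝ) - 8)^6 := pow_pos hpos8 6
      rw [hz, div_pow, ← mul_div_assoc, le_div_iff₀ hpos]
      push_cast
      linarith
    have hfinal : ∑ π ∈ G, Real.log ((C S π M e : ℝ))
        ≤ (G.card : ℝ) * Real.log (1 + b) := by
      have hstep1 : ∑ π ∈ G, Real.log ((C S π M e : ℝ))
          ≤ ∑ π ∈ G, Real.log (1 + (P π : ℝ)) := by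
        apply Finset.sum_le_sum
        intro π hπ
        rw [hG] at hπ
        obtain ⟨-, h1, h2⟩ := Finset.mem_filter.1 hπ
        have hc1 : (0:ℝ) < (C S π M e : ℝ) := by
          have := C_pos hS hM he π
          exact_mod_cast this
        apply Real.log_le_log hc1
        have := hCb π h1 h2
        push_cast
        exact_mod_cast this
      refine hstep1.trans ?_
      apply jensen_log G _ (fun π _ => Nat.cast_nonneg _) b hbnn
      have hPsumR : ∑ π ∈ G, (P π : ℝ)
          = (E'.card : ℝ) * (((n - 1 - t).descFactorial 8 * (n - 9).factorial : ℕ) : ℝ) := by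
        rw [← Nat.cast_sum]
        exact_mod_cast congrArg (Nat.cast : ℕ → ℝ) hPsum
      rw [hPsumR, hGcard]
      calc (E'.card : ℝ) * (((n - 1 - t).descFactorial 8 * (n - 9).factorial : ℕ) : ℝ)
          ≤ ((n:ℝ)/2) * ((((n - 1 - t).descFactorial 2 * (n - 3).factorial : ℕ) : ℝ) * z^6) :=
            mul_le_mul hE'bound hratio (Nat.cast_nonneg _) (by positivity)
        _ = (((n - 1 - t).descFactorial 2 * (n - 3).factorial : ℕ) : ℝ) * b := by
            rw [hbdef]; ring
    rw [hfibG]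
    rw [← hGcard]
    exact hfinal
  calc ∑ vt ∈ e ×ˢ Finset.range n,
        ∑ π ∈ univ.filter (fun π => key π = vt), Real.log ((C S π M e : ℝ))
      ≤ ∑ vt ∈ e ×ˢ Finset.range n,
        (((n - 1 - vt.2).descFactorial 2 * (n-3).factorial : ℕ) : ℝ) *
          Real.log (1 + ((n:ℝ)/2) * ((((n - 1 - vt.2 : ℕ) : ℝ))/((n:ℝ)-8))^6) :=
        Finset.sum_le_sum hfiber
    _ = ∑ v ∈ e, ∑ t ∈ Finset.range n,
        (((n - 1 - t).descFactorial 2 * (n-3).factorial : ℕ) : ℝ) *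
          Real.log (1 + ((n:ℝ)/2) * ((((n - 1 - t : ℕ) : ℝ))/((n:ℝ)-8))^6) := by
        rw [Finset.sum_product]
    _ = 3 * ∑ t ∈ Finset.range n,
        (((n - 1 - t).descFactorial 2 * (n-3).factorial : ℕ) : ℝ) *
          Real.log (1 + ((n:ℝ)/2) * ((((n - 1 - t : ℕ) : ℝ))/((n:ℝ)-8))^6) := by
        rw [Finset.sum_const, nsmul_eq_mul, hecard]
        norm_num
    _ = 3 * ∑ s ∈ Finset.range n,
        ((s.descFactorial 2 * (n-3).factorial : ℕ) : ℝ) *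
          Real.log (1 + ((n:ℝ)/2) * (((s : ℕ) : ℝ)/((n:ℝ)-8))^6) := by
        congr 1
        exact Finset.sum_range_reflect
          (fun s => ((s.descFactorial 2 * (n-3).factorial : ℕ) : ℝ) *
            Real.log (1 + ((n:ℝ)/2) * (((s : ℕ) : ℝ)/((n:ℝ)-8))^6)) n
    _ = (n.factorial : ℝ) * Fbd n := by
        rw [Fbd, Finset.mul_sum, Finset.mul_sum]
        apply Finset.sum_congr rfl
        intro s hs
        have hfac : (n.factorial : ℝ)
            = (n:ℝ) * ((n:ℝ)-1) * ((n:ℝ)-2) * ((n-3).factorial : ℝ) := by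
          obtain ⟨m, rfl⟩ : ∃ m, n = m + 3 := ⟨n - 3, by omega⟩
          have h1 : m + 3 - 3 = m := by omega
          rw [h1]
          have : (m+3).factorial = (m+3) * ((m+2) * ((m+1) * m.factorial)) := by
            rw [show m + 3 = (m+2)+1 from rfl, Nat.factorial_succ,
              show m + 2 = (m+1)+1 from rfl, Nat.factorial_succ,
              show m + 1 = m+1 from rfl, Nat.factorial_succ]
          rw [this]
          push_cast
          ring
        have hdesc : ((s.descFactorial 2 : ℕ) : ℝ) = (s:ℝ) * ((s:ℝ) - 1) := by
          rcases Nat.eq_zero_or_pos s with rfl | hs0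
          · simp
          · have : s.descFactorial 2 = (s - 1) * s := by
              show s.descFactorial (1+1) = _
              rw [Nat.descFactorial_succ, Nat.descFactorial_one]
            rw [this]
            have h1 : ((s - 1 : ℕ) : ℝ) = (s:ℝ) - 1 := by
              have : (1:ℕ) ≤ s := hs0
              push_cast [this]
              ring
            push_cast [h1]
            ring
        have hD : (n:ℝ) * ((n:ℝ)-1) * ((n:ℝ)-2) ≠ 0 := by
          have : (9:ℝ) ≤ (n:ℝ) := hnR
          intro hcon
          rcases mul_eq_zero.1 hcon with h | h
          · rcases mul_eq_zero.1 h with h | h <;> nlinarith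
          · nlinarith
        rw [hfac]
        push_cast [hdesc]
        generalize Real.log (1 + ((n:ℝ)/2) * ((s:ℝ)/((n:ℝ)-8))^6) = LL
        field_simp [(show (n:ℝ)-1 ≠ 0 by intro h; linarith), (show (n:ℝ)-2 ≠ 0 by intro h; linarith), (show (n:ℝ) ≠ 0 by intro h; linarith)]
  done

/-- `log (1+y) ≤ 2 √y` for `y ≥ 0`. -/
lemma log_one_add_le_two_sqrt {y : ℝ} (hy : 0 ≤ y) :
    Real.log (1 + y) ≤ 2 * Real.sqrt y := by
  have h1 : Real.log (1 + y) = 2 * Real.log (Real.sqrt (1 + y)) := by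
    rw [Real.log_sqrt (by linarith)]
    ring
  have h2 : Real.log (Real.sqrt (1 + y)) ≤ Real.sqrt (1 + y) - 1 :=
    Real.log_le_sub_one_of_pos (Real.sqrt_pos.2 (by linarith))
  have h3 : Real.sqrt (1 + y) ≤ 1 + Real.sqrt y := by
    rw [show (1:ℝ) + y = 1 + y from rfl]
    have : (1:ℝ) + y ≤ (1 + Real.sqrt y)^2 := by
      have hs : Real.sqrt y ^ 2 = y := Real.sq_sqrt hy
      nlinarith [Real.sqrt_nonneg y]
    calc Real.sqrt (1 + y) ≤ Real.sqrt ((1 + Real.sqrt y)^2) := Real.sqrt_le_sqrt this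
      _ = 1 + Real.sqrt y := Real.sqrt_sq (by positivity)
  linarith

/-- `log (1+a) ≤ log a + 2/√a` for `a > 0`. -/
lemma log_one_add_le {a : ℝ} (ha : 0 < a) :
    Real.log (1 + a) ≤ Real.log a + 2 / Real.sqrt a := by
  have h2 : Real.log (1+a) = Real.log a + Real.log (1 + 1/a) := by
    rw [← Real.log_mul (ne_of_gt ha) (by positivity)]
    congr 1
    field_simp
    ring
  have h3 : Real.log (1 + 1/a) ≤ 2 * Real.sqrt (1/a) :=
    log_one_add_le_two_sqrt (by positivity)
  have h4 : Real.sqrt (1/a) = 1 / Real.sqrt a := by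
    rw [one_div, one_div, Real.sqrt_inv]
  rw [h4] at h3
  rw [h2]
  have h5 : 2 * (1 / Real.sqrt a) = 2 / Real.sqrt a := by ring
  linarith [h3]

/-- `log z ≤ (z^α - 1)/α` for `z > 0`, `α > 0`. -/
lemma log_le_rpow_div {z α : ℝ} (hz : 0 < z) (hα : 0 < α) :
    Real.log z ≤ (z ^ α - 1) / α := by
  have h1 : Real.log (z ^ α) ≤ z ^ α - 1 :=
    Real.log_le_sub_one_of_pos (Real.rpow_pos_of_pos hz α)
  rw [Real.log_rpow hz] at h1
  rw [le_div_iff₀ hα]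
  nlinarith [h1]

/-- telescoping step: `q * s^(q-1) + s^q ≤ (s+1)^q` for `q > 1`. -/
lemma rpow_step {q : ℝ} (hq : 1 < q) (s : ℕ) :
    q * (s:ℝ) ^ (q - 1) + (s:ℝ) ^ q ≤ ((s:ℝ) + 1) ^ q := by
  rcases Nat.eq_zero_or_pos s with rfl | hs
  · simp only [Nat.cast_zero, zero_add, Real.one_rpow]
    rw [Real.zero_rpow (sub_pos.2 hq).ne', Real.zero_rpow (by linarith : (0:ℝ) < q).ne']
    norm_num
  · have hs0 : (0:ℝ) < (s:ℝ) := by exact_mod_cast hs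
    have hbern : 1 + q * (1/(s:ℝ)) ≤ (1 + 1/(s:ℝ)) ^ q := by
      apply one_add_mul_self_le_rpow_one_add ?_ (le_of_lt hq)
      have : (0:ℝ) ≤ 1/(s:ℝ) := by positivity
      linarith
    have hmul : ((s:ℝ) + 1) ^ q = (s:ℝ) ^ q * (1 + 1/(s:ℝ)) ^ q := by
      rw [← Real.mul_rpow (le_of_lt hs0) (by positivity)]
      congr 1
      field_simp
    rw [hmul]
    have h2 : (s:ℝ) ^ q * (1 + q * (1/(s:ℝ))) ≤ (s:ℝ) ^ q * (1 + 1/(s:ℝ)) ^ q :=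
      mul_le_mul_of_nonneg_left hbern (Real.rpow_nonneg (le_of_lt hs0) q)
    refine le_trans ?_ h2
    have h3 : (s:ℝ) ^ q * (1 + q * (1/(s:ℝ))) = (s:ℝ)^q + q * ((s:ℝ)^q / (s:ℝ)) := by
      field_simp
    have h4 : (s:ℝ)^q / (s:ℝ) = (s:ℝ) ^ (q - 1) := by
      rw [Real.rpow_sub hs0, Real.rpow_one]
    rw [h3, h4]
    linarith

lemma sum_rpow_le {α : ℝ} (hα : 0 < α) (n : ℕ) :
    ∑ s ∈ Finset.range n, ((s:ℝ)) ^ ((2:ℝ)+α) ≤ (n:ℝ) ^ ((3:ℝ)+α) / (3+α) := by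
  have hq : (1:ℝ) < 3 + α := by linarith
  have hterm : ∀ s ∈ Finset.range n,
      ((s:ℝ)) ^ ((2:ℝ)+α) ≤ (((s:ℝ)+1) ^ ((3:ℝ)+α) - (s:ℝ) ^ ((3:ℝ)+α)) / (3+α) := by
    intro s _
    have h := rpow_step hq s
    have h1 : (3:ℝ) + α - 1 = 2 + α := by ring
    rw [h1] at h
    rw [le_div_iff₀ (by linarith : (0:ℝ) < 3+α)]
    linarith
  calc ∑ s ∈ Finset.range n, ((s:ℝ)) ^ ((2:ℝ)+α)
      ≤ ∑ s ∈ Finset.range n, (((s:ℝ)+1) ^ ((3:ℝ)+α) - (s:ℝ) ^ ((3:ℝ)+α)) / (3+α) :=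
        Finset.sum_le_sum hterm
    _ = (∑ s ∈ Finset.range n, (((s+1:ℕ):ℝ) ^ ((3:ℝ)+α) - ((s:ℕ):ℝ) ^ ((3:ℝ)+α))) / (3+α) := by
        rw [Finset.sum_div]
        apply Finset.sum_congr rfl
        intro s _
        push_cast
        ring_nf
    _ = (((n:ℕ):ℝ) ^ ((3:ℝ)+α) - ((0:ℕ):ℝ) ^ ((3:ℝ)+α)) / (3+α) := by
        rw [Finset.sum_range_sub (fun s => ((s:ℕ):ℝ) ^ ((3:ℝ)+α))]
    _ ≤ (n:ℝ) ^ ((3:ℝ)+α) / (3+α) := by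
        rw [Nat.cast_zero, Real.zero_rpow (by linarith)]
        norm_num

/-- harmonic-type bound. -/
lemma harmonic_le' {n : ℕ} (hn : 2 ≤ n) :
    ∑ s ∈ Finset.range n, (if 2 ≤ s then 1/(s:ℝ) else 0) ≤ Real.log ((n:ℝ) - 1) := by
  induction n with
  | zero => omega
  | succ k ih =>
    rcases Nat.lt_or_ge k 2 with hk | hk
    · -- k+1 = 2 (since 2 ≤ k+1, k < 2 means k = 1)
      have hk1 : k = 1 := by omega
      subst hk1
      rw [Finset.sum_range_succ, Finset.sum_range_one]
      norm_num
    · have hik := ih hk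
      rw [Finset.sum_range_succ]
      have hk2 : (2:ℝ) ≤ (k:ℝ) := by exact_mod_cast hk
      have hstep : 1/(k:ℝ) ≤ Real.log (k:ℝ) - Real.log ((k:ℝ) - 1) := by
        have h1 : Real.log (((k:ℝ)-1)/(k:ℝ)) ≤ ((k:ℝ)-1)/(k:ℝ) - 1 :=
          Real.log_le_sub_one_of_pos (div_pos (by linarith) (by linarith))
        rw [Real.log_div (ne_of_gt (by linarith : (0:ℝ) < (k:ℝ)-1))
          (ne_of_gt (by linarith : (0:ℝ) < (k:ℝ)))] at h1
        have h2 : ((k:ℝ)-1)/(k:ℝ) - 1 = -(1/(k:ℝ)) := by field_simp; ring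
        linarith [h1, h2 ▸ h1]
      have : (if 2 ≤ k then 1/(k:ℝ) else 0) = 1/(k:ℝ) := if_pos hk
      rw [this]
      have hcast : ((k:ℕ):ℝ) + 1 - 1 = (k:ℝ) := by push_cast; ring
      calc ∑ s ∈ Finset.range k, (if 2 ≤ s then 1/(s:ℝ) else 0) + 1/(k:ℝ)
          ≤ Real.log ((k:ℝ) - 1) + (Real.log (k:ℝ) - Real.log ((k:ℝ) - 1)) := by
            linarith
        _ = Real.log (k:ℝ) := by ring
        _ = Real.log (((k+1:ℕ):ℝ) - 1) := by push_cast; ring_nf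

lemma harmonic_le {n : ℕ} (hn : 2 ≤ n) :
    ∑ s ∈ Finset.range n, (if 2 ≤ s then 1/(s:ℝ) else 0) ≤ Real.log (n:ℝ) := by
  refine (harmonic_le' hn).trans ?_
  apply Real.log_le_log (by
    have : (2:ℝ) ≤ (n:ℝ) := by exact_mod_cast hn
    linarith)
  linarith

lemma weight_sum (n : ℕ) :
    ∑ s ∈ Finset.range n, (3*(s:ℝ)*((s:ℝ)-1)) = (n:ℝ)*((n:ℝ)-1)*((n:ℝ)-2) := by
  induction n with
  | zero => simp
  | succ k ih =>
    rw [Finset.sum_range_succ, ih]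
    push_cast
    ring

lemma Fbd_decomp {α : ℝ} (hα : 0 < α) (hα1 : α ≤ 1) {n : ℕ} (hn : 9 ≤ n) :
    Fbd n ≤ Real.log ((n:ℝ)/2) - 6/(3+α)
      + (18/(α*(3+α))) * ((n:ℝ)^2/(((n:ℝ)-1)*((n:ℝ)-2)) - 1)
      + 6 * Real.log ((n:ℝ)/((n:ℝ)-8))
      + 6 * Real.sqrt 2 * Real.log (n:ℝ) / Real.sqrt (n:ℝ) := by
  have hnR : (9:ℝ) ≤ (n:ℝ) := by exact_mod_cast hn
  set N := (n:ℝ) with hNdef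
  have hN0 : (0:ℝ) < N := by linarith
  have hN8 : (0:ℝ) < N - 8 := by linarith
  have hD : (0:ℝ) < N*(N-1)*(N-2) :=
    mul_pos (mul_pos hN0 (by linarith)) (by linarith)
  set D := N*(N-1)*(N-2) with hDdef
  set q : ℕ → ℝ := fun s => 3*(s:ℝ)*((s:ℝ)-1)/D with hq
  have hqnn : ∀ s : ℕ, 0 ≤ q s := by
    intro s
    rcases Nat.eq_zero_or_pos s with rfl | hs
    · simp [hq]
    · have h1 : (1:ℝ) ≤ (s:ℝ) := by exact_mod_cast hs
      apply div_nonneg _ (le_of_lt hD)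
      nlinarith
  have hqsum : ∑ s ∈ Finset.range n, q s = 1 := by
    simp only [hq]
    rw [← Finset.sum_div, weight_sum]
    rw [div_self (ne_of_gt hD)]
  -- pointwise bound
  have hpoint : ∀ s ∈ Finset.range n,
      q s * Real.log (1 + (N/2) * (((s:ℝ)/(N-8))^6))
        ≤ q s * Real.log (N/2) + 6*(q s * Real.log ((s:ℝ)/N))
          + 6*Real.log (N/(N-8)) * q s
          + q s * (2/Real.sqrt ((N/2) * (((s:ℝ)/(N-8))^6))) := by
    intro s hs
    rcases Nat.lt_or_ge s 2 with h2 | h2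
    · interval_cases s <;> simp [hq]
    · have hs2 : (2:ℝ) ≤ (s:ℝ) := by exact_mod_cast h2
      have hs0 : (0:ℝ) < (s:ℝ) := by linarith
      have hapos : (0:ℝ) < (N/2) * (((s:ℝ)/(N-8))^6) :=
        mul_pos (by linarith) (pow_pos (div_pos hs0 hN8) 6)
      have h1 := log_one_add_le hapos
      have h2' : Real.log ((N/2) * (((s:ℝ)/(N-8))^6))
          = Real.log (N/2) + 6*Real.log ((s:ℝ)/(N-8)) := by
        rw [Real.log_mul (by linarith : N/2 ≠ 0) (ne_of_gt (pow_pos (div_pos hs0 hN8) 6)),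
          Real.log_pow]
        push_cast
        ring
      have h3 : Real.log ((s:ℝ)/(N-8)) = Real.log ((s:ℝ)/N) + Real.log (N/(N-8)) := by
        rw [← Real.log_mul (ne_of_gt (div_pos hs0 hN0)) (ne_of_gt (div_pos hN0 hN8))]
        congr 1
        field_simp
      have hineq : Real.log (1 + (N/2) * (((s:ℝ)/(N-8))^6))
          ≤ Real.log (N/2) + 6*Real.log ((s:ℝ)/N) + 6*Real.log (N/(N-8))
            + 2/Real.sqrt ((N/2) * (((s:ℝ)/(N-8))^6)) := by
        rw [h3] at h2'
        linarith
      calc q s * Real.log (1 + (N/2) * (((s:ℝ)/(N-8))^6))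
          ≤ q s * (Real.log (N/2) + 6*Real.log ((s:ℝ)/N) + 6*Real.log (N/(N-8))
              + 2/Real.sqrt ((N/2) * (((s:ℝ)/(N-8))^6))) :=
            mul_le_mul_of_nonneg_left hineq (hqnn s)
        _ = q s * Real.log (N/2) + 6*(q s * Real.log ((s:ℝ)/N))
            + 6*Real.log (N/(N-8)) * q s
            + q s * (2/Real.sqrt ((N/2) * (((s:ℝ)/(N-8))^6))) := by ring
  -- sum splits
  have hFsplit : Fbd n ≤ Real.log (N/2)
      + 6 * (∑ s ∈ Finset.range n, q s * Real.log ((s:ℝ)/N))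
      + 6 * Real.log (N/(N-8))
      + ∑ s ∈ Finset.range n, q s * (2/Real.sqrt ((N/2) * (((s:ℝ)/(N-8))^6))) := by
    have h0 : Fbd n = ∑ s ∈ Finset.range n,
        q s * Real.log (1 + (N/2) * (((s:ℝ)/(N-8))^6)) := by
      rw [Fbd]
    rw [h0]
    calc ∑ s ∈ Finset.range n, q s * Real.log (1 + (N/2) * (((s:ℝ)/(N-8))^6))
        ≤ ∑ s ∈ Finset.range n, (q s * Real.log (N/2) + 6*(q s * Real.log ((s:ℝ)/N))
            + 6*Real.log (N/(N-8)) * q s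
            + q s * (2/Real.sqrt ((N/2) * (((s:ℝ)/(N-8))^6)))) :=
          Finset.sum_le_sum hpoint
      _ = (∑ s ∈ Finset.range n, q s) * Real.log (N/2)
          + 6 * (∑ s ∈ Finset.range n, q s * Real.log ((s:ℝ)/N))
          + 6 * Real.log (N/(N-8)) * (∑ s ∈ Finset.range n, q s)
          + ∑ s ∈ Finset.range n, q s * (2/Real.sqrt ((N/2) * (((s:ℝ)/(N-8))^6))) := by
          rw [Finset.sum_add_distrib, Finset.sum_add_distrib, Finset.sum_add_distrib,
            ← Finset.sum_mul, ← Finset.mul_sum, ← Finset.mul_sum]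
      _ = Real.log (N/2)
          + 6 * (∑ s ∈ Finset.range n, q s * Real.log ((s:ℝ)/N))
          + 6 * Real.log (N/(N-8))
          + ∑ s ∈ Finset.range n, q s * (2/Real.sqrt ((N/2) * (((s:ℝ)/(N-8))^6))) := by
          rw [hqsum]
          ring
  -- middle bound
  have hq_rpow : ∑ s ∈ Finset.range n, q s * ((s:ℝ)/N)^α
      ≤ (3/(3+α)) * (N^2/((N-1)*(N-2))) := by
    have hDN : (0:ℝ) < D * N^α := mul_pos hD (Real.rpow_pos_of_pos hN0 α)
    have hterm : ∀ s ∈ Finset.range n,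
        q s * ((s:ℝ)/N)^α ≤ (3/(D * N^α)) * (s:ℝ)^((2:ℝ)+α) := by
      intro s _
      rcases Nat.eq_zero_or_pos s with rfl | hs1
      · simp only [hq, Nat.cast_zero]
        rw [Real.zero_rpow (by linarith : (2:ℝ)+α ≠ 0)]
        simp
      · have hs0 : (0:ℝ) < (s:ℝ) := by exact_mod_cast hs1
        have hsplitpow : (s:ℝ)^((2:ℝ)+α) = (s:ℝ)^(2:ℕ) * (s:ℝ)^α := by
          rw [Real.rpow_add hs0]
          congr 1
          rw [← Real.rpow_natCast (s:ℝ) 2]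
          norm_num
        have hdivrpow : ((s:ℝ)/N)^α = (s:ℝ)^α / N^α :=
          Real.div_rpow (le_of_lt hs0) (le_of_lt hN0) α
        rw [hdivrpow, hsplitpow]
        rw [hq]
        simp only
        rw [div_mul_div_comm,
          show 3 / (D * N ^ α) * ((s:ℝ)^(2:ℕ) * (s:ℝ)^α)
            = (3*((s:ℝ)^(2:ℕ)*(s:ℝ)^α))/(D*N^α) by ring,
          div_le_div_iff_of_pos_right hDN]
        have hrnn : (0:ℝ) ≤ (s:ℝ)^α := Real.rpow_nonneg (le_of_lt hs0) α
        have h1 : (s:ℝ)*((s:ℝ)-1) ≤ (s:ℝ)^(2:ℕ) := by nlinarith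
        nlinarith [h1, hrnn]
    calc ∑ s ∈ Finset.range n, q s * ((s:ℝ)/N)^α
        ≤ ∑ s ∈ Finset.range n, (3/(D * N^α)) * (s:ℝ)^((2:ℝ)+α) :=
          Finset.sum_le_sum hterm
      _ = (3/(D * N^α)) * ∑ s ∈ Finset.range n, (s:ℝ)^((2:ℝ)+α) := by
          rw [Finset.mul_sum]
      _ ≤ (3/(D * N^α)) * (N^((3:ℝ)+α) / (3+α)) := by
          apply mul_le_mul_of_nonneg_left (sum_rpow_le hα n)
          positivity
      _ = (3/(3+α)) * (N^2/((N-1)*(N-2))) := by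
          have h1 : N^((3:ℝ)+α) = N^(3:ℕ) * N^α := by
            rw [Real.rpow_add hN0]
            congr 1
            rw [← Real.rpow_natCast N 3]
            norm_num
          rw [h1, hDdef]
          have hNα : (0:ℝ) < N^α := Real.rpow_pos_of_pos hN0 α
          have e1 : N ≠ 0 := ne_of_gt hN0
          have e2 : N - 1 ≠ 0 := ne_of_gt (by linarith)
          have e3 : N - 2 ≠ 0 := ne_of_gt (by linarith)
          have e4 : N^α ≠ 0 := ne_of_gt hNα
          have e5 : (3:ℝ)+α ≠ 0 := ne_of_gt (by linarith)
          field_simp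
  have hmid : ∑ s ∈ Finset.range n, q s * Real.log ((s:ℝ)/N)
      ≤ (1/α)*((3/(3+α)) * (N^2/((N-1)*(N-2))) - 1) := by
    have hterm : ∀ s ∈ Finset.range n, q s * Real.log ((s:ℝ)/N)
        ≤ (1/α) * (q s * ((s:ℝ)/N)^α - q s) := by
      intro s _
      rcases Nat.eq_zero_or_pos s with rfl | hs1
      · simp [hq]
      · have hs0 : (0:ℝ) < (s:ℝ) := by exact_mod_cast hs1
        have hz : (0:ℝ) < (s:ℝ)/N := div_pos hs0 hN0
        have hlog := log_le_rpow_div hz hα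
        calc q s * Real.log ((s:ℝ)/N) ≤ q s * ((((s:ℝ)/N)^α - 1)/α) :=
              mul_le_mul_of_nonneg_left hlog (hqnn s)
          _ = (1/α) * (q s * ((s:ℝ)/N)^α - q s) := by
              field_simp
    calc ∑ s ∈ Finset.range n, q s * Real.log ((s:ℝ)/N)
        ≤ ∑ s ∈ Finset.range n, (1/α) * (q s * ((s:ℝ)/N)^α - q s) :=
          Finset.sum_le_sum hterm
      _ = (1/α) * ((∑ s ∈ Finset.range n, q s * ((s:ℝ)/N)^α) - 1) := by
          rw [← Finset.mul_sum, Finset.sum_sub_distrib, hqsum]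
      _ ≤ (1/α)*((3/(3+α)) * (N^2/((N-1)*(N-2))) - 1) := by
          apply mul_le_mul_of_nonneg_left _ (by positivity)
          linarith [hq_rpow]
  -- last bound
  have hlast : ∑ s ∈ Finset.range n, q s * (2/Real.sqrt ((N/2) * (((s:ℝ)/(N-8))^6)))
      ≤ 6 * Real.sqrt 2 * Real.log N / Real.sqrt N := by
    set A := Real.sqrt N with hA
    set B := Real.sqrt 2 with hB
    have hApos : (0:ℝ) < A := Real.sqrt_pos.2 hN0
    have hBpos : (0:ℝ) < B := Real.sqrt_pos.2 (by norm_num)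
    have hterm : ∀ s ∈ Finset.range n,
        q s * (2/Real.sqrt ((N/2) * (((s:ℝ)/(N-8))^6)))
          ≤ (6*B/A) * (if 2 ≤ s then 1/(s:ℝ) else 0) := by
      intro s _
      rcases Nat.lt_or_ge s 2 with h2 | h2
      · interval_cases s <;> simp [hq]
      · rw [if_pos h2]
        have hs2 : (2:ℝ) ≤ (s:ℝ) := by exact_mod_cast h2
        have hs0 : (0:ℝ) < (s:ℝ) := by linarith
        have hsqeq : Real.sqrt ((N/2) * (((s:ℝ)/(N-8))^6))
            = (A/B) * ((s:ℝ)/(N-8))^3 := by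
          rw [show (((s:ℝ)/(N-8))^6) = (((s:ℝ)/(N-8))^3)^2 by ring,
            Real.sqrt_mul (by linarith : (0:ℝ) ≤ N/2),
            Real.sqrt_sq (by positivity),
            show N/2 = N/2 from rfl]
          congr 1
          rw [hA, hB, ← Real.sqrt_div (by linarith : (0:ℝ) ≤ N)]
        rw [hsqeq]
        have hABpos : (0:ℝ) < (A/B) * ((s:ℝ)/(N-8))^3 :=
          mul_pos (div_pos hApos hBpos) (pow_pos (div_pos hs0 hN8) 3)
        have hfrac : 2 / ((A/B) * ((s:ℝ)/(N-8))^3)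
            = 2*B*(N-8)^3/(A*(s:ℝ)^3) := by
          field_simp
        rw [hfrac]
        rw [hq]
        simp only
        rw [div_mul_div_comm]
        have hrhs : (6*B/A) * (1/(s:ℝ)) = 6*B/(A*(s:ℝ)) := by
          field_simp
        rw [hrhs]
        rw [div_le_div_iff₀ (by positivity) (by positivity)]
        have hcube : (N-8)^3 ≤ D := by
          rw [hDdef]
          nlinarith
        have hkey : ((s:ℝ)-1)*(N-8)^3 ≤ (s:ℝ)*D := by
          have h1 : ((s:ℝ)-1) ≤ (s:ℝ) := by linarith
          calc ((s:ℝ)-1)*(N-8)^3 ≤ (s:ℝ)*(N-8)^3 :=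
                mul_le_mul_of_nonneg_right h1 (by positivity)
            _ ≤ (s:ℝ)*D := mul_le_mul_of_nonneg_left hcube (by linarith)
        have hmul := mul_le_mul_of_nonneg_left hkey
          (show (0:ℝ) ≤ 6*B*A*(s:ℝ)^2 by positivity)
        nlinarith [hmul]
    calc ∑ s ∈ Finset.range n, q s * (2/Real.sqrt ((N/2) * (((s:ℝ)/(N-8))^6)))
        ≤ ∑ s ∈ Finset.range n, (6*B/A) * (if 2 ≤ s then 1/(s:ℝ) else 0) :=
          Finset.sum_le_sum hterm
      _ = (6*B/A) * ∑ s ∈ Finset.range n, (if 2 ≤ s then 1/(s:ℝ) else 0) := by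
          rw [Finset.mul_sum]
      _ ≤ (6*B/A) * Real.log N := by
          apply mul_le_mul_of_nonneg_left (harmonic_le (by omega)) (by positivity)
      _ = 6 * B * Real.log N / A := by
          field_simp
  -- combine
  have hfin := hFsplit
  have hmid6 : 6 * (∑ s ∈ Finset.range n, q s * Real.log ((s:ℝ)/N))
      ≤ - (6/(3+α)) + (18/(α*(3+α))) * (N^2/((N-1)*(N-2)) - 1) := by
    have h1 : ∀ R : ℝ, 6 * ((1/α)*((3/(3+α)) * R - 1))
        = - (6/(3+α)) + (18/(α*(3+α))) * (R - 1) := by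
      intro R
      have e5 : (3:ℝ)+α ≠ 0 := ne_of_gt (by linarith)
      field_simp
      ring
    linarith [hmid, h1 (N^2/((N-1)*(N-2)))]
  linarith [hfin, hmid6, hlast]

open Filter in
lemma Fbd_le (ε : ℝ) (hε : 0 < ε) :
    ∀ᶠ (n : ℕ) in Filter.atTop,
      Fbd n ≤ Real.log (1+ε) + Real.log (n:ℝ) - Real.log 2 - 2 := by
  classical
  set α := min ε 1 / 2 with hαdef
  have hα0 : 0 < α := by
    rw [hαdef]
    have : 0 < min ε 1 := lt_min hε one_pos
    linarith
  have hα1 : α ≤ 1 := by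
    rw [hαdef]
    have : min ε 1 ≤ 1 := min_le_right _ _
    linarith
  have h3α : (0:ℝ) < 3 + α := by linarith
  -- δ > 0
  have hδ0 : 2*α/(3+α) < Real.log (1+ε) := by
    have hexp : ∀ x : ℝ, x < 1 → Real.exp x ≤ 1/(1-x) := by
      intro x hx
      have h1 : 1 - x ≤ Real.exp (-x) := by
        have := Real.add_one_le_exp (-x)
        linarith
      have h2 : (0:ℝ) < 1 - x := by linarith
      have h3 : Real.exp (-x) = (Real.exp x)⁻¹ := Real.exp_neg x
      rw [h3] at h1
      have h4 := Real.exp_pos x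
      rw [le_div_iff₀ h2]
      have := mul_le_mul_of_nonneg_left h1 (le_of_lt h4)
      rw [mul_inv_cancel₀ (ne_of_gt h4)] at this
      linarith
    have hkey : min ε 1 / 3 ≤ Real.log (1+ε) := by
      rcases le_total ε 1 with h | h
      · rw [min_eq_left h]
        rw [Real.le_log_iff_exp_le (by linarith)]
        have h1 := hexp (ε/3) (by linarith)
        have h2 : 1/(1-ε/3) ≤ 1 + ε := by
          rw [div_le_iff₀ (by linarith)]
          nlinarith
        linarith
      · rw [min_eq_right h]
        have h1 : Real.log 2 ≤ Real.log (1+ε) :=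
          Real.log_le_log (by norm_num) (by linarith)
        have h2 : (1:ℝ)/3 ≤ Real.log 2 := by
          rw [Real.le_log_iff_exp_le (by norm_num)]
          have h3 := hexp (1/3) (by norm_num)
          have h4 : 1/(1-(1:ℝ)/3) ≤ 2 := by norm_num
          linarith
        linarith
    have h2 : 2*α/(3+α) < 2*α/3 := by
      apply div_lt_div_of_pos_left (by linarith) (by norm_num) (by linarith)
    have h3 : 2*α/3 = min ε 1 / 3 := by rw [hαdef]; ring
    linarith
  set δ := Real.log (1+ε) - 2*α/(3+α) with hδdef
  -- error terms tendsto 0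
  have htN : Tendsto (fun n : ℕ => (n:ℝ)) atTop atTop := tendsto_natCast_atTop_atTop
  have hterm1 : Tendsto (fun n : ℕ =>
      (18/(α*(3+α))) * ((n:ℝ)^2/(((n:ℝ)-1)*((n:ℝ)-2)) - 1)) atTop (nhds 0) := by
    apply squeeze_zero' (g := fun n : ℕ => (108/(α*(3+α))) / (n:ℝ))
    · filter_upwards [eventually_ge_atTop 9] with n hn
      have hnR : (9:ℝ) ≤ (n:ℝ) := by exact_mod_cast hn
      have h1 : (0:ℝ) < ((n:ℝ)-1)*((n:ℝ)-2) :=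
        mul_pos (by linarith) (by linarith)
      have h2 : ((n:ℝ)-1)*((n:ℝ)-2) ≤ (n:ℝ)^2 := by nlinarith
      have h3 : (1:ℝ) ≤ (n:ℝ)^2/(((n:ℝ)-1)*((n:ℝ)-2)) := by
        rw [le_div_iff₀ h1]; linarith
      have h4 : (0:ℝ) ≤ 18/(α*(3+α)) := by positivity
      nlinarith
    · filter_upwards [eventually_ge_atTop 9] with n hn
      have hnR : (9:ℝ) ≤ (n:ℝ) := by exact_mod_cast hn
      have h1 : (0:ℝ) < ((n:ℝ)-1)*((n:ℝ)-2) :=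
        mul_pos (by linarith) (by linarith)
      have hfrac : (n:ℝ)^2/(((n:ℝ)-1)*((n:ℝ)-2)) - 1 ≤ 6/(n:ℝ) := by
        rw [div_sub_one (ne_of_gt h1), div_le_div_iff₀ h1 (by linarith)]
        nlinarith
      have h4 : (0:ℝ) ≤ 18/(α*(3+α)) := by positivity
      calc (18/(α*(3+α))) * ((n:ℝ)^2/(((n:ℝ)-1)*((n:ℝ)-2)) - 1)
          ≤ (18/(α*(3+α))) * (6/(n:ℝ)) := mul_le_mul_of_nonneg_left hfrac h4
        _ = (108/(α*(3+α))) / (n:ℝ) := by ring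
    · exact Tendsto.div_atTop tendsto_const_nhds htN
  have hterm2 : Tendsto (fun n : ℕ => 6 * Real.log ((n:ℝ)/((n:ℝ)-8))) atTop (nhds 0) := by
    apply squeeze_zero' (g := fun n : ℕ => 48/((n:ℝ)-8))
    · filter_upwards [eventually_ge_atTop 9] with n hn
      have hnR : (9:ℝ) ≤ (n:ℝ) := by exact_mod_cast hn
      have h1 : (1:ℝ) ≤ (n:ℝ)/((n:ℝ)-8) := by
        rw [le_div_iff₀ (by linarith)]; linarith
      have := Real.log_nonneg h1
      linarith
    · filter_upwards [eventually_ge_atTop 9] with n hn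
      have hnR : (9:ℝ) ≤ (n:ℝ) := by exact_mod_cast hn
      have hpos : (0:ℝ) < (n:ℝ)/((n:ℝ)-8) := div_pos (by linarith) (by linarith)
      have h1 := Real.log_le_sub_one_of_pos hpos
      have h2 : (n:ℝ)/((n:ℝ)-8) - 1 = 8/((n:ℝ)-8) := by
        rw [div_sub_one (ne_of_gt (by linarith : (0:ℝ) < (n:ℝ)-8))]
        ring_nf
      have h3 : 48/((n:ℝ)-8) = 6*(8/((n:ℝ)-8)) := by ring
      rw [h2] at h1
      linarith [h1, h3]
    · apply Tendsto.div_atTop tendsto_const_nhds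
      apply tendsto_atTop_add_const_right _ _ htN
  have hterm3 : Tendsto (fun n : ℕ =>
      6 * Real.sqrt 2 * Real.log (n:ℝ) / Real.sqrt (n:ℝ)) atTop (nhds 0) := by
    have hbase : Tendsto (fun x : ℝ => Real.log x / x ^ ((1:ℝ)/2)) atTop (nhds 0) :=
      (isLittleO_log_rpow_atTop (by norm_num : (0:ℝ) < 1/2)).tendsto_div_nhds_zero
    have hcomp : Tendsto (fun n : ℕ => Real.log (n:ℝ) / (n:ℝ) ^ ((1:ℝ)/2)) atTop (nhds 0) :=
      hbase.comp htN
    have heq : (fun n : ℕ => 6 * Real.sqrt 2 * Real.log (n:ℝ) / Real.sqrt (n:ℝ))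
        = (fun n : ℕ => (6 * Real.sqrt 2) * (Real.log (n:ℝ) / (n:ℝ) ^ ((1:ℝ)/2))) := by
      funext n
      rw [show Real.sqrt (n:ℝ) = (n:ℝ) ^ ((1:ℝ)/2) from Real.sqrt_eq_rpow _]
      ring
    rw [heq]
    simpa using hcomp.const_mul (6 * Real.sqrt 2)
  have hsum : Tendsto (fun n : ℕ =>
      (18/(α*(3+α))) * ((n:ℝ)^2/(((n:ℝ)-1)*((n:ℝ)-2)) - 1)
      + 6 * Real.log ((n:ℝ)/((n:ℝ)-8))
      + 6 * Real.sqrt 2 * Real.log (n:ℝ) / Real.sqrt (n:ℝ)) atTop (nhds 0) := by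
    have := (hterm1.add hterm2).add hterm3
    simpa using this
  have hev : ∀ᶠ n : ℕ in atTop,
      (18/(α*(3+α))) * ((n:ℝ)^2/(((n:ℝ)-1)*((n:ℝ)-2)) - 1)
      + 6 * Real.log ((n:ℝ)/((n:ℝ)-8))
      + 6 * Real.sqrt 2 * Real.log (n:ℝ) / Real.sqrt (n:ℝ) ≤ δ := by
    have hδpos : (0:ℝ) < δ := by rw [hδdef]; linarith
    filter_upwards [hsum.eventually (eventually_le_nhds hδpos)] with n hn
    exact hn
  filter_upwards [hev, eventually_ge_atTop 9] with n h1 h9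
  have hdec := Fbd_decomp hα0 hα1 h9
  have hnR : (9:ℝ) ≤ (n:ℝ) := by exact_mod_cast h9
  have hlogN2 : Real.log ((n:ℝ)/2) = Real.log (n:ℝ) - Real.log 2 :=
    Real.log_div (by positivity) (by norm_num)
  have halg : 6/(3+α) = 2 - 2*α/(3+α) := by
    field_simp
    ring
  rw [hlogN2] at hdec
  rw [hδdef] at h1
  linarith [hdec, h1, halg]


lemma log_card_PMs_le {S : Finset (Finset (Fin n))} (hS : IsSTS n S) (h3 : 3 ∣ n)
    (hn : 9 ≤ n) (hN : 1 ≤ (PMs n S).card) :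
    Real.log (((PMs n S).card : ℝ)) ≤ ((n / 3 : ℕ) : ℝ) * Fbd n := by
  classical
  set N := (PMs n S).card with hNdef
  set I := (PMs n S) ×ˢ (univ : Finset (Equiv.Perm (Fin n))) with hI
  set x : Finset (Finset (Fin n)) × Equiv.Perm (Fin n) → ℝ :=
    fun p => ∏ e ∈ p.1, ((C S p.2 p.1 e : ℝ))⁻¹ with hx
  have hCpos : ∀ p ∈ I, ∀ e ∈ p.1, (0:ℝ) < ((C S p.2 p.1 e : ℝ)) := by
    intro p hp e he
    have hp1 : p.1 ∈ PMs n S := (Finset.mem_product.1 hp).1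
    have h := C_pos hS hp1 he p.2
    have : (0:ℕ) < C S p.2 p.1 e := h
    exact_mod_cast this
  have hxpos : ∀ p ∈ I, 0 < x p := by
    intro p hp
    exact Finset.prod_pos (fun e he => inv_pos.2 (hCpos p hp e he))
  have hcardI : I.card = N * n.factorial := by
    rw [hI, Finset.card_product, Finset.card_univ, Fintype.card_perm, Fintype.card_fin]
  have hsumx : ∑ p ∈ I, x p ≤ (n.factorial : ℝ) := by
    rw [hI, Finset.sum_product_right]
    calc ∑ π ∈ (univ : Finset (Equiv.Perm (Fin n))), ∑ M ∈ PMs n S, x (M, π)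
        ≤ ∑ _π ∈ (univ : Finset (Equiv.Perm (Fin n))), (1:ℝ) := by
          apply Finset.sum_le_sum
          intro π _
          exact kraft hS h3 π
      _ = (n.factorial : ℝ) := by
          rw [Finset.sum_const, nsmul_eq_mul, mul_one, Finset.card_univ,
            Fintype.card_perm, Fintype.card_fin]
  have hNpos : (0:ℝ) < (N:ℝ) := by exact_mod_cast hN
  obtain ⟨M0, hM0⟩ := Finset.card_pos.1 (show 0 < N from hN)
  have hInonempty : I.Nonempty := ⟨(M0, 1), Finset.mem_product.2 ⟨hM0, Finset.mem_univ _⟩⟩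
  have hsumpos : (0:ℝ) < ∑ p ∈ I, x p := Finset.sum_pos hxpos hInonempty
  set k := N * n.factorial with hk
  have hk0 : 0 < k := Nat.mul_pos hN (Nat.factorial_pos n)
  have hkR : (0:ℝ) < (k:ℝ) := by exact_mod_cast hk0
  set A := (∑ p ∈ I, x p) / (k:ℝ) with hAdef
  have hApos : 0 < A := div_pos hsumpos hkR
  have hAle : A ≤ 1 / (N:ℝ) := by
    rw [hAdef, div_le_div_iff₀ hkR hNpos]
    calc (∑ p ∈ I, x p) * (N:ℝ) ≤ (n.factorial : ℝ) * (N:ℝ) :=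
          mul_le_mul_of_nonneg_right hsumx (le_of_lt hNpos)
      _ = 1 * (k:ℝ) := by rw [hk]; push_cast; ring
  have hprod_le : ∏ p ∈ I, x p ≤ A ^ k := by
    have hstep : ∀ p ∈ I, x p ≤ A * Real.exp (x p / A - 1) := by
      intro p hp
      have h := Real.add_one_le_exp (x p / A - 1)
      have h2 : x p / A ≤ Real.exp (x p / A - 1) := by linarith
      calc x p = A * (x p / A) := by field_simp
        _ ≤ A * Real.exp (x p / A - 1) := mul_le_mul_of_nonneg_left h2 (le_of_lt hApos)
    calc ∏ p ∈ I, x p ≤ ∏ p ∈ I, (A * Real.exp (x p / A - 1)) :=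
          Finset.prod_le_prod (fun p hp => (hxpos p hp).le) hstep
      _ = A ^ I.card * Real.exp (∑ p ∈ I, (x p / A - 1)) := by
          rw [Finset.prod_mul_distrib, Finset.prod_const, Real.exp_sum]
      _ = A ^ k := by
          have hzero : ∑ p ∈ I, (x p / A - 1) = 0 := by
            rw [Finset.sum_sub_distrib, Finset.sum_const, nsmul_eq_mul, mul_one,
              ← Finset.sum_div, hcardI, hAdef]
            field_simp
            ring
          rw [hzero, Real.exp_zero, mul_one, hcardI]
  have hprodpos : 0 < ∏ p ∈ I, x p := Finset.prod_pos hxpos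
  have hchain : ∏ p ∈ I, x p ≤ (1/(N:ℝ)) ^ k :=
    hprod_le.trans (pow_le_pow_left₀ (le_of_lt hApos) hAle k)
  have hlog1 : Real.log (∏ p ∈ I, x p) ≤ (k:ℝ) * Real.log (1/(N:ℝ)) := by
    calc Real.log (∏ p ∈ I, x p) ≤ Real.log ((1/(N:ℝ)) ^ k) :=
          Real.log_le_log hprodpos hchain
      _ = (k:ℝ) * Real.log (1/(N:ℝ)) := by rw [Real.log_pow]
  have hlogprod : Real.log (∏ p ∈ I, x p)
      = - ∑ p ∈ I, ∑ e ∈ p.1, Real.log ((C S p.2 p.1 e : ℝ)) := by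
    rw [Real.log_prod (fun p hp => (hxpos p hp).ne')]
    rw [← Finset.sum_neg_distrib]
    apply Finset.sum_congr rfl
    intro p hp
    rw [hx]
    simp only
    rw [Real.log_prod (fun e he => (inv_pos.2 (hCpos p hp e he)).ne')]
    rw [← Finset.sum_neg_distrib]
    apply Finset.sum_congr rfl
    intro e he
    rw [Real.log_inv]
  have hT : ∑ p ∈ I, ∑ e ∈ p.1, Real.log ((C S p.2 p.1 e : ℝ))
      ≤ (k:ℝ) * (((n / 3 : ℕ) : ℝ) * Fbd n) := by
    rw [hI, Finset.sum_product]
    calc ∑ M ∈ PMs n S, ∑ π ∈ (univ : Finset (Equiv.Perm (Fin n))),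
          ∑ e ∈ M, Real.log ((C S π M e : ℝ))
        = ∑ M ∈ PMs n S, ∑ e ∈ M, ∑ π ∈ (univ : Finset (Equiv.Perm (Fin n))),
            Real.log ((C S π M e : ℝ)) := by
          apply Finset.sum_congr rfl
          intro M _
          exact Finset.sum_comm
      _ ≤ ∑ M ∈ PMs n S, ∑ _e ∈ M, (n.factorial : ℝ) * Fbd n := by
          apply Finset.sum_le_sum
          intro M hM
          apply Finset.sum_le_sum
          intro e he
          exact sum_log_C_le hS h3 hn hM he
      _ = ∑ _M ∈ PMs n S, ((n/3 : ℕ) : ℝ) * ((n.factorial : ℝ) * Fbd n) := by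
          apply Finset.sum_congr rfl
          intro M hM
          rw [Finset.sum_const, nsmul_eq_mul]
          congr 2
          exact_mod_cast (Finset.mem_filter.1 hM).2.2
      _ = (k:ℝ) * (((n/3 : ℕ) : ℝ) * Fbd n) := by
          rw [Finset.sum_const, nsmul_eq_mul, hk]
          push_cast
          ring
  have hlogN : Real.log (1/(N:ℝ)) = - Real.log ((N:ℝ)) := by
    rw [one_div, Real.log_inv]
  rw [hlogprod, hlogN] at hlog1
  have hflip : (k:ℝ) * (- Real.log ((N:ℝ))) = -((k:ℝ) * Real.log ((N:ℝ))) := by ring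
  rw [hflip] at hlog1
  have h2 : (k:ℝ) * Real.log ((N:ℝ)) ≤ (k:ℝ) * (((n / 3 : ℕ) : ℝ) * Fbd n) := by
    linarith [hlog1, hT]
  exact (mul_le_mul_iff_right₀ hkR).1 h2


end LLPM

open LLPM in
/-- Any order-`n` Steiner triple system has at most `((1+ε) n / (2e²))^(n/3)`
perfect matchings, for `n` large. -/
theorem STS_max_perfect_matchings :
    ∀ ε : ℝ, 0 < ε → ∃ n₀ : ℕ, ∀ n : ℕ, n₀ ≤ n → 3 ∣ n →
    ∀ S : Finset (Finset (Fin n)), IsSTS n S →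
    (numPM n S : ℝ) ≤ ((1 + ε) * n / (2 * Real.exp 1 ^ 2)) ^ (n / 3) := by
  intro ε hε
  obtain ⟨n₁, hn₁⟩ := Filter.eventually_atTop.1 (Fbd_le ε hε)
  refine ⟨max n₁ 9, ?_⟩
  intro n hn h3 S hS
  have hn9 : 9 ≤ n := le_trans (le_max_right _ _) hn
  have hnF : Fbd n ≤ Real.log (1+ε) + Real.log (n:ℝ) - Real.log 2 - 2 :=
    hn₁ n (le_trans (le_max_left _ _) hn)
  have hnR : (9:ℝ) ≤ (n:ℝ) := by exact_mod_cast hn9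
  have hnum : numPM n S = (PMs n S).card := rfl
  set base := (1 + ε) * (n:ℝ) / (2 * Real.exp 1 ^ 2) with hbase
  have hbasepos : 0 < base := by
    rw [hbase]
    apply div_pos
    · apply mul_pos (by linarith) (by linarith)
    · positivity
  rcases Nat.eq_zero_or_pos ((PMs n S).card) with h0 | hN
  · rw [hnum, h0]
    push_cast
    positivity
  · have hlog := log_card_PMs_le hS h3 hn9 hN
    have hlogbase : Real.log base
        = Real.log (1+ε) + Real.log (n:ℝ) - Real.log 2 - 2 := by
      rw [hbase, Real.log_div (by positivity) (by positivity),
        Real.log_mul (by positivity) (by positivity),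
        Real.log_mul (by positivity) (by positivity),
        Real.log_pow, Real.log_exp]
      push_cast
      ring
    have hFb' : Fbd n ≤ Real.log base := by rw [hlogbase]; exact hnF
    have hm0 : (0:ℝ) ≤ ((n/3 : ℕ) : ℝ) := Nat.cast_nonneg _
    have h1 : Real.log (((PMs n S).card : ℝ)) ≤ ((n/3 : ℕ) : ℝ) * Real.log base :=
      le_trans hlog (mul_le_mul_of_nonneg_left hFb' hm0)
    have hNpos : (0:ℝ) < ((PMs n S).card : ℝ) := by exact_mod_cast hN
    rw [hnum]
    calc (((PMs n S).card : ℕ) : ℝ)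
        = Real.exp (Real.log (((PMs n S).card : ℝ))) := (Real.exp_log hNpos).symm
      _ ≤ Real.exp (((n/3 : ℕ) : ℝ) * Real.log base) := Real.exp_le_exp.2 h1
      _ = base ^ (n/3 : ℕ) := by
          rw [← Real.log_pow, Real.exp_log (pow_pos hbasepos _)]
end
end

section
/- Let n ∈ ℕ, p ∈ [0,1], K > 0 and t > 0. Let ω = (ω₁,…,ωₙ) be independent random variables with Pr(ωᵢ = 1) = p and Pr(ωᵢ = 0) = 1 − p, and let f : {0,1}ⁿ → ℝ satisfy |f(x) − f(y)| ≤ K for all pairs x, y ∈ {0,1}ⁿ differing in exactly one coordinate. Then Pr(|f(ω) − E f(ω)| > t) ≤ 2·exp(−t² / (4K²np + 2Kt)). -/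
open scoped Classical

noncomputable section

/-- The probability of the outcome `x` under the product Bernoulli(p) measure
on `{0,1}^n` (here modelled as `Fin n → Bool`). -/
def bweight (n : ℕ) (p : ℝ) (x : Fin n → Bool) : ℝ :=
  ∏ i : Fin n, (if x i then p else 1 - p)

lemma bweight_nonneg {n : ℕ} {p : ℝ} (hp0 : 0 ≤ p) (hp1 : p ≤ 1) (x : Fin n → Bool) :
    0 ≤ bweight n p x := by
  refine Finset.prod_nonneg fun i _ => ?_
  by_cases h : x i <;> simp [h, hp0, sub_nonneg.2 hp1]

lemma bweight_cons {n : ℕ} {p : ℝ} (b : Bool) (y : Fin n → Bool) :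
    bweight (n + 1) p (Fin.cons b y) = (if b then p else 1 - p) * bweight n p y := by
  rw [bweight, Fin.prod_univ_succ]
  simp [bweight]

lemma sum_pi_succ {n : ℕ} (g : (Fin (n + 1) → Bool) → ℝ) :
    ∑ x : Fin (n + 1) → Bool, g x
      = ∑ y : Fin n → Bool, ∑ b : Bool, g (Fin.cons b y) := by
  rw [← (Fin.consEquiv (fun _ : Fin (n + 1) => Bool)).sum_comp g]
  rw [Fintype.sum_prod_type, Finset.sum_comm]
  simp [Fin.consEquiv]

/-- single-step MGF bound -/
lemma step_mgf {p K l a b : ℝ} (hp0 : 0 ≤ p) (hp1 : p ≤ 1) (hK : 0 < K)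
    (hl : 0 ≤ l) (hlK : l * K ≤ 1) (hab : |a - b| ≤ K) :
    p * Real.exp (l * (a - (p * a + (1 - p) * b)))
      + (1 - p) * Real.exp (l * (b - (p * a + (1 - p) * b)))
      ≤ Real.exp (p * (l * K) ^ 2) := by
  set d : ℝ := a - b with hd
  have h1 : l * (a - (p * a + (1 - p) * b)) = l * d + (-(l * p * d)) := by
    simp only [hd]; ring
  have h2 : l * (b - (p * a + (1 - p) * b)) = -(l * p * d) := by
    simp only [hd]; ring
  rw [h1, h2, Real.exp_add]
  have hfac : p * (Real.exp (l * d) * Real.exp (-(l * p * d)))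
      + (1 - p) * Real.exp (-(l * p * d))
      = (1 + p * (Real.exp (l * d) - 1)) * Real.exp (-(l * p * d)) := by ring
  rw [hfac]
  have hub : |l * d| ≤ 1 := by
    have : |l * d| ≤ l * K := by
      rw [abs_mul, abs_of_nonneg hl]
      exact mul_le_mul_of_nonneg_left hab hl
    linarith
  have hexp : Real.exp (l * d) - 1 - (l * d) ≤ (l * d) ^ 2 :=
    le_trans (le_abs_self _) (Real.abs_exp_sub_one_sub_id_le hub)
  have hstep1 : 1 + p * (Real.exp (l * d) - 1) ≤ Real.exp (p * (Real.exp (l * d) - 1)) :=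
    Real.add_one_le_exp _ |>.trans_eq' (by ring_nf)
  have hpos : (0:ℝ) < Real.exp (-(l * p * d)) := Real.exp_pos _
  calc (1 + p * (Real.exp (l * d) - 1)) * Real.exp (-(l * p * d))
      ≤ Real.exp (p * (Real.exp (l * d) - 1)) * Real.exp (-(l * p * d)) := by
        apply mul_le_mul_of_nonneg_right hstep1 hpos.le
    _ = Real.exp (p * (Real.exp (l * d) - 1 - l * d) + (l * d) * p - (l * d) * p
          + (p * (Real.exp (l * d) - 1) + -(l * p * d))
          - (p * (Real.exp (l * d) - 1 - l * d) + (l * d) * p - (l * d) * p)) := by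
        rw [← Real.exp_add]; ring_nf
    _ = Real.exp (p * (Real.exp (l * d) - 1 - l * d)) := by ring_nf
    _ ≤ Real.exp (p * (l * K) ^ 2) := by
        apply Real.exp_le_exp.2
        have hld : |l * d| ≤ l * K := by
          rw [abs_mul, abs_of_nonneg hl]
          exact mul_le_mul_of_nonneg_left hab hl
        have hd2 : (l * d) ^ 2 ≤ (l * K) ^ 2 := by
          rw [← sq_abs]
          exact pow_le_pow_left₀ (abs_nonneg _) hld 2
        nlinarith [hexp]

lemma mgf_bound (p K l : ℝ) (hp0 : 0 ≤ p) (hp1 : p ≤ 1) (hK : 0 < K)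
    (hl : 0 ≤ l) (hlK : l * K ≤ 1) :
    ∀ (n : ℕ) (f : (Fin n → Bool) → ℝ),
      (∀ x i b, |f x - f (Function.update x i b)| ≤ K) →
      ∑ x : Fin n → Bool,
          bweight n p x * Real.exp (l * (f x - ∑ y : Fin n → Bool, bweight n p y * f y))
        ≤ Real.exp (n * (p * (l * K) ^ 2)) := by
  intro n
  induction n with
  | zero =>
      intro f _
      simp [bweight]
  | succ n ih =>
      intro f hf
      set g : (Fin n → Bool) → ℝ :=
        fun y => p * f (Fin.cons true y) + (1 - p) * f (Fin.cons false y) with hg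
      have hgbd : ∀ x i b, |g x - g (Function.update x i b)| ≤ K := by
        intro x i b
        have h1 := hf (Fin.cons true x) i.succ b
        have h2 := hf (Fin.cons false x) i.succ b
        rw [← Fin.cons_update] at h1 h2
        have : g x - g (Function.update x i b)
            = p * (f (Fin.cons true x) - f (Fin.cons true (Function.update x i b)))
              + (1 - p) * (f (Fin.cons false x) - f (Fin.cons false (Function.update x i b))) := by
          simp only [hg]; ring
        rw [this]
        calc |_| ≤ |p * (f (Fin.cons true x) - f (Fin.cons true (Function.update x i b)))|
              + |(1 - p) * (f (Fin.cons false x) - f (Fin.cons false (Function.update x i b)))| :=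
              abs_add_le _ _
          _ ≤ p * K + (1 - p) * K := by
              rw [abs_mul, abs_mul, abs_of_nonneg hp0, abs_of_nonneg (by linarith : (0:ℝ) ≤ 1 - p)]
              have := mul_le_mul_of_nonneg_left h1 hp0
              have := mul_le_mul_of_nonneg_left h2 (by linarith : (0:ℝ) ≤ 1 - p)
              linarith
          _ = K := by ring
      have hmean : (∑ y : Fin (n+1) → Bool, bweight (n+1) p y * f y)
          = ∑ y : Fin n → Bool, bweight n p y * g y := by
        rw [sum_pi_succ (fun y => bweight (n+1) p y * f y)]
        refine Finset.sum_congr rfl fun y _ => ?_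
        simp only [Fintype.sum_bool, bweight_cons, hg]
        norm_num
        ring
      set μ : ℝ := ∑ y : Fin n → Bool, bweight n p y * g y with hμ
      have key : ∀ y : Fin n → Bool,
          ∑ b : Bool, bweight (n+1) p (Fin.cons b y)
              * Real.exp (l * (f (Fin.cons b y) - (∑ z : Fin (n+1) → Bool, bweight (n+1) p z * f z)))
          ≤ bweight n p y * (Real.exp (p * (l * K) ^ 2) * Real.exp (l * (g y - μ))) := by
        intro y
        have hsplit : ∀ b : Bool,
            l * (f (Fin.cons b y) - (∑ z : Fin (n+1) → Bool, bweight (n+1) p z * f z))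
              = l * (f (Fin.cons b y) - g y) + l * (g y - μ) := by
          intro b; rw [hmean]; ring
        simp only [Fintype.sum_bool, bweight_cons, hsplit, Real.exp_add, if_true, if_false]
        have hstep : p * Real.exp (l * (f (Fin.cons true y) - g y))
            + (1 - p) * Real.exp (l * (f (Fin.cons false y) - g y))
            ≤ Real.exp (p * (l * K) ^ 2) := by
          have habd : |f (Fin.cons true y) - f (Fin.cons false y)| ≤ K := by
            have := hf (Fin.cons true y) 0 false
            rwa [Fin.update_cons_zero] at this
          have := step_mgf hp0 hp1 hK hl hlK habd (a := f (Fin.cons true y))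
            (b := f (Fin.cons false y))
          simpa [hg] using this
        have hwy := bweight_nonneg hp0 hp1 (p := p) y
        have hepos : (0:ℝ) < Real.exp (l * (g y - μ)) := Real.exp_pos _
        calc p * bweight n p y
              * (Real.exp (l * (f (Fin.cons true y) - g y)) * Real.exp (l * (g y - μ)))
            + (1 - p) * bweight n p y
              * (Real.exp (l * (f (Fin.cons false y) - g y)) * Real.exp (l * (g y - μ)))
            = bweight n p y * ((p * Real.exp (l * (f (Fin.cons true y) - g y))
                + (1 - p) * Real.exp (l * (f (Fin.cons false y) - g y)))
                * Real.exp (l * (g y - μ))) := by ring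
          _ ≤ bweight n p y * (Real.exp (p * (l * K) ^ 2) * Real.exp (l * (g y - μ))) := by
              apply mul_le_mul_of_nonneg_left _ hwy
              exact mul_le_mul_of_nonneg_right hstep hepos.le
      calc ∑ x : Fin (n+1) → Bool, bweight (n+1) p x
              * Real.exp (l * (f x - ∑ y : Fin (n+1) → Bool, bweight (n+1) p y * f y))
          = ∑ y : Fin n → Bool, ∑ b : Bool, bweight (n+1) p (Fin.cons b y)
              * Real.exp (l * (f (Fin.cons b y) - ∑ z : Fin (n+1) → Bool, bweight (n+1) p z * f z)) :=
            sum_pi_succ _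
        _ ≤ ∑ y : Fin n → Bool,
              bweight n p y * (Real.exp (p * (l * K) ^ 2) * Real.exp (l * (g y - μ))) :=
            Finset.sum_le_sum fun y _ => key y
        _ = Real.exp (p * (l * K) ^ 2)
              * ∑ y : Fin n → Bool, bweight n p y * Real.exp (l * (g y - μ)) := by
            rw [Finset.mul_sum]; exact Finset.sum_congr rfl fun y _ => by ring
        _ ≤ Real.exp (p * (l * K) ^ 2) * Real.exp (n * (p * (l * K) ^ 2)) := by
            apply mul_le_mul_of_nonneg_left _ (Real.exp_pos _).le
            exact ih g hgbd
        _ = Real.exp ((n + 1 : ℕ) * (p * (l * K) ^ 2)) := by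
            rw [← Real.exp_add]; push_cast; ring_nf

lemma chernoff (n : ℕ) (p K l t : ℝ) (hp0 : 0 ≤ p) (hp1 : p ≤ 1) (hK : 0 < K)
    (hl : 0 ≤ l) (hlK : l * K ≤ 1) (ht : 0 < t)
    (f : (Fin n → Bool) → ℝ)
    (hf : ∀ x i b, |f x - f (Function.update x i b)| ≤ K) :
    (∑ x ∈ Finset.univ.filter (fun x : Fin n → Bool =>
        t < f x - ∑ y : Fin n → Bool, bweight n p y * f y), bweight n p x)
      ≤ Real.exp (n * (p * (l * K) ^ 2) - l * t) := by
  set μ : ℝ := ∑ y : Fin n → Bool, bweight n p y * f y with hμ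
  calc (∑ x ∈ Finset.univ.filter (fun x : Fin n → Bool => t < f x - μ), bweight n p x)
      ≤ ∑ x ∈ Finset.univ.filter (fun x : Fin n → Bool => t < f x - μ),
          bweight n p x * (Real.exp (l * (f x - μ)) * Real.exp (-(l * t))) := by
        refine Finset.sum_le_sum fun x hx => ?_
        have hx' : t < f x - μ := (Finset.mem_filter.1 hx).2
        have : (1:ℝ) ≤ Real.exp (l * (f x - μ)) * Real.exp (-(l * t)) := by
          rw [← Real.exp_add, ← Real.exp_zero]
          apply Real.exp_le_exp.2
          nlinarith
        nlinarith [bweight_nonneg hp0 hp1 (p := p) x]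
    _ ≤ ∑ x : Fin n → Bool,
          bweight n p x * (Real.exp (l * (f x - μ)) * Real.exp (-(l * t))) := by
        refine Finset.sum_le_sum_of_subset_of_nonneg (Finset.filter_subset _ _) fun x _ _ => ?_
        have := bweight_nonneg hp0 hp1 (p := p) x
        positivity
    _ = (∑ x : Fin n → Bool, bweight n p x * Real.exp (l * (f x - μ))) * Real.exp (-(l * t)) := by
        rw [Finset.sum_mul]; exact Finset.sum_congr rfl fun x _ => by ring
    _ ≤ Real.exp (n * (p * (l * K) ^ 2)) * Real.exp (-(l * t)) := by
        apply mul_le_mul_of_nonneg_right _ (Real.exp_pos _).le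
        exact mgf_bound p K l hp0 hp1 hK hl hlK n f hf
    _ = Real.exp (n * (p * (l * K) ^ 2) - l * t) := by rw [← Real.exp_add]; ring_nf

/-- A bounded-differences inequality with Bernstein-type tails for product
Bernoulli(p) measure. -/
theorem bernstein_type_bounded_differences
    (n : ℕ) (p : ℝ) (hp0 : 0 ≤ p) (hp1 : p ≤ 1) (K t : ℝ) (hK : 0 < K) (ht : 0 < t)
    (f : (Fin n → Bool) → ℝ)
    (hf : ∀ x : Fin n → Bool, ∀ i : Fin n, ∀ b : Bool,
      |f x - f (Function.update x i b)| ≤ K) :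
    (∑ x ∈ Finset.univ.filter (fun x : Fin n → Bool =>
        t < |f x - ∑ y : Fin n → Bool, bweight n p y * f y|), bweight n p x)
      ≤ 2 * Real.exp (-(t ^ 2) / (4 * K ^ 2 * n * p + 2 * K * t)) := by
  set μ : ℝ := ∑ y : Fin n → Bool, bweight n p y * f y with hμ
  set D : ℝ := 2 * K ^ 2 * n * p + K * t with hD
  have hnp : (0:ℝ) ≤ (n : ℝ) * p := mul_nonneg (Nat.cast_nonneg n) hp0
  have hDpos : 0 < D := by
    have h1 : (0:ℝ) < K * t := mul_pos hK ht
    have h2 : (0:ℝ) ≤ 2 * K ^ 2 * n * p := by positivity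
    nlinarith
  set l : ℝ := t / D with hl
  have hl0 : 0 ≤ l := div_nonneg ht.le hDpos.le
  have hlpos : 0 < l := div_pos ht hDpos
  have hlK : l * K ≤ 1 := by
    rw [hl, div_mul_eq_mul_div, div_le_one hDpos, hD]
    nlinarith
  have h2D : 4 * K ^ 2 * (n : ℝ) * p + 2 * K * t = 2 * D := by rw [hD]; ring
  have hexp_le : Real.exp ((n : ℝ) * (p * (l * K) ^ 2) - l * t)
      ≤ Real.exp (-(t ^ 2) / (4 * K ^ 2 * (n : ℝ) * p + 2 * K * t)) := by
    apply Real.exp_le_exp.2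
    rw [h2D]
    have ha : (n:ℝ) * p * K ^ 2 * l ≤ t / 2 := by
      rw [hl, ← mul_div_assoc]
      rw [div_le_div_iff₀ hDpos two_pos]
      rw [hD]; nlinarith [mul_pos hK (mul_pos ht ht)]
    have hb : -(l * t) / 2 = -(t ^ 2) / (2 * D) := by
      rw [hl]; field_simp
    rw [← hb]
    nlinarith [mul_le_mul_of_nonneg_right ha hl0]
  set g : (Fin n → Bool) → ℝ := fun x => -f x with hg
  have hgmean : (∑ y : Fin n → Bool, bweight n p y * g y) = -μ := by
    rw [hμ, ← Finset.sum_neg_distrib]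
    exact Finset.sum_congr rfl fun y _ => by simp [hg]
  have hgf : ∀ x i b, |g x - g (Function.update x i b)| ≤ K := by
    intro x i b
    have h := hf x i b
    have : g x - g (Function.update x i b) = -(f x - f (Function.update x i b)) := by
      simp [hg]; ring
    rw [this, abs_neg]; exact h
  have habs : Finset.univ.filter (fun x : Fin n → Bool => t < |f x - μ|)
      = (Finset.univ.filter (fun x : Fin n → Bool => t < f x - μ))
        ∪ (Finset.univ.filter (fun x : Fin n → Bool =>
            t < g x - ∑ y : Fin n → Bool, bweight n p y * g y)) := by
    rw [← Finset.filter_or]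
    apply Finset.filter_congr
    intro x _
    rw [lt_abs, hgmean]
    constructor
    · rintro (h | h)
      · exact Or.inl h
      · refine Or.inr ?_
        simp only [hg]
        linarith
    · rintro (h | h)
      · exact Or.inl h
      · refine Or.inr ?_
        simp only [hg] at h
        linarith
  have hdisj : Disjoint
      (Finset.univ.filter (fun x : Fin n → Bool => t < f x - μ))
      (Finset.univ.filter (fun x : Fin n → Bool =>
        t < g x - ∑ y : Fin n → Bool, bweight n p y * g y)) := by
    rw [Finset.disjoint_left]
    intro x h1 h2
    have h1' := (Finset.mem_filter.1 h1).2
    have h2' := (Finset.mem_filter.1 h2).2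
    rw [hgmean] at h2'
    simp only [hg] at h2'
    linarith
  have hup := chernoff n p K l t hp0 hp1 hK hl0 hlK ht f hf
  have hdown := chernoff n p K l t hp0 hp1 hK hl0 hlK ht g hgf
  rw [← hμ] at hup
  calc (∑ x ∈ Finset.univ.filter (fun x : Fin n → Bool => t < |f x - μ|), bweight n p x)
      = (∑ x ∈ Finset.univ.filter (fun x : Fin n → Bool => t < f x - μ), bweight n p x)
        + (∑ x ∈ Finset.univ.filter (fun x : Fin n → Bool =>
            t < g x - ∑ y : Fin n → Bool, bweight n p y * g y), bweight n p x) := by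
        rw [habs, Finset.sum_union hdisj]
    _ ≤ Real.exp (-(t ^ 2) / (4 * K ^ 2 * (n : ℝ) * p + 2 * K * t))
        + Real.exp (-(t ^ 2) / (4 * K ^ 2 * (n : ℝ) * p + 2 * K * t)) :=
        add_le_add (hup.trans hexp_le) (hdown.trans hexp_le)
    _ = 2 * Real.exp (-(t ^ 2) / (4 * K ^ 2 * (n : ℝ) * p + 2 * K * t)) := by ring
end
end

section
/- Let (Ω, F, P) be a probability space with a filtration (F_i)_{i≥0}, and let X(0), X(1), X(2), … be a supermartingale with respect to (F_i) such that |X(i+1) − X(i)| ≤ K almost surely for all i, where K > 0. Define V(i) = Σ_{j=0}^{i−1} E[(X(j+1) − X(j))² | F_j]. Then for any t, v > 0, P( there exists i ≥ 0 with X(i) ≥ X(0) + t and V(i) ≤ v ) ≤ exp( −t² / (2(v + Kt)) ). -/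
open MeasureTheory
open Real

lemma aux_one_sub_mul_exp_sub_one_le {x : ℝ} (hx : 0 ≤ x) : (1 - x) * (exp x - 1) ≤ x := by
  rcases le_or_gt x 1 with h | h
  · have h1 : (1 - x) * exp x ≤ 1 := by
      have := Real.add_one_le_exp (-x)
      calc (1 - x) * exp x ≤ exp (-x) * exp x := by
            apply mul_le_mul_of_nonneg_right _ (exp_pos x).le
            linarith
        _ = 1 := by rw [← exp_add]; simp
    nlinarith
  · have : 1 - x ≤ 0 := by linarith
    have h2 : 0 ≤ exp x - 1 := by
      have := Real.add_one_le_exp x; linarith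
    nlinarith

lemma aux_exp_le_neg {x : ℝ} (hx : x ≤ 0) : exp x ≤ 1 + x + x ^ 2 / 2 := by
  have hmono : AntitoneOn (fun y : ℝ => 1 + y + y ^ 2 / 2 - exp y) (Set.Iic 0) := by
    apply antitoneOn_of_deriv_nonpos (convex_Iic 0)
    · fun_prop
    · intro y hy
      exact (((differentiable_id.const_add 1).add
        ((differentiable_pow 2).div_const 2)).sub Real.differentiable_exp).differentiableAt.differentiableWithinAt
    · intro y hy
      have hd : HasDerivAt (fun y : ℝ => 1 + y + y ^ 2 / 2 - exp y) (1 + y - exp y) y := by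
        have := (((hasDerivAt_id y).const_add 1).add
          ((hasDerivAt_pow 2 y).div_const 2)).sub (Real.hasDerivAt_exp y)
        refine this.congr_deriv ?_
        push_cast
        ring
      rw [hd.deriv]
      have := Real.add_one_le_exp y
      linarith
  have := hmono (Set.mem_Iic.2 hx) (Set.mem_Iic.2 le_rfl) hx
  simp at this
  linarith

lemma aux_exp_le_pos {u x : ℝ} (hu : u < 1) (hx0 : 0 ≤ x) (hxu : x ≤ u) :
    exp x ≤ 1 + x + x ^ 2 / (2 * (1 - u)) := by
  have hu0 : 0 ≤ u := hx0.trans hxu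
  have h1u : 0 < 1 - u := by linarith
  have hmono : MonotoneOn (fun y : ℝ => 1 + y + y ^ 2 / (2 * (1 - u)) - exp y) (Set.Icc 0 u) := by
    apply monotoneOn_of_deriv_nonneg (convex_Icc 0 u)
    · fun_prop
    · intro y hy
      exact (((differentiable_id.const_add 1).add
        ((differentiable_pow 2).div_const _)).sub Real.differentiable_exp).differentiableAt.differentiableWithinAt
    · intro y hy
      rw [interior_Icc] at hy
      have hd : HasDerivAt (fun y : ℝ => 1 + y + y ^ 2 / (2 * (1 - u)) - exp y)
          (1 + y / (1 - u) - exp y) y := by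
        have := (((hasDerivAt_id y).const_add 1).add
          ((hasDerivAt_pow 2 y).div_const (2 * (1 - u)))).sub (Real.hasDerivAt_exp y)
        refine this.congr_deriv ?_
        push_cast
        field_simp
      rw [hd.deriv]
      have hy1 : 0 < y := hy.1
      have h2 : 0 ≤ exp y - 1 := by have := Real.add_one_le_exp y; linarith
      have key : (1 - u) * (exp y - 1) ≤ y := by
        have h1 := aux_one_sub_mul_exp_sub_one_le hy.1.le
        nlinarith [hy.2]
      rw [div_eq_mul_inv, sub_nonneg]
      rw [show (1 : ℝ) + y * (1-u)⁻¹ = (1 - u + y) / (1 - u) by field_simp]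
      rw [le_div_iff₀ h1u]
      linarith
  have := hmono (Set.mem_Icc.2 ⟨le_rfl, hu0⟩) (Set.mem_Icc.2 ⟨hx0, hxu⟩) hx0
  simp at this
  linarith

lemma aux_exp_quad {u x : ℝ} (hu : u < 1) (hx : |x| ≤ u) :
    exp x ≤ 1 + x + x ^ 2 / (2 * (1 - u)) := by
  have h1u : 0 < 1 - u := by linarith
  have hu0 : 0 ≤ u := (abs_nonneg x).trans hx
  rcases le_or_gt x 0 with h | h
  · refine (aux_exp_le_neg h).trans ?_
    have : x ^ 2 / 2 ≤ x ^ 2 / (2 * (1 - u)) := by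
      apply div_le_div_of_nonneg_left (sq_nonneg x) (by linarith)
      nlinarith
    linarith
  · exact aux_exp_le_pos hu h.le ((le_abs_self x).trans hx)


lemma supermartingale_maximal_ineq
    {Ω : Type*} {mΩ : MeasurableSpace Ω} {μ : Measure Ω} [IsProbabilityMeasure μ]
    {ℱ : Filtration ℕ mΩ} {Z : ℕ → Ω → ℝ}
    (hZ : Supermartingale Z ℱ μ) (hnn : ∀ i ω, 0 ≤ Z i ω) {a : ℝ} (ha : 0 < a) :
    μ {ω | ∃ i, a ≤ Z i ω} ≤ ENNReal.ofReal ((∫ ω, Z 0 ω ∂μ) / a) := by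
  set S : Set ℝ := {y | a ≤ y} with hS
  have hSmeas : MeasurableSet S := measurableSet_Ici
  set A : ℕ → Set Ω := fun n => ⋃ i ∈ Finset.range (n + 1), {ω | a ≤ Z i ω} with hA
  have hAmeas : ∀ n, MeasurableSet (A n) := by
    intro n
    refine MeasurableSet.biUnion (Finset.range (n+1)).countable_toSet fun i _ => ?_
    exact measurableSet_le measurable_const
      (((hZ.stronglyMeasurable i).measurable).le (ℱ.le i))
  have hmono : Monotone A := by
    intro m n hmn
    intro ω hω
    simp only [hA, Set.mem_iUnion, Finset.mem_range] at hω ⊢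
    obtain ⟨i, hi1, hi2⟩ := hω
    exact ⟨i, by omega, hi2⟩
  have hunion : {ω | ∃ i, a ≤ Z i ω} = ⋃ n, A n := by
    ext ω
    simp only [Set.mem_setOf_eq, hA, Set.mem_iUnion, Finset.mem_range]
    constructor
    · rintro ⟨i, hi⟩; exact ⟨i, i, by omega, hi⟩
    · rintro ⟨n, i, _, hi⟩; exact ⟨i, hi⟩
  have key : ∀ n, μ (A n) ≤ ENNReal.ofReal ((∫ ω, Z 0 ω ∂μ) / a) := by
    intro n
    set σ : Ω → ℕ∞ := fun ω => ((hittingBtwn Z S 0 n ω : ℕ) : ℕ∞) with hσ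
    have hσst : IsStoppingTime ℱ σ := hZ.stronglyAdapted.adapted.isStoppingTime_hittingBtwn hSmeas
    have hσle : ∀ ω, σ ω ≤ n := fun ω => WithTop.coe_le_coe.2 (hittingBtwn_le ω)
    -- integrability of stopped value
    have hint : Integrable (stoppedValue Z σ) μ := by
      have := hZ.neg.integrable_stoppedValue hσst hσle
      have heq : stoppedValue (-Z) σ = -(stoppedValue Z σ) := rfl
      rw [heq] at this
      simpa using this.neg
    -- expected stopped value ≤ E[Z 0]
    have hexp : ∫ ω, stoppedValue Z σ ω ∂μ ≤ ∫ ω, Z 0 ω ∂μ := by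
      have h0 : IsStoppingTime ℱ (fun _ : Ω => ((0 : ℕ) : ℕ∞)) := isStoppingTime_const _ 0
      have := hZ.neg.expected_stoppedValue_mono h0 hσst (fun ω => WithTop.coe_le_coe.2 (Nat.zero_le _)) hσle
      have h1 : stoppedValue (-Z) (fun _ => ((0:ℕ) : ℕ∞)) = -(Z 0) := rfl
      have h2 : stoppedValue (-Z) σ = -(stoppedValue Z σ) := rfl
      rw [h1, h2] at this
      simp only [Pi.neg_apply, integral_neg] at this
      linarith
    -- a ≤ stopped value on A n
    have hge : ∀ ω ∈ A n, a ≤ stoppedValue Z σ ω := by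
      intro ω hω
      simp only [hA, Set.mem_iUnion, Finset.mem_range] at hω
      obtain ⟨i, hin, hi⟩ := hω
      exact stoppedValue_hittingBtwn_mem ⟨i, Set.mem_Icc.2 ⟨Nat.zero_le _, by omega⟩, hi⟩
    have h1 : a * (μ (A n)).toReal ≤ ∫ ω in A n, stoppedValue Z σ ω ∂μ :=
      setIntegral_ge_of_const_le_real (hAmeas n) (measure_ne_top μ _) hge hint.integrableOn
    have h2 : ∫ ω in A n, stoppedValue Z σ ω ∂μ ≤ ∫ ω, stoppedValue Z σ ω ∂μ :=
      setIntegral_le_integral hint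
        (Filter.Eventually.of_forall fun ω => hnn _ ω)
    have h3 : (μ (A n)).toReal ≤ (∫ ω, Z 0 ω ∂μ) / a := by
      rw [le_div_iff₀ ha]
      nlinarith [h1, h2, hexp]
    calc μ (A n) = ENNReal.ofReal ((μ (A n)).toReal) := (ENNReal.ofReal_toReal (measure_ne_top μ _)).symm
      _ ≤ ENNReal.ofReal ((∫ ω, Z 0 ω ∂μ) / a) := ENNReal.ofReal_le_ofReal h3
  rw [hunion, Directed.measure_iUnion (hmono.directed_le)]
  exact iSup_le key


/-- Freedman's inequality for discrete-time supermartingales with bounded increments. -/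
theorem freedman_inequality
    {Ω : Type*} {mΩ : MeasurableSpace Ω} (μ : Measure Ω) [IsProbabilityMeasure μ]
    (ℱ : Filtration ℕ mΩ) (X : ℕ → Ω → ℝ)
    (hX : Supermartingale X ℱ μ)
    (K : ℝ) (hK : 0 < K)
    (hbdd : ∀ i : ℕ, ∀ᵐ ω ∂μ, |X (i + 1) ω - X i ω| ≤ K)
    (t v : ℝ) (ht : 0 < t) (hv : 0 < v) :
    μ {ω : Ω | ∃ i : ℕ, X 0 ω + t ≤ X i ω ∧
        (∑ j ∈ Finset.range i,
          (μ[fun ω' => (X (j + 1) ω' - X j ω') ^ 2 | ℱ j]) ω) ≤ v}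
      ≤ ENNReal.ofReal (Real.exp (-(t ^ 2) / (2 * (v + K * t)))) := by
  -- setup
  set D : ℕ → Ω → ℝ := fun j ω => X (j + 1) ω - X j ω with hD
  set W : ℕ → Ω → ℝ := fun j => μ[fun ω' => (X (j + 1) ω' - X j ω') ^ 2|ℱ j] with hW
  have hvKt : 0 < v + K * t := by positivity
  set lam : ℝ := t / (v + K * t) with hlam
  have hlam0 : 0 < lam := by positivity
  have hu1 : lam * K < 1 := by
    rw [hlam, div_mul_eq_mul_div, div_lt_one hvKt]
    nlinarith
  have h1u : 0 < 1 - lam * K := by linarith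
  set c : ℝ := lam ^ 2 / (2 * (1 - lam * K)) with hc
  have hc0 : 0 ≤ c := by positivity
  -- basic integrability / measurability
  have hDmeas : ∀ j, AEStronglyMeasurable (D j) μ :=
    fun j => (((hX.stronglyMeasurable (j+1)).mono (ℱ.le _)).sub
      ((hX.stronglyMeasurable j).mono (ℱ.le _))).aestronglyMeasurable
  have hDint : ∀ j, Integrable (D j) μ := fun j => (hX.integrable (j+1)).sub (hX.integrable j)
  have hD2int : ∀ j, Integrable (fun ω => D j ω ^ 2) μ := by
    intro j
    refine Integrable.mono' (integrable_const (K ^ 2))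
      ((((hX.stronglyMeasurable (j+1)).mono (ℱ.le _)).sub
        ((hX.stronglyMeasurable j).mono (ℱ.le _))).pow 2).aestronglyMeasurable ?_
    filter_upwards [hbdd j] with ω hω
    rw [Real.norm_eq_abs, abs_pow, ← abs_pow, abs_pow]
    exact pow_le_pow_left₀ (abs_nonneg _) hω 2
  have hWmeas : ∀ j, StronglyMeasurable[ℱ j] (W j) := fun j => stronglyMeasurable_condExp
  have hWnn : ∀ j, 0 ≤ᵐ[μ] W j := fun j => condExp_nonneg (Filter.Eventually.of_forall fun ω => sq_nonneg _)
  -- the exponential process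
  set V : ℕ → Ω → ℝ := fun i ω => ∑ j ∈ Finset.range i, W j ω with hV
  set Z : ℕ → Ω → ℝ := fun i ω => exp (lam * (X i ω - X 0 ω) - c * V i ω) with hZdef
  have hVnn : ∀ i, 0 ≤ᵐ[μ] V i := by
    intro i
    have := ae_all_iff.2 hWnn
    filter_upwards [this] with ω hω
    exact Finset.sum_nonneg fun j _ => hω j
  have hXbd : ∀ i, ∀ᵐ ω ∂μ, |X i ω - X 0 ω| ≤ i * K := by
    intro i
    filter_upwards [ae_all_iff.2 hbdd] with ω hω
    induction i with
    | zero => simp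
    | succ n ih =>
      calc |X (n+1) ω - X 0 ω| ≤ |X (n+1) ω - X n ω| + |X n ω - X 0 ω| := by
            rw [show X (n+1) ω - X 0 ω = (X (n+1) ω - X n ω) + (X n ω - X 0 ω) by ring]
            exact abs_add_le _ _
        _ ≤ K + n * K := add_le_add (hω n) ih
        _ = (n+1 : ℕ) * K := by push_cast; ring
  have hZmeas : ∀ i, StronglyMeasurable[ℱ i] (Z i) := by
    intro i
    refine Real.continuous_exp.comp_stronglyMeasurable ?_
    refine StronglyMeasurable.sub ?_ ?_
    · exact ((hX.stronglyMeasurable i).sub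
        ((hX.stronglyMeasurable 0).mono (ℱ.mono (Nat.zero_le i)))).const_mul lam
    · refine StronglyMeasurable.const_mul ?_ c
      refine Finset.stronglyMeasurable_fun_sum _ fun j hj => ?_
      exact (hWmeas j).mono (ℱ.mono (Finset.mem_range.1 hj).le)
  have hZbd : ∀ i, ∀ᵐ ω ∂μ, ‖Z i ω‖ ≤ exp (lam * (i * K)) := by
    intro i
    filter_upwards [hXbd i, hVnn i] with ω h1 h2
    rw [Real.norm_eq_abs, abs_of_pos (exp_pos _), exp_le_exp]
    have : lam * (X i ω - X 0 ω) ≤ lam * (i * K) :=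
      mul_le_mul_of_nonneg_left ((le_abs_self _).trans h1) hlam0.le
    have h2' : 0 ≤ V i ω := h2
    nlinarith
  have hZint : ∀ i, Integrable (Z i) μ := fun i =>
    Integrable.mono' (integrable_const _)
      ((hZmeas i).mono (ℱ.le i)).aestronglyMeasurable (hZbd i)
  -- bound on the exponential of the increment
  have hGint : ∀ i, Integrable (fun ω => exp (lam * D i ω)) μ := by
    intro i
    refine Integrable.mono' (integrable_const (exp (lam * K)))
      (Real.continuous_exp.comp_aestronglyMeasurable ((hDmeas i).const_mul lam)) ?_
    filter_upwards [hbdd i] with ω hω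
    rw [Real.norm_eq_abs, abs_of_pos (exp_pos _), exp_le_exp]
    exact mul_le_mul_of_nonneg_left ((le_abs_self _).trans hω) hlam0.le
  have hGbd : ∀ i, ∀ᵐ ω ∂μ, exp (lam * D i ω) ≤ 1 + lam * D i ω + c * D i ω ^ 2 := by
    intro i
    filter_upwards [hbdd i] with ω hω
    have habs : |lam * D i ω| ≤ lam * K := by
      rw [abs_mul, abs_of_pos hlam0]
      exact mul_le_mul_of_nonneg_left hω hlam0.le
    have := aux_exp_quad hu1 habs
    calc exp (lam * D i ω) ≤ 1 + lam * D i ω + (lam * D i ω) ^ 2 / (2 * (1 - lam * K)) := this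
      _ = 1 + lam * D i ω + c * D i ω ^ 2 := by rw [hc]; ring
  have hRint : ∀ i, Integrable (fun ω => 1 + lam * D i ω + c * D i ω ^ 2) μ := fun i =>
    ((integrable_const (1 : ℝ)).add ((hDint i).const_mul lam)).add ((hD2int i).const_mul c)
  -- conditional expectation of the exponential increment
  have hcondG : ∀ i, μ[fun ω => exp (lam * D i ω)|ℱ i] ≤ᵐ[μ] fun ω => exp (c * W i ω) := by
    intro i
    have step1 : μ[fun ω => exp (lam * D i ω)|ℱ i]
        ≤ᵐ[μ] μ[fun ω => 1 + lam * D i ω + c * D i ω ^ 2|ℱ i] :=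
      condExp_mono (hGint i) (hRint i) (hGbd i)
    have step2 : μ[fun ω => 1 + lam * D i ω + c * D i ω ^ 2|ℱ i]
        =ᵐ[μ] fun ω => 1 + lam * (μ[D i|ℱ i]) ω + c * W i ω := by
      have e1 : μ[fun ω => 1 + lam * D i ω + c * D i ω ^ 2|ℱ i]
          =ᵐ[μ] μ[fun ω => 1 + lam * D i ω|ℱ i] + μ[fun ω => c * D i ω ^ 2|ℱ i] :=
        condExp_add ((integrable_const (1 : ℝ)).add ((hDint i).const_mul lam))
          ((hD2int i).const_mul c) (ℱ i)
      have e2 : μ[fun ω => 1 + lam * D i ω|ℱ i]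
          =ᵐ[μ] μ[fun _ => (1 : ℝ)|ℱ i] + μ[fun ω => lam * D i ω|ℱ i] :=
        condExp_add (integrable_const (1 : ℝ)) ((hDint i).const_mul lam) (ℱ i)
      have e3 : μ[fun _ => (1 : ℝ)|ℱ i] = fun _ => (1 : ℝ) := condExp_const (ℱ.le i) 1
      have e4 : μ[fun ω => lam * D i ω|ℱ i] =ᵐ[μ] fun ω => lam * (μ[D i|ℱ i]) ω := by
        have := condExp_smul (μ := μ) (m := ℱ i) lam (D i)
        simpa [Pi.smul_def, smul_eq_mul] using this
      have e5 : μ[fun ω => c * D i ω ^ 2|ℱ i] =ᵐ[μ] fun ω => c * W i ω := by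
        have := condExp_smul (μ := μ) (m := ℱ i) c (fun ω => D i ω ^ 2)
        have h2 : μ[fun ω => D i ω ^ 2|ℱ i] = W i := rfl
        simpa [Pi.smul_def, smul_eq_mul, h2] using this
      filter_upwards [e1, e2, e4, e5] with ω h1 h2 h4 h5
      rw [h1, Pi.add_apply, h2, Pi.add_apply, h4, h5, e3]
    have step3 : μ[D i|ℱ i] ≤ᵐ[μ] fun _ => (0 : ℝ) := by
      have e1 : μ[D i|ℱ i] =ᵐ[μ] μ[X (i+1)|ℱ i] - μ[X i|ℱ i] :=
        condExp_sub (hX.integrable (i+1)) (hX.integrable i) (ℱ i)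
      have e2 : μ[X i|ℱ i] = X i :=
        condExp_of_stronglyMeasurable (ℱ.le i) (hX.stronglyAdapted i) (hX.integrable i)
      have e3 := hX.condExp_ae_le (Nat.le_succ i)
      filter_upwards [e1, e3] with ω h1 h3
      simp only [Pi.sub_apply] at h1
      rw [h1, e2]
      exact sub_nonpos.2 h3
    filter_upwards [step1, step2, step3, hWnn i] with ω h1 h2 h3 h4
    have h4' : 0 ≤ W i ω := h4
    have h3' : (μ[D i|ℱ i]) ω ≤ 0 := h3
    calc (μ[fun ω => exp (lam * D i ω)|ℱ i]) ω
        ≤ 1 + lam * (μ[D i|ℱ i]) ω + c * W i ω := h1.trans_eq h2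
      _ ≤ 1 + c * W i ω := by nlinarith
      _ ≤ exp (c * W i ω) := by linarith [Real.add_one_le_exp (c * W i ω)]
  -- Z is a supermartingale
  have hZsup : Supermartingale Z ℱ μ := by
    refine supermartingale_nat (fun i => hZmeas i) hZint fun i => ?_
    have hfact : Z (i+1) = (fun ω => Z i ω * exp (-(c * W i ω))) * fun ω => exp (lam * D i ω) := by
      funext ω
      simp only [Pi.mul_apply, hZdef, hV, hD, ← exp_add, Finset.sum_range_succ]
      congr 1
      ring
    have hFmeas : StronglyMeasurable[ℱ i] fun ω => Z i ω * exp (-(c * W i ω)) :=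
      (hZmeas i).mul
        (Real.continuous_exp.comp_stronglyMeasurable (((hWmeas i).const_mul c).neg))
    have hFbd : ∀ᵐ ω ∂μ, ‖Z i ω * exp (-(c * W i ω))‖ ≤ exp (lam * (i * K)) := by
      filter_upwards [hZbd i, hWnn i] with ω h1 h2
      have h2' : 0 ≤ W i ω := h2
      have hZpos : 0 < Z i ω := exp_pos _
      have hEpos : 0 < exp (-(c * W i ω)) := exp_pos _
      rw [Real.norm_eq_abs, abs_of_pos (mul_pos hZpos hEpos)]
      have h1' : Z i ω ≤ exp (lam * (i * K)) := by
        rwa [Real.norm_eq_abs, abs_of_pos hZpos] at h1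
      have hE1 : exp (-(c * W i ω)) ≤ 1 := by
        rw [exp_le_one_iff]
        nlinarith
      calc Z i ω * exp (-(c * W i ω)) ≤ exp (lam * (i * K)) * 1 :=
            mul_le_mul h1' hE1 hEpos.le (exp_pos _).le
        _ = exp (lam * (i * K)) := mul_one _
    have hpull := condExp_stronglyMeasurable_mul_of_bound (ℱ.le i) hFmeas (hGint i)
      (exp (lam * (i * K))) hFbd
    rw [hfact]
    refine hpull.le.trans ?_
    filter_upwards [hcondG i] with ω hω
    simp only [Pi.mul_apply]
    have hF0 : 0 ≤ Z i ω * exp (-(c * W i ω)) :=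
      mul_nonneg (exp_pos _).le (exp_pos _).le
    calc Z i ω * exp (-(c * W i ω)) * (μ[fun ω => exp (lam * D i ω)|ℱ i]) ω
        ≤ Z i ω * exp (-(c * W i ω)) * exp (c * W i ω) := mul_le_mul_of_nonneg_left hω hF0
      _ = Z i ω := by rw [mul_assoc, ← exp_add]; simp
  -- conclusion
  have hZ0 : ∫ ω, Z 0 ω ∂μ = 1 := by
    have hZ00 : Z 0 = fun _ => (1 : ℝ) := by
      funext ω
      simp [hZdef, hV]
    rw [hZ00]
    simp
  have hkey : lam * t - c * v = t ^ 2 / (2 * (v + K * t)) := by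
    rw [hc, hlam]
    have h2 : (1 : ℝ) - t / (v + K * t) * K = v / (v + K * t) := by
      field_simp
      ring
    rw [h2]
    field_simp
    ring
  have hsubset : {ω : Ω | ∃ i : ℕ, X 0 ω + t ≤ X i ω ∧
        (∑ j ∈ Finset.range i,
          (μ[fun ω' => (X (j + 1) ω' - X j ω') ^ 2 | ℱ j]) ω) ≤ v}
      ⊆ {ω | ∃ i, exp (t ^ 2 / (2 * (v + K * t))) ≤ Z i ω} := by
    rintro ω ⟨i, h1, h2⟩
    refine ⟨i, ?_⟩
    have hVeq : V i ω = ∑ j ∈ Finset.range i,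
        (μ[fun ω' => (X (j + 1) ω' - X j ω') ^ 2|ℱ j]) ω := rfl
    have h2' : V i ω ≤ v := by rw [hVeq]; exact h2
    have hZi : Z i ω = exp (lam * (X i ω - X 0 ω) - c * V i ω) := rfl
    rw [hZi, exp_le_exp, ← hkey]
    have ha : lam * t ≤ lam * (X i ω - X 0 ω) :=
      mul_le_mul_of_nonneg_left (by linarith) hlam0.le
    have hb : c * V i ω ≤ c * v := mul_le_mul_of_nonneg_left h2' hc0
    linarith
  calc μ {ω : Ω | ∃ i : ℕ, X 0 ω + t ≤ X i ω ∧
        (∑ j ∈ Finset.range i,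
          (μ[fun ω' => (X (j + 1) ω' - X j ω') ^ 2 | ℱ j]) ω) ≤ v}
      ≤ μ {ω | ∃ i, exp (t ^ 2 / (2 * (v + K * t))) ≤ Z i ω} := measure_mono hsubset
    _ ≤ ENNReal.ofReal ((∫ ω, Z 0 ω ∂μ) / exp (t ^ 2 / (2 * (v + K * t)))) :=
        supermartingale_maximal_ineq hZsup (fun i ω => (exp_pos _).le) (exp_pos _)
    _ = ENNReal.ofReal (Real.exp (-(t ^ 2) / (2 * (v + K * t)))) := by
        rw [hZ0, one_div, ← Real.exp_neg, neg_div]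
end

section
/- Let H be a (simple) graph with vertex set V(H), let u₁,…,u_k be distinct vertices of H, and let F be the subgraph of H induced on {u₁,…,u_k}. There exists a constant C > 0, depending only on H, such that the following holds. Let G be an (ε, v(H)−1)-quasirandom graph on n vertices with 0 < ε ≤ 1/C and ε·d(G)^{e(H)}·n ≥ C, and let φ : {u₁,…,u_k} → V(G) be an injective graph homomorphism from F to G. Then the number of injective graph homomorphisms from H to G whose restriction to {u₁,…,u_k} equals φ lies between (1 − Cε)·d(G)^{e(H)−e(F)}·n^{v(H)−k} and (1 + Cε)·d(G)^{e(H)−e(F)}·n^{v(H)−k}. -/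
open scoped Classical

noncomputable section

/-- The number of edges of a graph on `Fin n`. -/
def edgeCount {n : ℕ} (G : SimpleGraph (Fin n)) : ℕ :=
  (Finset.univ.filter (fun e : Finset (Fin n) =>
    e.card = 2 ∧ ∀ u ∈ e, ∀ v ∈ e, u ≠ v → G.Adj u v)).card

/-- The density of a graph on `Fin n`. -/
def dens {n : ℕ} (G : SimpleGraph (Fin n)) : ℝ :=
  (edgeCount G : ℝ) / (n.choose 2 : ℝ)

/-- `G` is `(ε,h)`-quasirandom: every set `A` of at most `h` vertices has
`(1 ± ε) d(G)^|A| n` common neighbours. -/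
def QuasiRandom {n : ℕ} (G : SimpleGraph (Fin n)) (ε : ℝ) (h : ℕ) : Prop :=
  ∀ A : Finset (Fin n), A.card ≤ h →
    (1 - ε) * dens G ^ A.card * n ≤
      ((Finset.univ.filter (fun v : Fin n => ∀ w ∈ A, G.Adj w v)).card : ℝ) ∧
    ((Finset.univ.filter (fun v : Fin n => ∀ w ∈ A, G.Adj w v)).card : ℝ) ≤
      (1 + ε) * dens G ^ A.card * n

/-- The number of edges of a graph on a finite vertex type. -/
def edgeCnt {V : Type*} [Fintype V] (H : SimpleGraph V) : ℕ :=
  (Finset.univ.filter (fun e : Finset V =>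
    e.card = 2 ∧ ∀ u ∈ e, ∀ v ∈ e, u ≠ v → H.Adj u v)).card

/-- The number of edges of `H` lying inside the set of rooted vertices `u₁,…,u_k`
(i.e. the number of edges of the induced subgraph `F`). -/
def rootedEdgeCnt {V : Type*} [Fintype V] {k : ℕ} (H : SimpleGraph V)
    (u : Fin k → V) : ℕ :=
  (Finset.univ.filter (fun e : Finset V =>
    e.card = 2 ∧ (∀ x ∈ e, x ∈ Set.range u) ∧
      ∀ a ∈ e, ∀ b ∈ e, a ≠ b → H.Adj a b)).card

lemma dens_nonneg {n : ℕ} (G : SimpleGraph (Fin n)) : 0 ≤ dens G := by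
  unfold dens; positivity

lemma dens_le_one {n : ℕ} (G : SimpleGraph (Fin n)) : dens G ≤ 1 := by
  unfold dens
  rcases Nat.eq_zero_or_pos (n.choose 2) with h | h
  · simp [h]
  · rw [div_le_one (by exact_mod_cast h)]
    have h1 : edgeCount G ≤ n.choose 2 := by
      have hsub : (Finset.univ.filter (fun e : Finset (Fin n) =>
          e.card = 2 ∧ ∀ u ∈ e, ∀ v ∈ e, u ≠ v → G.Adj u v)) ⊆
          Finset.powersetCard 2 (Finset.univ : Finset (Fin n)) := by
        intro e he
        rw [Finset.mem_powersetCard_univ]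
        exact (Finset.mem_filter.1 he).2.1
      calc edgeCount G ≤ (Finset.powersetCard 2 (Finset.univ : Finset (Fin n))).card :=
            Finset.card_le_card hsub
        _ = n.choose 2 := by rw [Finset.card_powersetCard, Finset.card_univ, Fintype.card_fin]
    exact_mod_cast h1

/-- the set of edges of `H` inside the finset `D` -/
def edgesIn {V : Type*} [Fintype V] (H : SimpleGraph V) (D : Finset V) : Finset (Finset V) :=
  Finset.univ.filter (fun e : Finset V =>
    e.card = 2 ∧ (∀ x ∈ e, x ∈ D) ∧ ∀ a ∈ e, ∀ b ∈ e, a ≠ b → H.Adj a b)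

def eIn {V : Type*} [Fintype V] (H : SimpleGraph V) (D : Finset V) : ℕ := (edgesIn H D).card

section AuxSec

variable {V : Type*} [Fintype V] [DecidableEq V]

lemma mem_edgesIn {H : SimpleGraph V} {D : Finset V} {e : Finset V} :
    e ∈ edgesIn H D ↔ e.card = 2 ∧ (∀ x ∈ e, x ∈ D) ∧ ∀ a ∈ e, ∀ b ∈ e, a ≠ b → H.Adj a b := by
  simp [edgesIn]

lemma eIn_mono (H : SimpleGraph V) {D E : Finset V} (h : D ⊆ E) : eIn H D ≤ eIn H E := by
  apply Finset.card_le_card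
  intro e he
  rw [mem_edgesIn] at he ⊢
  exact ⟨he.1, fun x hx => h (he.2.1 x hx), he.2.2⟩

lemma eIn_univ (H : SimpleGraph V) : eIn H Finset.univ = edgeCnt H := by
  unfold eIn edgeCnt
  apply Finset.card_nbij id
  · intro e he
    rw [Finset.mem_coe, mem_edgesIn] at he
    simp only [Finset.mem_coe, Finset.mem_filter, Finset.mem_univ, true_and, id]
    exact ⟨he.1, he.2.2⟩
  · exact fun a _ b _ h => h
  · intro e he
    simp only [Finset.mem_coe, Finset.mem_filter, Finset.mem_univ, true_and] at he
    refine ⟨e, ?_, rfl⟩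
    rw [Finset.mem_coe, mem_edgesIn]
    exact ⟨he.1, fun x _ => Finset.mem_univ x, he.2⟩

lemma eIn_root (H : SimpleGraph V) {k : ℕ} (u : Fin k → V) :
    eIn H (Finset.univ.image u) = rootedEdgeCnt H u := by
  unfold eIn rootedEdgeCnt
  apply Finset.card_nbij id
  · intro e he
    rw [Finset.mem_coe, mem_edgesIn] at he
    simp only [Finset.mem_coe, Finset.mem_filter, Finset.mem_univ, true_and, id]
    refine ⟨he.1, fun x hx => ?_, he.2.2⟩
    have := he.2.1 x hx
    simp only [Finset.mem_image, Finset.mem_univ, true_and] at this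
    obtain ⟨i, hi⟩ := this
    exact ⟨i, hi⟩
  · exact fun a _ b _ h => h
  · intro e he
    simp only [Finset.mem_coe, Finset.mem_filter, Finset.mem_univ, true_and] at he
    refine ⟨e, ?_, rfl⟩
    rw [Finset.mem_coe, mem_edgesIn]
    refine ⟨he.1, fun x hx => ?_, he.2.2⟩
    obtain ⟨i, hi⟩ := he.2.1 x hx
    simp only [Finset.mem_image, Finset.mem_univ, true_and]
    exact ⟨i, hi⟩

lemma eIn_insert (H : SimpleGraph V) {D : Finset V} {x : V} (hx : x ∉ D) :
    eIn H (insert x D) = eIn H D + (D.filter (fun w => H.Adj x w)).card := by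
  have hset : edgesIn H (insert x D) =
      edgesIn H D ∪ ((D.filter (fun w => H.Adj x w)).image (fun w => ({x, w} : Finset V))) := by
    ext e
    rw [Finset.mem_union, mem_edgesIn, mem_edgesIn, Finset.mem_image]
    constructor
    · rintro ⟨hcard, hsub, hadj⟩
      by_cases hxe : x ∈ e
      · right
        have h1 : (e.erase x).card = 1 := by rw [Finset.card_erase_of_mem hxe, hcard]
        obtain ⟨w, hw⟩ := Finset.card_eq_one.1 h1
        have hwe : w ∈ e := Finset.mem_of_mem_erase (hw ▸ Finset.mem_singleton_self w)
        have hwx : w ≠ x := Finset.ne_of_mem_erase (hw ▸ Finset.mem_singleton_self w)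
        have hwD : w ∈ D := by
          rcases Finset.mem_insert.1 (hsub w hwe) with h | h
          · exact absurd h hwx
          · exact h
        refine ⟨w, Finset.mem_filter.2 ⟨hwD, hadj x hxe w hwe (Ne.symm hwx)⟩, ?_⟩
        rw [← Finset.insert_erase hxe, hw]
      · left
        refine ⟨hcard, fun y hy => ?_, hadj⟩
        rcases Finset.mem_insert.1 (hsub y hy) with h | h
        · exact absurd (h ▸ hy) hxe
        · exact h
    · rintro (⟨hcard, hsub, hadj⟩ | ⟨w, hw, rfl⟩)
      · exact ⟨hcard, fun y hy => Finset.mem_insert_of_mem (hsub y hy), hadj⟩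
      · obtain ⟨hwD, hadjxw⟩ := Finset.mem_filter.1 hw
        have hwx : x ≠ w := fun h => hx (h ▸ hwD)
        refine ⟨Finset.card_pair hwx, ?_, ?_⟩
        · intro y hy
          rcases Finset.mem_insert.1 hy with h | h
          · exact h ▸ Finset.mem_insert_self x D
          · exact Finset.mem_insert_of_mem (Finset.mem_singleton.1 h ▸ hwD)
        · intro a ha b hb hab
          rcases Finset.mem_insert.1 ha with h1 | h1 <;>
            rcases Finset.mem_insert.1 hb with h2 | h2 <;>
            simp -failIfUnchanged only [Finset.mem_singleton] at *
          · exact absurd (h1.trans h2.symm) hab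
          · exact h1 ▸ h2 ▸ hadjxw
          · exact h1 ▸ h2 ▸ hadjxw.symm
          · exact absurd (h1.trans h2.symm) hab
  have hdisj : Disjoint (edgesIn H D)
      ((D.filter (fun w => H.Adj x w)).image (fun w => ({x, w} : Finset V))) := by
    rw [Finset.disjoint_left]
    rintro e he hmem
    obtain ⟨w, _, rfl⟩ := Finset.mem_image.1 hmem
    exact hx ((mem_edgesIn.1 he).2.1 x (Finset.mem_insert_self x {w}))
  have hinj : Set.InjOn (fun w => ({x, w} : Finset V)) ↑(D.filter (fun w => H.Adj x w)) := by
    intro a ha b hb hab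
    simp only [Finset.coe_filter, Set.mem_setOf_eq] at ha hb
    have hax : a ≠ x := fun h => hx (h ▸ ha.1)
    have hab' : ({x, a} : Finset V) = {x, b} := hab
    have : a ∈ ({x, b} : Finset V) :=
      hab' ▸ Finset.mem_insert_of_mem (Finset.mem_singleton_self a)
    rcases Finset.mem_insert.1 this with h | h
    · exact absurd h hax
    · exact Finset.mem_singleton.1 h
  rw [eIn, hset, Finset.card_union_of_disjoint hdisj, Finset.card_image_of_injOn hinj, eIn]

variable (H : SimpleGraph V) {k n : ℕ} (u : Fin k → V) (φ : Fin k → Fin n)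
  (G : SimpleGraph (Fin n)) (z : Fin n)

/-- partial embeddings defined on `D`, equal to `z` off `D`. -/
def cntSet (D : Finset V) : Finset (V → Fin n) :=
  Finset.univ.filter (fun ψ =>
    (∀ a ∈ D, ∀ b ∈ D, ψ a = ψ b → a = b) ∧
    (∀ a ∈ D, ∀ b ∈ D, H.Adj a b → G.Adj (ψ a) (ψ b)) ∧
    (∀ i, ψ (u i) = φ i) ∧
    ∀ a, a ∉ D → ψ a = z)

lemma mem_cntSet {D : Finset V} {ψ : V → Fin n} :
    ψ ∈ cntSet H u φ G z D ↔
    (∀ a ∈ D, ∀ b ∈ D, ψ a = ψ b → a = b) ∧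
    (∀ a ∈ D, ∀ b ∈ D, H.Adj a b → G.Adj (ψ a) (ψ b)) ∧
    (∀ i, ψ (u i) = φ i) ∧
    ∀ a, a ∉ D → ψ a = z := by
  simp [cntSet]

lemma cntSet_base (hu : Function.Injective u) (hφ : Function.Injective φ)
    (hhom : ∀ i j, H.Adj (u i) (u j) → G.Adj (φ i) (φ j)) :
    (cntSet H u φ G z (Finset.univ.image u)).card = 1 := by
  rw [Finset.card_eq_one]
  refine ⟨Function.extend u φ (fun _ => z), ?_⟩
  have hmem : ∀ a : V, a ∈ Finset.univ.image u ↔ ∃ i, u i = a := by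
    intro a; simp
  ext ψ
  rw [mem_cntSet, Finset.mem_singleton]
  constructor
  · rintro ⟨-, -, hroot, hout⟩
    funext a
    by_cases ha : ∃ i, u i = a
    · obtain ⟨i, rfl⟩ := ha
      rw [hroot i, hu.extend_apply]
    · rw [hout a (fun h => ha ((hmem a).1 h)), Function.extend_apply' _ _ _ ha]
  · rintro rfl
    refine ⟨?_, ?_, ?_, ?_⟩
    · intro a ha b hb hab
      obtain ⟨i, rfl⟩ := (hmem a).1 ha
      obtain ⟨j, rfl⟩ := (hmem b).1 hb
      rw [hu.extend_apply, hu.extend_apply] at hab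
      exact congrArg u (hφ hab)
    · intro a ha b hb hadj
      obtain ⟨i, rfl⟩ := (hmem a).1 ha
      obtain ⟨j, rfl⟩ := (hmem b).1 hb
      rw [hu.extend_apply, hu.extend_apply]
      exact hhom i j hadj
    · intro i; rw [hu.extend_apply]
    · intro a ha
      exact Function.extend_apply' _ _ _ (fun h => ha ((hmem a).2 h))

/-- the candidate extensions of a partial embedding `ψ` at a new vertex `x`: common
neighbours of the images of the already-embedded `H`-neighbours of `x`, minus used values. -/
def choices (D : Finset V) (x : V) (ψ : V → Fin n) : Finset (Fin n) :=
  (Finset.univ.filter (fun v : Fin n =>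
    ∀ w ∈ (D.filter (fun w => H.Adj x w)).image ψ, G.Adj w v)) \ (D.image ψ)

lemma cntSet_step {D : Finset V} {x : V} (hx : x ∉ D) (hR : ∀ i, u i ∈ D) :
    (cntSet H u φ G z (insert x D)).card =
      ∑ ψ ∈ cntSet H u φ G z D, (choices H G D x ψ).card := by
  have hxu : ∀ i, u i ≠ x := fun i h => hx (h ▸ hR i)
  -- the restriction map
  have hmaps : ∀ ψ' ∈ cntSet H u φ G z (insert x D),
      Function.update ψ' x z ∈ cntSet H u φ G z D := by
    intro ψ' hψ'
    rw [mem_cntSet] at hψ' ⊢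
    obtain ⟨hinj, hadj, hroot, hout⟩ := hψ'
    have hne : ∀ a ∈ D, a ≠ x := fun a ha h => hx (by rw [← h]; exact ha)
    refine ⟨?_, ?_, ?_, ?_⟩
    · intro a ha b hb hab
      rw [Function.update_of_ne (hne a ha), Function.update_of_ne (hne b hb)] at hab
      exact hinj a (Finset.mem_insert_of_mem ha) b (Finset.mem_insert_of_mem hb) hab
    · intro a ha b hb hadj'
      rw [Function.update_of_ne (hne a ha), Function.update_of_ne (hne b hb)]
      exact hadj a (Finset.mem_insert_of_mem ha) b (Finset.mem_insert_of_mem hb) hadj'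
    · intro i
      rw [Function.update_of_ne (hxu i)]
      exact hroot i
    · intro a ha
      by_cases hax : a = x
      · subst hax; rw [Function.update_self]
      · rw [Function.update_of_ne hax]
        exact hout a (by simp [hax, ha])
  rw [Finset.card_eq_sum_card_fiberwise hmaps]
  apply Finset.sum_congr rfl
  intro ψ hψ
  rw [mem_cntSet] at hψ
  obtain ⟨hinj, hadj, hroot, hout⟩ := hψ
  apply Finset.card_bij (fun ψ' _ => ψ' x)
  · -- maps into choices
    intro ψ' hψ'
    rw [Finset.mem_filter] at hψ'
    obtain ⟨hψ'mem, hup⟩ := hψ'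
    rw [mem_cntSet] at hψ'mem
    obtain ⟨hinj', hadj', hroot', hout'⟩ := hψ'mem
    have hψeq : ∀ a ∈ D, ψ a = ψ' a := by
      intro a ha
      have hax : a ≠ x := fun h => hx (by rw [← h]; exact ha)
      rw [← hup, Function.update_of_ne hax]
    rw [choices, Finset.mem_sdiff, Finset.mem_filter]
    refine ⟨⟨Finset.mem_univ _, ?_⟩, ?_⟩
    · intro w hw
      rw [Finset.mem_image] at hw
      obtain ⟨b, hb, rfl⟩ := hw
      rw [Finset.mem_filter] at hb
      rw [hψeq b hb.1]
      exact hadj' b (Finset.mem_insert_of_mem hb.1) x (Finset.mem_insert_self x D) hb.2.symm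
    · intro hmem
      rw [Finset.mem_image] at hmem
      obtain ⟨b, hb, hbx⟩ := hmem
      rw [hψeq b hb] at hbx
      exact hx ((hinj' b (Finset.mem_insert_of_mem hb) x (Finset.mem_insert_self x D) hbx) ▸ hb)
  · -- injective
    intro ψ₁ hψ₁ ψ₂ hψ₂ hval
    rw [Finset.mem_filter] at hψ₁ hψ₂
    funext a
    by_cases hax : a = x
    · subst hax; exact hval
    · have h1 : ψ₁ a = ψ a := by rw [← hψ₁.2, Function.update_of_ne hax]
      have h2 : ψ₂ a = ψ a := by rw [← hψ₂.2, Function.update_of_ne hax]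
      rw [h1, h2]
  · -- surjective
    intro v hv
    rw [choices, Finset.mem_sdiff, Finset.mem_filter] at hv
    obtain ⟨⟨-, hcn⟩, hnotused⟩ := hv
    refine ⟨Function.update ψ x v, ?_, Function.update_self x v ψ⟩
    rw [Finset.mem_filter]
    constructor
    · rw [mem_cntSet]
      have hupd : ∀ a ∈ D, Function.update ψ x v a = ψ a :=
        fun a ha => Function.update_of_ne (fun h => hx (by rw [← h]; exact ha)) _ _
      refine ⟨?_, ?_, ?_, ?_⟩
      · intro a ha b hb hab
        rcases Finset.mem_insert.1 ha with rfl | ha' <;>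
          rcases Finset.mem_insert.1 hb with rfl | hb'
        · rfl
        · rw [Function.update_self, hupd b hb'] at hab
          exact (hnotused (by rw [hab]; exact Finset.mem_image_of_mem ψ hb')).elim
        · rw [Function.update_self, hupd a ha'] at hab
          exact (hnotused (by rw [← hab]; exact Finset.mem_image_of_mem ψ ha')).elim
        · rw [hupd a ha', hupd b hb'] at hab
          exact hinj a ha' b hb' hab
      · intro a ha b hb hadj'
        rcases Finset.mem_insert.1 ha with rfl | ha' <;>
          rcases Finset.mem_insert.1 hb with rfl | hb'
        · exact absurd hadj' (H.irrefl)
        · rw [Function.update_self, hupd b hb']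
          have : ψ b ∈ (D.filter (fun w => H.Adj a w)).image ψ :=
            Finset.mem_image_of_mem ψ (Finset.mem_filter.2 ⟨hb', hadj'⟩)
          exact (hcn _ this).symm
        · rw [Function.update_self, hupd a ha']
          have : ψ a ∈ (D.filter (fun w => H.Adj b w)).image ψ :=
            Finset.mem_image_of_mem ψ (Finset.mem_filter.2 ⟨ha', hadj'.symm⟩)
          exact hcn _ this
        · rw [hupd a ha', hupd b hb']
          exact hadj a ha' b hb' hadj'
      · intro i
        rw [Function.update_of_ne (hxu i)]
        exact hroot i
      · intro a ha
        have hax : a ≠ x := fun h => ha (h ▸ Finset.mem_insert_self x D)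
        rw [Function.update_of_ne hax]
        exact hout a (fun h => ha (Finset.mem_insert_of_mem h))
    · funext a
      by_cases hax : a = x
      · subst hax
        rw [Function.update_self]
        exact (hout _ hx).symm
      · rw [Function.update_of_ne hax, Function.update_of_ne hax]

lemma pow_one_add_le {ε : ℝ} (hε : 0 ≤ ε) (hε1 : ε ≤ 1) (s : ℕ) :
    (1 + ε) ^ s ≤ 1 + (2 ^ s - 1) * ε := by
  induction s with
  | zero => norm_num
  | succ t ih =>
    have h2 : (1:ℝ) ≤ 2 ^ t := one_le_pow₀ (by norm_num)
    calc (1 + ε) ^ (t + 1) = (1 + ε) ^ t * (1 + ε) := pow_succ _ _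
      _ ≤ (1 + (2 ^ t - 1) * ε) * (1 + ε) :=
          mul_le_mul_of_nonneg_right ih (by linarith)
      _ ≤ 1 + (2 ^ (t + 1) - 1) * ε := by
          rw [pow_succ]
          nlinarith [mul_nonneg (mul_nonneg (sub_nonneg.2 h2) hε) (sub_nonneg.2 hε1)]

lemma cnt_bounds
    (hu : Function.Injective u) (hφ : Function.Injective φ)
    (hhom : ∀ i j, H.Adj (u i) (u j) → G.Adj (φ i) (φ j))
    {ε : ℝ} (hε : 0 < ε) (hε2 : ε ≤ 1 / 2)
    (hQR : QuasiRandom G ε (Fintype.card V - 1))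
    (hbig : (Fintype.card V : ℝ) ≤ ε * dens G ^ edgeCnt H * n) :
    ∀ s : Finset V, Disjoint s (Finset.univ.image u) →
      (1 - 2*ε) ^ s.card *
          dens G ^ (eIn H (Finset.univ.image u ∪ s) - eIn H (Finset.univ.image u)) *
          (n:ℝ) ^ s.card
        ≤ ((cntSet H u φ G z (Finset.univ.image u ∪ s)).card : ℝ) ∧
      ((cntSet H u φ G z (Finset.univ.image u ∪ s)).card : ℝ)
        ≤ (1 + ε) ^ s.card *
            dens G ^ (eIn H (Finset.univ.image u ∪ s) - eIn H (Finset.univ.image u)) *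
            (n:ℝ) ^ s.card := by
  have hd0 : 0 ≤ dens G := dens_nonneg G
  have hd1 : dens G ≤ 1 := dens_le_one G
  intro s
  induction s using Finset.induction_on with
  | empty =>
    intro _
    rw [Finset.union_empty, Finset.card_empty, Nat.sub_self, cntSet_base H u φ G z hu hφ hhom]
    norm_num
  | @insert x s hxs ih =>
    intro hdisj
    have hxR : x ∉ Finset.univ.image u := by
      have := Finset.disjoint_left.1 hdisj (Finset.mem_insert_self x s)
      exact this
    have hdisj' : Disjoint s (Finset.univ.image u) :=
      Finset.disjoint_of_subset_left (Finset.subset_insert x s) hdisj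
    obtain ⟨ihlo, ihhi⟩ := ih hdisj'
    set R := Finset.univ.image u with hR
    set D := R ∪ s with hD
    have hxD : x ∉ D := by
      rw [hD, Finset.mem_union]
      rintro (h | h)
      · exact hxR h
      · exact hxs h
    have hRD : ∀ i, u i ∈ D := fun i =>
      Finset.mem_union_left s (Finset.mem_image_of_mem u (Finset.mem_univ i))
    have hUnion : R ∪ insert x s = insert x D := by
      rw [hD, Finset.union_insert]
    set deg := (D.filter (fun w => H.Adj x w)).card with hdeg
    -- basic cardinalities
    have hDcard : D.card + 1 ≤ Fintype.card V := by
      have h1 : (insert x D).card = D.card + 1 := Finset.card_insert_of_notMem hxD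
      have h2 : (insert x D).card ≤ Fintype.card V := by
        rw [← Finset.card_univ]
        exact Finset.card_le_card (Finset.subset_univ _)
      omega
    have hdegD : deg ≤ D.card := Finset.card_filter_le _ _
    -- deg is at most the total number of edges
    have hinsED : eIn H (insert x D) = eIn H D + deg := eIn_insert H hxD
    have hdegE : deg ≤ edgeCnt H := by
      have h1 : eIn H (insert x D) ≤ edgeCnt H := by
        rw [← eIn_univ H]
        exact eIn_mono H (Finset.subset_univ _)
      omega
    have hER : eIn H R ≤ eIn H D := eIn_mono H Finset.subset_union_left
    -- pointwise bounds on the number of choices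
    have hkey : ∀ ψ ∈ cntSet H u φ G z D,
        (1 - 2*ε) * dens G ^ deg * n ≤ ((choices H G D x ψ).card : ℝ) ∧
        ((choices H G D x ψ).card : ℝ) ≤ (1 + ε) * dens G ^ deg * n := by
      intro ψ hψ
      obtain ⟨hinj, -, -, -⟩ := (mem_cntSet H u φ G z).1 hψ
      set A := (D.filter (fun w => H.Adj x w)).image ψ with hA
      have hAcard : A.card = deg := by
        rw [hA]
        apply Finset.card_image_of_injOn
        intro a ha b hb hab
        exact hinj a (Finset.mem_of_mem_filter a ha) b (Finset.mem_of_mem_filter b hb) hab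
      have hAle : A.card ≤ Fintype.card V - 1 := by
        rw [hAcard]; omega
      obtain ⟨hqlo, hqhi⟩ := hQR A hAle
      rw [hAcard] at hqlo hqhi
      have hchsub : (choices H G D x ψ).card ≤
          (Finset.univ.filter (fun v : Fin n => ∀ w ∈ A, G.Adj w v)).card :=
        Finset.card_le_card (Finset.sdiff_subset)
      have hchlow : (Finset.univ.filter (fun v : Fin n => ∀ w ∈ A, G.Adj w v)).card ≤
          (choices H G D x ψ).card + Fintype.card V := by
        calc (Finset.univ.filter (fun v : Fin n => ∀ w ∈ A, G.Adj w v)).card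
            ≤ (choices H G D x ψ).card + (D.image ψ).card :=
              Finset.card_le_card_sdiff_add_card
          _ ≤ (choices H G D x ψ).card + Fintype.card V := by
              have : (D.image ψ).card ≤ Fintype.card V := by
                calc (D.image ψ).card ≤ D.card := Finset.card_image_le
                  _ ≤ Fintype.card V := by omega
              omega
      -- ε * d^edgeCnt * n ≤ ε * d^deg * n
      have hmono : ε * dens G ^ edgeCnt H * n ≤ ε * dens G ^ deg * n := by
        have h := pow_le_pow_of_le_one hd0 hd1 hdegE
        have hn0 : (0:ℝ) ≤ n := Nat.cast_nonneg n
        exact mul_le_mul_of_nonneg_right (mul_le_mul_of_nonneg_left h hε.le) hn0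
      have hm : (Fintype.card V : ℝ) ≤ ε * dens G ^ deg * n := le_trans hbig hmono
      constructor
      · have hcast : ((Finset.univ.filter (fun v : Fin n => ∀ w ∈ A, G.Adj w v)).card : ℝ) ≤
            ((choices H G D x ψ).card : ℝ) + Fintype.card V := by exact_mod_cast hchlow
        nlinarith
      · calc ((choices H G D x ψ).card : ℝ)
            ≤ ((Finset.univ.filter (fun v : Fin n => ∀ w ∈ A, G.Adj w v)).card : ℝ) := by
              exact_mod_cast hchsub
          _ ≤ (1 + ε) * dens G ^ deg * n := hqhi
    -- sum up
    have hstep : ((cntSet H u φ G z (insert x D)).card : ℝ) =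
        ∑ ψ ∈ cntSet H u φ G z D, ((choices H G D x ψ).card : ℝ) := by
      rw [cntSet_step H u φ G z hxD hRD]
      push_cast
      rfl
    set S := ((cntSet H u φ G z D).card : ℝ) with hS
    have hS0 : 0 ≤ S := Nat.cast_nonneg _
    have hsumlo : S * ((1 - 2*ε) * dens G ^ deg * n) ≤
        ((cntSet H u φ G z (insert x D)).card : ℝ) := by
      rw [hstep]
      have := Finset.card_nsmul_le_sum (cntSet H u φ G z D)
        (fun ψ => ((choices H G D x ψ).card : ℝ)) ((1 - 2*ε) * dens G ^ deg * n)
        (fun ψ hψ => (hkey ψ hψ).1)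
      rwa [nsmul_eq_mul] at this
    have hsumhi : ((cntSet H u φ G z (insert x D)).card : ℝ) ≤
        S * ((1 + ε) * dens G ^ deg * n) := by
      rw [hstep]
      have := Finset.sum_le_card_nsmul (cntSet H u φ G z D)
        (fun ψ => ((choices H G D x ψ).card : ℝ)) ((1 + ε) * dens G ^ deg * n)
        (fun ψ hψ => (hkey ψ hψ).2)
      rwa [nsmul_eq_mul] at this
    -- rewrite exponents
    have hcardins : (insert x s).card = s.card + 1 := Finset.card_insert_of_notMem hxs
    have hexp : eIn H (R ∪ insert x s) - eIn H R = (eIn H D - eIn H R) + deg := by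
      rw [hUnion, hinsED]; omega
    rw [hUnion] at *
    rw [hcardins, hexp]
    have hlo0 : 0 ≤ (1 - 2*ε) * dens G ^ deg * n := by
      have : 0 ≤ 1 - 2*ε := by linarith
      positivity
    have hhi0 : 0 ≤ (1 + ε) * dens G ^ deg * n := by positivity
    constructor
    · calc (1 - 2*ε) ^ (s.card + 1) * dens G ^ (eIn H D - eIn H R + deg) * (n:ℝ) ^ (s.card + 1)
          = ((1 - 2*ε) ^ s.card * dens G ^ (eIn H D - eIn H R) * (n:ℝ) ^ s.card) *
              ((1 - 2*ε) * dens G ^ deg * n) := by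
            rw [pow_succ, pow_succ, pow_add]; ring
        _ ≤ S * ((1 - 2*ε) * dens G ^ deg * n) :=
            mul_le_mul_of_nonneg_right ihlo hlo0
        _ ≤ ((cntSet H u φ G z (insert x D)).card : ℝ) := hsumlo
    · calc ((cntSet H u φ G z (insert x D)).card : ℝ)
          ≤ S * ((1 + ε) * dens G ^ deg * n) := hsumhi
        _ ≤ ((1 + ε) ^ s.card * dens G ^ (eIn H D - eIn H R) * (n:ℝ) ^ s.card) *
              ((1 + ε) * dens G ^ deg * n) :=
            mul_le_mul_of_nonneg_right ihhi hhi0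
        _ = (1 + ε) ^ (s.card + 1) * dens G ^ (eIn H D - eIn H R + deg) * (n:ℝ) ^ (s.card + 1) := by
            rw [pow_succ, pow_succ, pow_add]; ring

end AuxSec

/-- Rooted extension counting in quasirandom graphs: the number of embeddings of `H`
into a quasirandom graph `G` extending a given embedding `φ` of the induced subgraph
`F = H[{u₁,…,u_k}]` is `(1 ± Cε) d(G)^(e(H)-e(F)) n^(v(H)-k)`. -/
theorem rooted_extension_count
    {V : Type*} [Fintype V] [DecidableEq V] (H : SimpleGraph V)
    (k : ℕ) (u : Fin k → V) (hu : Function.Injective u) :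
    ∃ C : ℝ, 0 < C ∧
    ∀ n : ℕ, ∀ ε : ℝ, 0 < ε → ε ≤ 1 / C →
    ∀ G : SimpleGraph (Fin n), QuasiRandom G ε (Fintype.card V - 1) →
    C ≤ ε * dens G ^ edgeCnt H * n →
    ∀ φ : Fin k → Fin n, Function.Injective φ →
    (∀ i j : Fin k, H.Adj (u i) (u j) → G.Adj (φ i) (φ j)) →
    (1 - C * ε) * dens G ^ (edgeCnt H - rootedEdgeCnt H u) *
        (n : ℝ) ^ (Fintype.card V - k) ≤
      ((Finset.univ.filter (fun ψ : V → Fin n => Function.Injective ψ ∧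
          (∀ a b : V, H.Adj a b → G.Adj (ψ a) (ψ b)) ∧
          ∀ i : Fin k, ψ (u i) = φ i)).card : ℝ) ∧
    ((Finset.univ.filter (fun ψ : V → Fin n => Function.Injective ψ ∧
        (∀ a b : V, H.Adj a b → G.Adj (ψ a) (ψ b)) ∧
        ∀ i : Fin k, ψ (u i) = φ i)).card : ℝ) ≤
      (1 + C * ε) * dens G ^ (edgeCnt H - rootedEdgeCnt H u) *
        (n : ℝ) ^ (Fintype.card V - k) := by
  set m := Fintype.card V with hm
  have h2m : (1:ℝ) ≤ 2 ^ m := one_le_pow₀ (by norm_num)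
  have hm0 : (0:ℝ) ≤ m := Nat.cast_nonneg m
  refine ⟨(2:ℝ) ^ m + 2 * m + 2, by positivity, ?_⟩
  intro n ε hε hεC G hQR hbig φ hφ hhom
  set C : ℝ := (2:ℝ) ^ m + 2 * m + 2 with hC
  have hC0 : 0 < C := by positivity
  have hC2 : 2 ≤ C := by linarith
  have hε2 : ε ≤ 1 / 2 := le_trans hεC (one_div_le_one_div_of_le two_pos hC2)
  have hε1 : ε ≤ 1 := by linarith
  -- n is positive
  rcases Nat.eq_zero_or_pos n with rfl | hn
  · exfalso
    rw [Nat.cast_zero, mul_zero] at hbig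
    linarith
  set z : Fin n := ⟨0, hn⟩ with hz
  have hd0 : 0 ≤ dens G := dens_nonneg G
  have hbig' : (m : ℝ) ≤ ε * dens G ^ edgeCnt H * n := by
    have : (m:ℝ) ≤ C := by rw [hC]; linarith
    linarith
  have key := cnt_bounds H u φ G z hu hφ hhom hε hε2 hQR hbig'
    (Finset.univ \ Finset.univ.image u) Finset.sdiff_disjoint
  have hRu : Finset.univ.image u ∪ (Finset.univ \ Finset.univ.image u) = Finset.univ :=
    Finset.union_sdiff_of_subset (Finset.subset_univ _)
  have hRcard : (Finset.univ.image u).card = k := by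
    rw [Finset.card_image_of_injective _ hu, Finset.card_univ, Fintype.card_fin]
  have hscard : (Finset.univ \ Finset.univ.image u).card = m - k := by
    rw [Finset.card_sdiff_of_subset (Finset.subset_univ _), Finset.card_univ, hRcard]
  rw [hRu, hscard, eIn_univ, eIn_root] at key
  -- identify the two counting sets
  have htarget : ((Finset.univ.filter (fun ψ : V → Fin n => Function.Injective ψ ∧
      (∀ a b : V, H.Adj a b → G.Adj (ψ a) (ψ b)) ∧
      ∀ i : Fin k, ψ (u i) = φ i)).card : ℝ) =
      ((cntSet H u φ G z Finset.univ).card : ℝ) := by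
    congr 1
    apply Finset.card_nbij id
    · intro ψ hψ
      rw [Finset.mem_coe, Finset.mem_filter] at hψ
      obtain ⟨-, hinj, hadj, hroot⟩ := hψ
      simp only [id_eq, Finset.mem_coe, mem_cntSet]
      exact ⟨fun a _ b _ hab => hinj hab, fun a _ b _ h => hadj a b h, hroot,
        fun a ha => absurd (Finset.mem_univ a) ha⟩
    · exact fun a _ b _ h => h
    · intro ψ hψ
      simp only [Finset.mem_coe, mem_cntSet] at hψ
      obtain ⟨hinj, hadj, hroot, -⟩ := hψ
      refine ⟨ψ, ?_, rfl⟩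
      simp only [Finset.mem_coe, Finset.mem_filter]
      exact ⟨Finset.mem_univ ψ,
        fun a b hab => hinj a (Finset.mem_univ a) b (Finset.mem_univ b) hab,
        fun a b h => hadj a (Finset.mem_univ a) b (Finset.mem_univ b) h, hroot⟩
  rw [htarget]
  obtain ⟨keylo, keyhi⟩ := key
  have hdE0 : (0:ℝ) ≤ dens G ^ (edgeCnt H - rootedEdgeCnt H u) := by positivity
  have hnE0 : (0:ℝ) ≤ (n:ℝ) ^ (m - k) := by positivity
  have hsm : ((m - k : ℕ) : ℝ) ≤ (m : ℝ) := by
    exact_mod_cast Nat.sub_le m k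
  constructor
  · -- lower bound
    have h1 : 1 - C * ε ≤ (1 - 2*ε) ^ (m - k) := by
      have hb := one_add_mul_le_pow (a := -(2*ε)) (by linarith) (m - k)
      have heq : (1 + -(2*ε)) = 1 - 2*ε := by ring
      rw [heq] at hb
      have h2s : 2 * ((m - k : ℕ) : ℝ) ≤ C := by rw [hC]; linarith
      have : 1 - C * ε ≤ 1 + ((m - k : ℕ) : ℝ) * (-(2*ε)) := by nlinarith
      linarith
    calc (1 - C * ε) * dens G ^ (edgeCnt H - rootedEdgeCnt H u) * (n:ℝ) ^ (m - k)
        ≤ (1 - 2*ε) ^ (m - k) * dens G ^ (edgeCnt H - rootedEdgeCnt H u) * (n:ℝ) ^ (m - k) :=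
          mul_le_mul_of_nonneg_right (mul_le_mul_of_nonneg_right h1 hdE0) hnE0
      _ ≤ _ := keylo
  · -- upper bound
    have h2 : (1 + ε) ^ (m - k) ≤ 1 + C * ε := by
      have hb := pow_one_add_le hε.le hε1 (m - k)
      have h2s : (2:ℝ) ^ (m - k) ≤ 2 ^ m := pow_le_pow_right₀ (by norm_num) (Nat.sub_le m k)
      have : ((2:ℝ) ^ (m - k) - 1) * ε ≤ C * ε := by
        apply mul_le_mul_of_nonneg_right _ hε.le
        rw [hC]; linarith
      linarith
    calc ((cntSet H u φ G z Finset.univ).card : ℝ)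
        ≤ (1 + ε) ^ (m - k) * dens G ^ (edgeCnt H - rootedEdgeCnt H u) * (n:ℝ) ^ (m - k) := keyhi
      _ ≤ (1 + C * ε) * dens G ^ (edgeCnt H - rootedEdgeCnt H u) * (n:ℝ) ^ (m - k) :=
          mul_le_mul_of_nonneg_right (mul_le_mul_of_nonneg_right h2 hdE0) hnE0
end
end
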